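/- arXiv:1305.6208 — 4 statements merged into one kernel-verified Lean document; each statement's English description precedes it below -/
import Mathlib

section
/- Let q ∈ (0,1), k ∈ (0,1), and λ > 1 be fixed. Then the equation H_q( x(1−k)/(1−kx) ) = λ·H_q(x) (in the unknown x with 0 < x < 1/k, where H_q(z) = (1−q)z^q + q z^{q−1}) has a unique solution x = X_λ(k) in the interval (1, 1/k); moreover it has a solution in the interval (0,1) if and only if λ < (1−k)^{q−1}, and in that case this solution is also unique. -/
open MeasureTheory Filter Set

noncomputable section

/-- `H_q(z) = (1-q) z^q + q z^(q-1)`. -/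
def funH (q z : ℝ) : ℝ := (1 - q) * z ^ q + q * z ^ (q - 1)

/-- `ω_q(z) = (H_q⁻¹(z))^q`, with `H_q⁻¹` the inverse of `H_q : [1,∞) → [1,∞)`. -/
def funOmega (q z : ℝ) : ℝ := (Function.invFunOn (funH q) (Set.Ici 1) z) ^ q

def funG (q k x : ℝ) : ℝ :=
  (1-k) ^ (q-1) * ((1-k*x) ^ (-q) * ((q+(1-q-k)*x)/(q+(1-q)*x)))

lemma funH_eq {q x : ℝ} (hx : 0 < x) :
    (1 - q) * x ^ q + q * x ^ (q - 1) = x ^ (q-1) * (q + (1-q)*x) := by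
  have hxq : x ^ q = x ^ (q-1) * x := by
    rw [← Real.rpow_add_one hx.ne' (q-1)]; norm_num
  rw [hxq]; ring

lemma funH_comp {q k x : ℝ} (hq0 : 0 < q) (hq1 : q < 1) (hk0 : 0 < k) (hk1 : k < 1)
    (hx : 0 < x) (hkx : k * x < 1) :
    funH q (x * (1-k) / (1-k*x)) = funG q k x * funH q x := by
  have h1 : (0:ℝ) < 1 - k*x := by linarith
  have h2 : (0:ℝ) < 1 - k := by linarith
  have hphi : 0 < x * (1-k) / (1-k*x) := by positivity
  have hD2 : 0 < q + (1-q)*x := by nlinarith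
  unfold funH funG
  rw [funH_eq hphi, funH_eq hx]
  have e1 : (x*(1-k)/(1-k*x)) ^ (q-1)
      = x ^ (q-1) * (1-k) ^ (q-1) / (1-k*x) ^ (q-1) := by
    rw [Real.div_rpow (by positivity) h1.le, Real.mul_rpow hx.le h2.le]
  have e2 : q + (1-q) * (x*(1-k)/(1-k*x)) = (q + (1-q-k)*x)/(1-k*x) := by
    rw [eq_div_iff h1.ne', add_mul, mul_assoc (1-q), div_mul_cancel₀ _ h1.ne']; ring
  rw [e1, e2]
  have e3 : (1-k*x) ^ (q-1) = (1-k*x) ^ q / (1-k*x) := by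
    rw [Real.rpow_sub h1, Real.rpow_one]
  have e4 : (1-k*x) ^ (-q) = ((1-k*x) ^ q)⁻¹ := Real.rpow_neg h1.le q
  rw [e3, e4]
  have hB : (0:ℝ) < (1-k*x) ^ q := Real.rpow_pos_of_pos h1 q
  generalize q + (1-q)*x = D at hD2 ⊢
  field_simp

lemma hasDerivAt_funG {q k : ℝ} (hq0 : 0 < q) (hq1 : q < 1) (hk0 : 0 < k) (hk1 : k < 1)
    {x : ℝ} (hx : 0 ≤ x) (hkx : k * x < 1) :
    HasDerivAt (funG q k)
      ((1-k) ^ (q-1) * (q*k) * (1-k*x) ^ (-q-1) *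
        ((x-1)*(1-q)*((1-q-k)*x+(1+q))) / (q+(1-q)*x)^2) x := by
  have h1 : (0:ℝ) < 1 - k*x := by linarith
  have hD2 : 0 < q + (1-q)*x := by nlinarith
  have d1 : HasDerivAt (fun x : ℝ => 1 - k*x) (-k) x := by
    simpa using ((hasDerivAt_id x).const_mul k).const_sub 1
  have d2 : HasDerivAt (fun x : ℝ => (1-k*x) ^ (-q))
      ((-k) * (-q) * (1-k*x) ^ (-q-1)) x := by
    simpa using d1.rpow_const (p := -q) (Or.inl h1.ne')
  have d3 : HasDerivAt (fun x : ℝ => q+(1-q-k)*x) (1-q-k) x := by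
    simpa using ((hasDerivAt_id x).const_mul (1-q-k)).const_add q
  have d4 : HasDerivAt (fun x : ℝ => q+(1-q)*x) (1-q) x := by
    simpa using ((hasDerivAt_id x).const_mul (1-q)).const_add q
  have d5 := d3.div d4 hD2.ne'
  have d6 := (d2.mul d5).const_mul ((1-k) ^ (q-1))
  have e : (1-k) ^ (q-1) * (q*k) * (1-k*x) ^ (-q-1) *
        ((x-1)*(1-q)*((1-q-k)*x+(1+q))) / (q+(1-q)*x)^2
      = (1-k) ^ (q-1) * ((-k) * (-q) * (1-k*x) ^ (-q-1) * ((q+(1-q-k)*x)/(q+(1-q)*x)) +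
          (1-k*x) ^ (-q) *
            (((1-q-k) * (q+(1-q)*x) - (q+(1-q-k)*x) * (1-q)) / (q+(1-q)*x)^2)) := by
    have e4 : (1-k*x) ^ (-q) = (1-k*x) ^ (-q-1) * (1-k*x) := by
      rw [← Real.rpow_add_one h1.ne' (-q-1)]; norm_num
    rw [e4]
    field_simp
    ring
  rw [e]
  exact d6

lemma funG_contAt {q k : ℝ} (hq0 : 0 < q) (hq1 : q < 1) (hk0 : 0 < k) (hk1 : k < 1)
    {x : ℝ} (hx : 0 ≤ x) (hkx : k * x < 1) : ContinuousAt (funG q k) x :=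
  (hasDerivAt_funG hq0 hq1 hk0 hk1 hx hkx).continuousAt

lemma funG_anti {q k : ℝ} (hq0 : 0 < q) (hq1 : q < 1) (hk0 : 0 < k) (hk1 : k < 1) :
    StrictAntiOn (funG q k) (Icc 0 1) := by
  apply strictAntiOn_of_deriv_neg (convex_Icc 0 1)
  · intro x hx
    exact (funG_contAt hq0 hq1 hk0 hk1 hx.1 (by nlinarith [hx.1, hx.2])).continuousWithinAt
  · intro x hx
    rw [interior_Icc] at hx
    obtain ⟨hx0, hx1⟩ := hx
    have hkx : k * x < 1 := by nlinarith
    rw [(hasDerivAt_funG hq0 hq1 hk0 hk1 hx0.le hkx).deriv]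
    have hc : (0:ℝ) < (1-k) ^ (q-1) := Real.rpow_pos_of_pos (by linarith) _
    have hb : (0:ℝ) < (1-k*x) ^ (-q-1) := Real.rpow_pos_of_pos (by linarith) _
    have hfac : (0:ℝ) < (1-q-k)*x+(1+q) := by nlinarith
    have hD2' : (0:ℝ) < q+(1-q)*x := by nlinarith
    have hD2 : (0:ℝ) < (q+(1-q)*x)^2 := by positivity
    apply div_neg_of_neg_of_pos _ hD2
    have : (x-1)*(1-q)*((1-q-k)*x+(1+q)) < 0 := by
      apply mul_neg_of_neg_of_pos _ hfac
      apply mul_neg_of_neg_of_pos (by linarith) (by linarith)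
    nlinarith [mul_pos (mul_pos hc (mul_pos hq0 hk0)) hb]

lemma funG_mono {q k t : ℝ} (hq0 : 0 < q) (hq1 : q < 1) (hk0 : 0 < k) (hk1 : k < 1)
    (ht : k * t < 1) : StrictMonoOn (funG q k) (Icc 1 t) := by
  apply strictMonoOn_of_deriv_pos (convex_Icc 1 t)
  · intro x hx
    have hkx : k * x < 1 := by nlinarith [hx.1, hx.2]
    exact (funG_contAt hq0 hq1 hk0 hk1 (by linarith [hx.1]) hkx).continuousWithinAt
  · intro x hx
    rw [interior_Icc] at hx
    obtain ⟨hx1, hxt⟩ := hx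
    have hx0 : (0:ℝ) ≤ x := by linarith
    have hkx : k * x < 1 := by nlinarith
    rw [(hasDerivAt_funG hq0 hq1 hk0 hk1 hx0 hkx).deriv]
    have hc : (0:ℝ) < (1-k) ^ (q-1) := Real.rpow_pos_of_pos (by linarith) _
    have hb : (0:ℝ) < (1-k*x) ^ (-q-1) := Real.rpow_pos_of_pos (by linarith) _
    have hfac : (0:ℝ) < (1-q-k)*x+(1+q) := by nlinarith
    have hD2' : (0:ℝ) < q+(1-q)*x := by nlinarith
    have hD2 : (0:ℝ) < (q+(1-q)*x)^2 := by positivity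
    apply div_pos _ hD2
    have h5 : (0:ℝ) < (x-1)*(1-q)*((1-q-k)*x+(1+q)) := by
      apply mul_pos (mul_pos (by linarith) (by linarith)) hfac
    positivity

lemma funG_one {q k : ℝ} (hq0 : 0 < q) (hq1 : q < 1) (hk0 : 0 < k) (hk1 : k < 1) :
    funG q k 1 = 1 := by
  unfold funG
  have h2 : (0:ℝ) < 1 - k := by linarith
  have e1 : q+(1-q-k)*1 = 1-k := by ring
  have e2 : q+(1-q)*1 = 1 := by ring
  rw [show k*(1:ℝ) = k by ring, e1, e2, div_one]
  rw [← Real.rpow_add_one h2.ne' (-q), ← Real.rpow_add h2]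
  norm_num

lemma funG_zero (q k : ℝ) (hq0 : 0 < q) : funG q k 0 = (1-k) ^ (q-1) := by
  unfold funG
  norm_num [Real.one_rpow, div_self hq0.ne']

lemma funG_top {q k : ℝ} (hq0 : 0 < q) (hq1 : q < 1) (hk0 : 0 < k) (hk1 : k < 1) :
    Tendsto (funG q k) (nhdsWithin (1/k) (Iio (1/k))) atTop := by
  have hA : Tendsto (fun x : ℝ => 1 - k*x) (nhdsWithin (1/k) (Iio (1/k)))
      (nhdsWithin 0 (Ioi 0)) := by
    apply tendsto_nhdsWithin_of_tendsto_nhds_of_eventually_within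
    · have : Tendsto (fun x : ℝ => 1 - k*x) (nhds (1/k)) (nhds (1 - k*(1/k))) :=
        (continuous_const.sub (continuous_const.mul continuous_id)).tendsto _
      rw [mul_one_div, div_self hk0.ne'] at this
      simpa using this.mono_left nhdsWithin_le_nhds
    · filter_upwards [self_mem_nhdsWithin] with x hx
      have : k * x < 1 := by
        have := (lt_div_iff₀ hk0).mp hx  -- x < 1/k → x * k < 1
        linarith [this]
      simpa using by linarith
  have hB : Tendsto (fun t : ℝ => t ^ (-q)) (nhdsWithin 0 (Ioi 0)) atTop := by
    have hq' : Tendsto (fun t : ℝ => t ^ q) (nhdsWithin 0 (Ioi 0)) (nhdsWithin 0 (Ioi 0)) := by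
      apply tendsto_nhdsWithin_of_tendsto_nhds_of_eventually_within
      · have := (Real.continuousAt_rpow_const 0 q (Or.inr hq0.le)).tendsto
        rw [Real.zero_rpow hq0.ne'] at this
        exact this.mono_left nhdsWithin_le_nhds
      · filter_upwards [self_mem_nhdsWithin] with t ht
        exact Real.rpow_pos_of_pos ht q
    have := tendsto_inv_nhdsGT_zero.comp hq'
    apply this.congr'
    filter_upwards [self_mem_nhdsWithin] with t ht
    simp [Function.comp, Real.rpow_neg (le_of_lt ht)]
  have hC := hB.comp hA
  have hD2k : (0:ℝ) < q + (1-q)*(1/k) := by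
    have h1q : (0:ℝ) < 1-q := by linarith
    positivity
  have hD1k : (0:ℝ) < q + (1-q-k)*(1/k) := by
    have e : q + (1-q-k)*(1/k) = ((1-q)*(1-k))/k := by field_simp; ring
    rw [e]
    have h1q : (0:ℝ) < 1-q := by linarith
    have h1k : (0:ℝ) < 1-k := by linarith
    positivity
  have hD : Tendsto (fun x : ℝ => (q+(1-q-k)*x)/(q+(1-q)*x))
      (nhdsWithin (1/k) (Iio (1/k))) (nhds ((q+(1-q-k)*(1/k))/(q+(1-q)*(1/k)))) := by
    apply Tendsto.mono_left _ nhdsWithin_le_nhds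
    exact ((continuous_const.add (continuous_const.mul continuous_id)).tendsto _).div
      ((continuous_const.add (continuous_const.mul continuous_id)).tendsto _) hD2k.ne'
  have hmul := Filter.Tendsto.atTop_mul_pos (div_pos hD1k hD2k) hC hD
  have hc : (0:ℝ) < (1-k) ^ (q-1) := Real.rpow_pos_of_pos (by linarith) _
  have := hmul.const_mul_atTop hc
  exact this.congr (fun x => by unfold funG; simp [Function.comp]; try ring)

lemma funH_pos {q x : ℝ} (hq0 : 0 < q) (hq1 : q < 1) (hx : 0 < x) : 0 < funH q x := by
  unfold funH
  have h1 := Real.rpow_pos_of_pos hx q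
  have h2 := Real.rpow_pos_of_pos hx (q-1)
  nlinarith

lemma eq_iff_funG {q k l x : ℝ} (hq0 : 0 < q) (hq1 : q < 1) (hk0 : 0 < k) (hk1 : k < 1)
    (hx : 0 < x) (hkx : k * x < 1) :
    (funH q (x * (1-k) / (1-k*x)) = l * funH q x ↔ funG q k x = l) := by
  rw [funH_comp hq0 hq1 hk0 hk1 hx hkx]
  exact mul_left_inj' (funH_pos hq0 hq1 hx).ne'


/-- unique solvability of `H_q(x(1-k)/(1-kx)) = λ H_q(x)` on `(1, 1/k)`,
and solvability on `(0,1)` iff `λ < (1-k)^(q-1)` (in which case uniquely). -/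
theorem statement9 (q k l : ℝ) (hq : q ∈ Set.Ioo (0 : ℝ) 1)
    (hk : k ∈ Set.Ioo (0 : ℝ) 1) (hl : 1 < l) :
    (∃! x : ℝ, x ∈ Set.Ioo 1 (1 / k) ∧
        funH q (x * (1 - k) / (1 - k * x)) = l * funH q x) ∧
    ((∃ x ∈ Set.Ioo (0 : ℝ) 1,
        funH q (x * (1 - k) / (1 - k * x)) = l * funH q x) ↔ l < (1 - k) ^ (q - 1)) ∧
    (l < (1 - k) ^ (q - 1) → ∃! x : ℝ, x ∈ Set.Ioo (0 : ℝ) 1 ∧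
        funH q (x * (1 - k) / (1 - k * x)) = l * funH q x) := by

  obtain ⟨hq0, hq1⟩ := hq
  obtain ⟨hk0, hk1⟩ := hk
  have hik : 1 < 1/k := by rw [lt_div_iff₀ hk0]; linarith
  -- basic translation
  have key : ∀ x : ℝ, 0 < x → k * x < 1 →
      (funH q (x * (1-k) / (1-k*x)) = l * funH q x ↔ funG q k x = l) :=
    fun x hx hkx => eq_iff_funG hq0 hq1 hk0 hk1 hx hkx
  have hkx_of : ∀ x : ℝ, x < 1/k → k * x < 1 := by
    intro x hx
    calc k * x < k * (1/k) := by exact (mul_lt_mul_iff_right₀ hk0).mpr hx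
    _ = 1 := by field_simp
  have hG1 : funG q k 1 = 1 := funG_one hq0 hq1 hk0 hk1
  have hG0 : funG q k 0 = (1-k) ^ (q-1) := funG_zero q k hq0
  refine ⟨?_, ?_, ?_⟩
  · -- part 1
    obtain ⟨x₀, hx₀, hGx₀⟩ : ∃ x₀ ∈ Ioo 1 (1/k), l < funG q k x₀ := by
      have h1 := (funG_top hq0 hq1 hk0 hk1).eventually_gt_atTop l
      have h2 : Ioo 1 (1/k) ∈ nhdsWithin (1/k) (Iio (1/k)) :=
        Ioo_mem_nhdsLT hik
      obtain ⟨x₀, hx₀, hg⟩ := (h1.and (eventually_of_mem h2 (fun x hx => hx))).exists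
      exact ⟨x₀, hg, hx₀⟩
    have hmono := funG_mono hq0 hq1 hk0 hk1 (hkx_of x₀ hx₀.2)
    have hcont : ContinuousOn (funG q k) (Icc 1 x₀) := fun x hx =>
      (funG_contAt hq0 hq1 hk0 hk1 (by linarith [hx.1]) (hkx_of x (lt_of_le_of_lt hx.2 hx₀.2))).continuousWithinAt
    obtain ⟨x, hxmem, hxval⟩ := intermediate_value_Icc hx₀.1.le hcont
      (show l ∈ Icc (funG q k 1) (funG q k x₀) from ⟨by rw [hG1]; exact hl.le, hGx₀.le⟩)
    have hx1 : 1 < x := by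
      rcases eq_or_lt_of_le hxmem.1 with h | h
      · exfalso; rw [← h, hG1] at hxval; linarith
      · exact h
    have hxk : x < 1/k := lt_of_le_of_lt hxmem.2 hx₀.2
    refine ⟨x, ⟨⟨hx1, hxk⟩, (key x (by linarith) (hkx_of x hxk)).mpr hxval⟩, ?_⟩
    rintro y ⟨⟨hy1, hyk⟩, hyeq⟩
    have hyval := (key y (by linarith) (hkx_of y hyk)).mp hyeq
    -- uniqueness via strict mono on Icc 1 (max x y)
    set t := max x y with ht
    have htk : k * t < 1 := hkx_of t (max_lt hxk hyk)
    have hm := funG_mono hq0 hq1 hk0 hk1 htk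
    exact hm.injOn ⟨hy1.le, le_max_right _ _⟩ ⟨hx1.le, le_max_left _ _⟩ (by rw [hxval, hyval])
  · -- part 2
    constructor
    · rintro ⟨x, ⟨hx0, hx1⟩, hxeq⟩
      have hxval := (key x hx0 (by nlinarith)).mp hxeq
      have := (funG_anti hq0 hq1 hk0 hk1) (show (0:ℝ) ∈ Icc (0:ℝ) 1 from ⟨le_refl _, zero_le_one⟩)
        ⟨hx0.le, hx1.le⟩ hx0
      rw [hG0, hxval] at this
      exact this
    · intro hll
      have hcont : ContinuousOn (funG q k) (Icc 0 1) := fun x hx =>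
        (funG_contAt hq0 hq1 hk0 hk1 hx.1 (by nlinarith [hx.1, hx.2])).continuousWithinAt
      obtain ⟨x, hxmem, hxval⟩ := intermediate_value_Icc' zero_le_one hcont
        (show l ∈ Icc (funG q k 1) (funG q k 0) from ⟨by rw [hG1]; exact hl.le, by rw [hG0]; exact hll.le⟩)
      have hx0 : 0 < x := by
        rcases eq_or_lt_of_le hxmem.1 with h | h
        · exfalso; rw [← h, hG0] at hxval; linarith
        · exact h
      have hx1 : x < 1 := by
        rcases eq_or_lt_of_le hxmem.2 with h | h
        · exfalso; rw [h, hG1] at hxval; linarith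
        · exact h
      exact ⟨x, ⟨hx0, hx1⟩, (key x hx0 (by nlinarith)).mpr hxval⟩
  · -- part 3
    intro hll
    have hcont : ContinuousOn (funG q k) (Icc 0 1) := fun x hx =>
      (funG_contAt hq0 hq1 hk0 hk1 hx.1 (by nlinarith [hx.1, hx.2])).continuousWithinAt
    obtain ⟨x, hxmem, hxval⟩ := intermediate_value_Icc' zero_le_one hcont
      (show l ∈ Icc (funG q k 1) (funG q k 0) from ⟨by rw [hG1]; exact hl.le, by rw [hG0]; exact hll.le⟩)
    have hx0 : 0 < x := by
      rcases eq_or_lt_of_le hxmem.1 with h | h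
      · exfalso; rw [← h, hG0] at hxval; linarith
      · exact h
    have hx1 : x < 1 := by
      rcases eq_or_lt_of_le hxmem.2 with h | h
      · exfalso; rw [h, hG1] at hxval; linarith
      · exact h
    refine ⟨x, ⟨⟨hx0, hx1⟩, (key x hx0 (by nlinarith)).mpr hxval⟩, ?_⟩
    rintro y ⟨⟨hy0, hy1⟩, hyeq⟩
    have hyval := (key y hy0 (by nlinarith)).mp hyeq
    exact (funG_anti hq0 hq1 hk0 hk1).injOn ⟨hy0.le, hy1.le⟩ ⟨hx0.le, hx1.le⟩ (by rw [hxval, hyval])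


end
end

section
/- Let q ∈ (0,1). For 0 < k < 1 and 0 < x < 1/k set σ_q(k,x) = H_q( x(1−k)/(1−kx) ) / H_q(x) = ((1−q)x + q − kx) / ( (1−k)^{1−q} (1−kx)^q ((1−q)x + q) ), and for μ ≥ 0 set R_{q,μ}(k,x) = ( x(1−k)/(1−kx) )^q / σ_q(k,x) + (μ^q − x^q)(1−k) on W = {(k,x) : 0 < k < 1 and 1 < x < 1/k}. Let μ > 1, λ > 1, and ξ ∈ (0,1]. If ξ ≥ k₀(λ,μ), where k₀(λ,μ) = ( ω_q(λ H_q(μ))^{1/q} − μ ) / ( μ ( ω_q(λ H_q(μ))^{1/q} − 1 ) ), then the maximum value of R_{q,μ} on the set {(k,x) ∈ W : 0 < k ≤ ξ and σ_q(k,x) = λ} equals (1/λ)·ω_q(λ H_q(μ)). Moreover k₀(λ,μ) is the unique solution in (0, 1/μ) of the equation σ_q(k₀, μ) = λ, and X_λ(k₀) = μ, where X_λ(k) denotes the unique solution in (1, 1/k) of H_q( x(1−k)/(1−kx) ) = λ H_q(x). -/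
open MeasureTheory Filter Set

noncomputable section

namespace St10
variable {q : ℝ}

theorem funH_one : funH q 1 = 1 := by simp [funH]

theorem hasDerivAt_funH (hq : q ∈ Set.Ioo (0:ℝ) 1) {z : ℝ} (hz : 0 < z) :
    HasDerivAt (funH q) (q * (1 - q) * z ^ (q - 2) * (z - 1)) z := by
  have h1 : HasDerivAt (fun z : ℝ => z ^ q) (q * z ^ (q - 1)) z :=
    Real.hasDerivAt_rpow_const (Or.inl hz.ne')
  have h2 : HasDerivAt (fun z : ℝ => z ^ (q - 1)) ((q - 1) * z ^ (q - 1 - 1)) z :=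
    Real.hasDerivAt_rpow_const (Or.inl hz.ne')
  have := (h1.const_mul (1 - q)).add (h2.const_mul q)
  have hz1 : z ^ (q - 1) = z ^ (q - 2) * z := by
    rw [← Real.rpow_add_one hz.ne']; ring_nf
  have hz2 : z ^ (q - 1 - 1) = z ^ (q - 2) := by ring_nf
  exact this.congr_deriv (by rw [hz1, hz2]; ring)

theorem funH_strictMonoOn (hq : q ∈ Set.Ioo (0:ℝ) 1) : StrictMonoOn (funH q) (Set.Ici 1) := by
  obtain ⟨hq0, hq1⟩ := hq
  apply strictMonoOn_of_deriv_pos (convex_Ici 1)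
  · intro z hz
    exact (hasDerivAt_funH ⟨hq0, hq1⟩ (lt_of_lt_of_le one_pos hz)).continuousAt.continuousWithinAt
  · intro z hz
    rw [interior_Ici] at hz
    have hz1 : (1:ℝ) < z := hz
    rw [(hasDerivAt_funH ⟨hq0, hq1⟩ (by linarith)).deriv]
    have h2 : (0:ℝ) < z ^ (q - 2) := Real.rpow_pos_of_pos (by linarith) _
    have : 0 < z - 1 := by linarith
    exact mul_pos (mul_pos (mul_pos hq0 (by linarith : (0:ℝ) < 1 - q)) h2) this

theorem funH_pos (hq : q ∈ Set.Ioo (0:ℝ) 1) {z : ℝ} (hz : 0 < z) : 0 < funH q z := by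
  obtain ⟨hq0, hq1⟩ := hq
  have h1 : (0:ℝ) < z ^ q := Real.rpow_pos_of_pos hz _
  have h2 : (0:ℝ) < z ^ (q - 1) := Real.rpow_pos_of_pos hz _
  have h3 : (0:ℝ) < 1 - q := by linarith
  unfold funH; nlinarith

theorem funH_ge_one (hq : q ∈ Set.Ioo (0:ℝ) 1) {z : ℝ} (hz : 1 ≤ z) : 1 ≤ funH q z := by
  have := (funH_strictMonoOn hq).monotoneOn (Set.mem_Ici.2 le_rfl) (Set.mem_Ici.2 hz) hz
  rwa [funH_one] at this

theorem funH_surj (hq : q ∈ Set.Ioo (0:ℝ) 1) {t : ℝ} (ht : 1 ≤ t) :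
    ∃ z ∈ Set.Ici (1:ℝ), funH q z = t := by
  obtain ⟨hq0, hq1⟩ := hq
  set M : ℝ := max 1 ((t / (1 - q)) ^ (1/q : ℝ)) with hM
  have hM1 : (1:ℝ) ≤ M := le_max_left _ _
  have hcont : ContinuousOn (funH q) (Set.Icc 1 M) := fun z hz =>
    (hasDerivAt_funH ⟨hq0, hq1⟩ (by linarith [hz.1] : (0:ℝ) < z)).continuousAt.continuousWithinAt
  have htM : t ≤ funH q M := by
    have h0 : (0:ℝ) ≤ t / (1 - q) := by
      have : (0:ℝ) < 1 - q := by linarith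
      positivity
    have h1 : (t / (1 - q)) ^ (1/q : ℝ) ≤ M := le_max_right _ _
    have h2 : t / (1 - q) ≤ M ^ q := by
      calc t / (1 - q) = ((t / (1 - q)) ^ (1/q : ℝ)) ^ q := by
            rw [one_div, Real.rpow_inv_rpow h0 hq0.ne']
        _ ≤ M ^ q := Real.rpow_le_rpow (by positivity) h1 hq0.le
    have h3 : (1 - q) * (t / (1 - q)) ≤ (1 - q) * M ^ q :=
      mul_le_mul_of_nonneg_left h2 (by linarith)
    have h4 : (0:ℝ) < M ^ (q - 1) := Real.rpow_pos_of_pos (by linarith) _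
    have h5 : (1 - q) * (t / (1 - q)) = t := by
      rw [mul_comm, div_mul_cancel₀ _ (by linarith : (1:ℝ) - q ≠ 0)]
    unfold funH; nlinarith
  have hmem : t ∈ Set.Icc (funH q 1) (funH q M) := by rw [funH_one]; exact ⟨ht, htM⟩
  obtain ⟨z, hz, hzt⟩ := intermediate_value_Icc hM1 hcont hmem
  exact ⟨z, hz.1, hzt⟩

def Hinv (q t : ℝ) : ℝ := Function.invFunOn (funH q) (Set.Ici 1) t

theorem Hinv_mem (hq : q ∈ Set.Ioo (0:ℝ) 1) {t : ℝ} (ht : 1 ≤ t) : 1 ≤ Hinv q t :=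
  Function.invFunOn_mem (funH_surj hq ht)

theorem funH_Hinv (hq : q ∈ Set.Ioo (0:ℝ) 1) {t : ℝ} (ht : 1 ≤ t) : funH q (Hinv q t) = t :=
  Function.invFunOn_eq (funH_surj hq ht)

theorem Hinv_funH (hq : q ∈ Set.Ioo (0:ℝ) 1) {x : ℝ} (hx : 1 ≤ x) : Hinv q (funH q x) = x := by
  have h1 : 1 ≤ funH q x := funH_ge_one hq hx
  exact (funH_strictMonoOn hq).injOn (Set.mem_Ici.2 (Hinv_mem hq h1)) (Set.mem_Ici.2 hx)
    (funH_Hinv hq h1)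

theorem Hinv_gt_one (hq : q ∈ Set.Ioo (0:ℝ) 1) {t : ℝ} (ht : 1 < t) : 1 < Hinv q t := by
  rcases lt_or_eq_of_le (Hinv_mem hq ht.le) with h | h
  · exact h
  · exfalso
    have := funH_Hinv hq ht.le
    rw [← h, funH_one] at this; linarith

theorem Hinv_strictMonoOn (hq : q ∈ Set.Ioo (0:ℝ) 1) :
    StrictMonoOn (Hinv q) (Set.Ici 1) := by
  intro s hs t ht hst
  by_contra hc
  push_neg at hc
  have := (funH_strictMonoOn hq).monotoneOn (Set.mem_Ici.2 (Hinv_mem hq ht))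
    (Set.mem_Ici.2 (Hinv_mem hq hs)) hc
  rw [funH_Hinv hq hs, funH_Hinv hq ht] at this
  linarith

theorem Hinv_continuousAt (hq : q ∈ Set.Ioo (0:ℝ) 1) {t : ℝ} (ht : 1 < t) :
    ContinuousAt (Hinv q) t := by
  apply continuousAt_of_monotoneOn_of_image_mem_nhds
    (s := Set.Ici 1) ((Hinv_strictMonoOn hq).monotoneOn)
  · exact Ici_mem_nhds ht
  · apply Filter.mem_of_superset (Ioi_mem_nhds (Hinv_gt_one hq ht))
    intro z hz
    have hz1 : (1:ℝ) < z := hz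
    exact ⟨funH q z, funH_ge_one hq hz1.le, Hinv_funH hq hz1.le⟩

theorem hasDerivAt_Hinv (hq : q ∈ Set.Ioo (0:ℝ) 1) {t : ℝ} (ht : 1 < t) :
    HasDerivAt (Hinv q) (q * (1 - q) * (Hinv q t) ^ (q - 2) * (Hinv q t - 1))⁻¹ t := by
  have hy := Hinv_gt_one hq ht
  apply HasDerivAt.of_local_left_inverse (Hinv_continuousAt hq ht)
    (hasDerivAt_funH hq (by linarith))
  · have h2 : (0:ℝ) < (Hinv q t) ^ (q - 2) := Real.rpow_pos_of_pos (by linarith) _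
    exact ne_of_gt (mul_pos (mul_pos (mul_pos hq.1 (by linarith [hq.2] : (0:ℝ) < 1 - q)) h2)
      (by linarith))
  · filter_upwards [Ioi_mem_nhds ht] with s hs
    exact funH_Hinv hq (le_of_lt hs)

def Yf (q l x : ℝ) : ℝ := Hinv q (l * funH q x)

def Ydf (q l x : ℝ) : ℝ :=
  (q * (1 - q) * (Yf q l x) ^ (q - 2) * (Yf q l x - 1))⁻¹ *
    (l * (q * (1 - q) * x ^ (q - 2) * (x - 1)))

def Gf (q l x : ℝ) : ℝ := Yf q l x * (x - 1) / (x * (Yf q l x - 1))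

def Gdf (q l x : ℝ) : ℝ :=
  (Yf q l x * (Yf q l x - 1) - x * (x - 1) * Ydf q l x) / (x * (Yf q l x - 1)) ^ 2

def Ff (q l m x : ℝ) : ℝ := (Yf q l x) ^ q / l + (m ^ q - x ^ q) * Gf q l x

variable {l m : ℝ}

theorem one_lt_lH (hq : q ∈ Set.Ioo (0:ℝ) 1) (hl : 1 < l) {x : ℝ} (hx : 1 ≤ x) :
    1 < l * funH q x :=
  lt_of_lt_of_le hl (le_mul_of_one_le_right (by linarith) (funH_ge_one hq hx))

theorem funH_Yf (hq : q ∈ Set.Ioo (0:ℝ) 1) (hl : 1 < l) {x : ℝ} (hx : 1 ≤ x) :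
    funH q (Yf q l x) = l * funH q x :=
  funH_Hinv hq (one_lt_lH hq hl hx).le

theorem Yf_gt (hq : q ∈ Set.Ioo (0:ℝ) 1) (hl : 1 < l) {x : ℝ} (hx : 1 ≤ x) :
    x < Yf q l x := by
  have h1 : 1 ≤ funH q x := funH_ge_one hq hx
  have h2 : funH q x < l * funH q x := by nlinarith
  have := Hinv_strictMonoOn hq (Set.mem_Ici.2 h1) (Set.mem_Ici.2 (by linarith)) h2
  rwa [Hinv_funH hq hx] at this

theorem Yf_gt_one (hq : q ∈ Set.Ioo (0:ℝ) 1) (hl : 1 < l) {x : ℝ} (hx : 1 ≤ x) :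
    1 < Yf q l x := lt_of_le_of_lt hx (Yf_gt hq hl hx)

theorem hasDerivAt_Yf (hq : q ∈ Set.Ioo (0:ℝ) 1) (hl : 1 < l) {x : ℝ} (hx : 1 < x) :
    HasDerivAt (Yf q l) (Ydf q l x) x := by
  have h1 : HasDerivAt (fun x => l * funH q x) (l * (q * (1 - q) * x ^ (q - 2) * (x - 1))) x :=
    (hasDerivAt_funH hq (by linarith)).const_mul l
  have h2 := hasDerivAt_Hinv hq (one_lt_lH hq hl hx.le)
  exact h2.comp x h1

theorem eq_Yf (hq : q ∈ Set.Ioo (0:ℝ) 1) (hl : 1 < l) {x y : ℝ} (hx : 1 ≤ x) (hy : 1 ≤ y)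
    (h : funH q y = l * funH q x) : y = Yf q l x := by
  have := funH_Yf hq hl hx
  exact (funH_strictMonoOn hq).injOn (Set.mem_Ici.2 hy)
    (Set.mem_Ici.2 (Hinv_mem hq (one_lt_lH hq hl hx).le)) (by rw [h, this])

theorem hasDerivAt_Gf (hq : q ∈ Set.Ioo (0:ℝ) 1) (hl : 1 < l) {x : ℝ} (hx : 1 < x) :
    HasDerivAt (Gf q l) (Gdf q l x) x := by
  have hY := hasDerivAt_Yf hq hl hx
  have hy1 : 1 < Yf q l x := Yf_gt_one hq hl hx.le
  have hN : HasDerivAt (fun x => Yf q l x * (x - 1))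
      (Ydf q l x * (x - 1) + Yf q l x * 1) x :=
    hY.mul ((hasDerivAt_id x).sub_const 1)
  have hD : HasDerivAt (fun x => x * (Yf q l x - 1))
      (1 * (Yf q l x - 1) + x * Ydf q l x) x :=
    (hasDerivAt_id x).mul (hY.sub_const 1)
  have hD0 : x * (Yf q l x - 1) ≠ 0 := by nlinarith
  have := hN.div hD hD0
  refine this.congr_deriv ?_
  unfold Gdf
  have h0 : (x * (Yf q l x - 1)) ^ 2 ≠ 0 := by
    have : 0 < x * (Yf q l x - 1) := by nlinarith
    positivity
  rw [div_eq_div_iff h0 h0]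
  ring

theorem rpow_sub_one_mul {z : ℝ} (hz : 0 < z) (p : ℝ) : z ^ (p - 1) = z ^ (p - 2) * z := by
  rw [← Real.rpow_add_one hz.ne']; ring_nf

theorem funH_factor (hq : q ∈ Set.Ioo (0:ℝ) 1) {x : ℝ} (hx : 0 < x) :
    funH q x = x ^ (q - 2) * x * ((1 - q) * x + q) := by
  have e1 : x ^ (q - 1) = x ^ (q - 2) * x := rpow_sub_one_mul hx q
  have e2 : x ^ q = x ^ (q - 1) * x := by
    nth_rewrite 1 [show q = q - 1 + 1 by ring]
    rw [Real.rpow_add_one hx.ne']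
  unfold funH
  rw [e2, e1]; ring

theorem Ydf_eq (hq : q ∈ Set.Ioo (0:ℝ) 1) (hl : 1 < l) {x : ℝ} (hx : 1 < x) :
    Ydf q l x = l * x ^ (q - 2) * (x - 1) / ((Yf q l x) ^ (q - 2) * (Yf q l x - 1)) := by
  obtain ⟨hq0, hq1⟩ := hq
  have hy1 : 1 < Yf q l x := Yf_gt_one ⟨hq0, hq1⟩ hl hx.le
  have hB0 : 0 < (Yf q l x) ^ (q - 2) := Real.rpow_pos_of_pos (by linarith) _
  have hd : q * (1 - q) * (Yf q l x) ^ (q - 2) * (Yf q l x - 1) ≠ 0 :=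
    ne_of_gt (mul_pos (mul_pos (mul_pos hq0 (by linarith)) hB0) (by linarith))
  have hd2 : (Yf q l x) ^ (q - 2) * (Yf q l x - 1) ≠ 0 :=
    ne_of_gt (mul_pos hB0 (by linarith))
  unfold Ydf
  rw [inv_mul_eq_div, div_eq_div_iff hd hd2]
  ring

theorem Gdf_pos (hq : q ∈ Set.Ioo (0:ℝ) 1) (hl : 1 < l) {x : ℝ} (hx : 1 < x) :
    0 < Gdf q l x := by
  obtain ⟨hq0, hq1⟩ := hq
  have hYd := Ydf_eq ⟨hq0, hq1⟩ hl hx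
  have hfY := funH_Yf ⟨hq0, hq1⟩ hl hx.le
  set y := Yf q l x with hy
  have hxy : x < y := Yf_gt ⟨hq0, hq1⟩ hl hx.le
  have hy1 : 1 < y := lt_trans hx hxy
  have hx0 : (0:ℝ) < x := by linarith
  have hy0 : (0:ℝ) < y := by linarith
  set A := x ^ (q - 2) with hA
  set B := y ^ (q - 2) with hB
  have hA0 : 0 < A := Real.rpow_pos_of_pos hx0 _
  have hB0 : 0 < B := Real.rpow_pos_of_pos hy0 _
  have hc : B * y * ((1 - q) * y + q) = l * (A * x * ((1 - q) * x + q)) := by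
    rw [← funH_factor ⟨hq0, hq1⟩ hx0, ← funH_factor ⟨hq0, hq1⟩ hy0]; exact hfY
  have hstep : ((1 - q) * y + q) * (x - 1) ^ 2 < ((1 - q) * x + q) * (y - 1) ^ 2 := by
    nlinarith [mul_pos (mul_pos (by linarith : (0:ℝ) < 1 - q) (by linarith : (0:ℝ) < y - x))
        (by nlinarith : (0:ℝ) < x * y - 1),
      mul_pos (mul_pos hq0 (by linarith : (0:ℝ) < y - x)) (by linarith : (0:ℝ) < x + y - 2)]
  have hmain : l * A * x * (x - 1) ^ 2 < B * y * (y - 1) ^ 2 := by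
    have hcpos : (0:ℝ) < (1 - q) * x + q := by nlinarith
    have h1 : B * y * (((1 - q) * y + q) * (x - 1) ^ 2) <
        B * y * (((1 - q) * x + q) * (y - 1) ^ 2) :=
      mul_lt_mul_of_pos_left hstep (mul_pos hB0 hy0)
    have h2 : ((1 - q) * x + q) * (l * A * x * (x - 1) ^ 2) <
        ((1 - q) * x + q) * (B * y * (y - 1) ^ 2) := by nlinarith
    exact lt_of_mul_lt_mul_left h2 hcpos.le
  have hnum : 0 < y * (y - 1) - x * (x - 1) * Ydf q l x := by
    rw [hYd, sub_pos]
    have heq : x * (x - 1) * (l * A * (x - 1) / (B * (y - 1))) =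
        l * A * x * (x - 1) ^ 2 / (B * (y - 1)) := by ring
    rw [heq, div_lt_iff₀ (mul_pos hB0 (by linarith : (0:ℝ) < y - 1))]
    nlinarith
  unfold Gdf
  rw [← hy]
  apply div_pos hnum
  have : 0 < x * (y - 1) := by nlinarith
  positivity

theorem hasDerivAt_Ff (hq : q ∈ Set.Ioo (0:ℝ) 1) (hl : 1 < l) (m : ℝ) {x : ℝ} (hx : 1 < x) :
    HasDerivAt (Ff q l m) ((m ^ q - x ^ q) * Gdf q l x) x := by
  obtain ⟨hq0, hq1⟩ := hq
  have hY := hasDerivAt_Yf ⟨hq0, hq1⟩ hl hx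
  have hG := hasDerivAt_Gf ⟨hq0, hq1⟩ hl hx
  have hYd := Ydf_eq ⟨hq0, hq1⟩ hl hx
  set y := Yf q l x with hy
  have hxy : x < y := Yf_gt ⟨hq0, hq1⟩ hl hx.le
  have hy1 : 1 < y := lt_trans hx hxy
  have hx0 : (0:ℝ) < x := by linarith
  have hy0 : (0:ℝ) < y := by linarith
  have h1 : HasDerivAt (fun x => (Yf q l x) ^ q / l)
      (Ydf q l x * q * y ^ (q - 1) / l) x :=
    (hY.rpow_const (Or.inl (by positivity))).div_const l
  have h2 : HasDerivAt (fun x : ℝ => m ^ q - x ^ q) (0 - 1 * q * x ^ (q - 1)) x :=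
    (hasDerivAt_const x (m ^ q)).sub ((hasDerivAt_id x).rpow_const (Or.inl hx0.ne'))
  have h3 := h1.add (h2.mul hG)
  have h4 : HasDerivAt (Ff q l m)
      (Ydf q l x * q * y ^ (q - 1) / l + ((0 - 1 * q * x ^ (q - 1)) * Gf q l x
        + (m ^ q - x ^ q) * Gdf q l x)) x := h3
  convert h4 using 1
  have hcancel : Ydf q l x * q * y ^ (q - 1) / l = q * x ^ (q - 1) * Gf q l x := by
    rw [hYd, rpow_sub_one_mul hx0 q, rpow_sub_one_mul hy0 q]
    unfold Gf
    rw [← hy]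
    set A := x ^ (q - 2) with hA
    set B := y ^ (q - 2) with hB
    have hA0 : 0 < A := Real.rpow_pos_of_pos hx0 _
    have hB0 : 0 < B := Real.rpow_pos_of_pos hy0 _
    have hl0 : l ≠ 0 := by linarith
    have hBy : B * (y - 1) ≠ 0 := ne_of_gt (mul_pos hB0 (by linarith))
    have hxy1 : x * (y - 1) ≠ 0 := ne_of_gt (mul_pos hx0 (by linarith))
    field_simp
  rw [hcancel]
  ring

theorem Gf_strictMonoOn (hq : q ∈ Set.Ioo (0:ℝ) 1) (hl : 1 < l) :
    StrictMonoOn (Gf q l) (Set.Ioi 1) := by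
  apply strictMonoOn_of_deriv_pos (convex_Ioi 1)
  · exact fun t ht => (hasDerivAt_Gf hq hl ht).continuousAt.continuousWithinAt
  · intro t ht
    rw [interior_Ioi] at ht
    rw [(hasDerivAt_Gf hq hl ht).deriv]
    exact Gdf_pos hq hl ht

theorem Ff_le (hq : q ∈ Set.Ioo (0:ℝ) 1) (hl : 1 < l) (hm : 1 < m) {x : ℝ} (hx : 1 < x) :
    Ff q l m x ≤ Ff q l m m := by
  rcases lt_trichotomy x m with h | h | h
  · have hmono : StrictMonoOn (Ff q l m) (Set.Icc x m) := by
      apply strictMonoOn_of_deriv_pos (convex_Icc x m)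
      · exact fun t ht =>
          (hasDerivAt_Ff hq hl m (lt_of_lt_of_le hx ht.1)).continuousAt.continuousWithinAt
      · intro t ht
        rw [interior_Icc] at ht
        have ht1 : 1 < t := lt_trans hx ht.1
        rw [(hasDerivAt_Ff hq hl m ht1).deriv]
        have htm : t ^ q < m ^ q := Real.rpow_lt_rpow (by linarith) ht.2 hq.1
        exact mul_pos (by linarith) (Gdf_pos hq hl ht1)
    exact (hmono (Set.left_mem_Icc.2 h.le) (Set.right_mem_Icc.2 h.le) h).le
  · rw [h]
  · have hanti : StrictAntiOn (Ff q l m) (Set.Icc m x) := by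
      apply strictAntiOn_of_deriv_neg (convex_Icc m x)
      · exact fun t ht =>
          (hasDerivAt_Ff hq hl m (lt_of_lt_of_le hm ht.1)).continuousAt.continuousWithinAt
      · intro t ht
        rw [interior_Icc] at ht
        have ht1 : 1 < t := lt_trans hm ht.1
        rw [(hasDerivAt_Ff hq hl m ht1).deriv]
        have htm : m ^ q < t ^ q := Real.rpow_lt_rpow (by linarith) ht.1 hq.1
        exact mul_neg_of_neg_of_pos (by linarith) (Gdf_pos hq hl ht1)
    exact (hanti (Set.left_mem_Icc.2 h.le) (Set.right_mem_Icc.2 h.le) h).le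

end St10

set_option maxHeartbeats 1000000 in
open St10 in
/-- maximization of `R_{q,m}` on the level set `{σ_q(k,x) = l, k ≤ ξ}`. -/
theorem statement10 (q l m ξ : ℝ) (hq : q ∈ Set.Ioo (0 : ℝ) 1) (hl : 1 < l)
    (hm : 1 < m) (hξ : ξ ∈ Set.Ioc (0 : ℝ) 1)
    (σ R : ℝ → ℝ → ℝ)
    (hσ : ∀ k x, σ k x = funH q (x * (1 - k) / (1 - k * x)) / funH q x)
    (hR : ∀ k x, R k x =
      (x * (1 - k) / (1 - k * x)) ^ q / σ k x + (m ^ q - x ^ q) * (1 - k))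
    (k₀ : ℝ)
    (hk₀ : k₀ = (funOmega q (l * funH q m) ^ (1 / q) - m) /
      (m * (funOmega q (l * funH q m) ^ (1 / q) - 1)))
    (hξk : k₀ ≤ ξ) :
    IsGreatest {r : ℝ | ∃ k x : ℝ, 0 < k ∧ k < 1 ∧ 1 < x ∧ x < 1 / k ∧ k ≤ ξ ∧
        σ k x = l ∧ r = R k x} ((1 / l) * funOmega q (l * funH q m)) ∧
    (k₀ ∈ Set.Ioo 0 (1 / m) ∧ σ k₀ m = l ∧
      ∀ k ∈ Set.Ioo (0 : ℝ) (1 / m), σ k m = l → k = k₀) ∧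
    (m ∈ Set.Ioo 1 (1 / k₀) ∧ ∀ x ∈ Set.Ioo (1 : ℝ) (1 / k₀),
      funH q (x * (1 - k₀) / (1 - k₀ * x)) = l * funH q x → x = m) := by
  obtain ⟨hq0, hq1⟩ := hq
  have hm0 : (0:ℝ) < m := by linarith
  obtain ⟨y₀, hy₀def⟩ : ∃ y', y' = Yf q l m := ⟨_, rfl⟩
  have homega : funOmega q (l * funH q m) = y₀ ^ q := by rw [hy₀def]; rfl
  have hy₀m : m < y₀ := by rw [hy₀def]; exact Yf_gt ⟨hq0, hq1⟩ hl hm.le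
  have hy₀1 : (1:ℝ) < y₀ := lt_trans hm hy₀m
  have hy₀0 : (0:ℝ) < y₀ := by linarith
  have hfy₀ : funH q y₀ = l * funH q m := by rw [hy₀def]; exact funH_Yf ⟨hq0, hq1⟩ hl hm.le
  have hk₀eq : k₀ = (y₀ - m) / (m * (y₀ - 1)) := by
    rw [hk₀, homega, one_div, Real.rpow_rpow_inv hy₀0.le hq0.ne']
  have hden : (0:ℝ) < m * (y₀ - 1) := mul_pos hm0 (by linarith)
  have hk₀pos : 0 < k₀ := by rw [hk₀eq]; exact div_pos (by linarith) hden
  have hk₀m : k₀ * m < 1 := by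
    rw [hk₀eq, div_mul_eq_mul_div, div_lt_one hden]
    nlinarith
  have h1k₀m : (0:ℝ) < 1 - k₀ * m := by linarith
  have hk₀lt : k₀ < 1 / m := by rw [lt_div_iff₀ hm0]; exact hk₀m
  have hk₀1 : k₀ < 1 := lt_trans hk₀lt (by rw [div_lt_one hm0]; exact hm)
  have hrel : m * (1 - k₀) = y₀ * (1 - k₀ * m) := by
    rw [hk₀eq]; linear_combination div_mul_cancel₀ (y₀ - m) (ne_of_gt hden)
  have hy₀eq : m * (1 - k₀) / (1 - k₀ * m) = y₀ := by
    rw [div_eq_iff (ne_of_gt h1k₀m)]; exact hrel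
  have hHm : (0:ℝ) < funH q m := funH_pos ⟨hq0, hq1⟩ hm0
  have hσk₀m : σ k₀ m = l := by
    rw [hσ, hy₀eq, hfy₀, mul_div_assoc, div_self (ne_of_gt hHm), mul_one]
  have hGm : Gf q l m = 1 - k₀ := by
    show Yf q l m * (m - 1) / (m * (Yf q l m - 1)) = 1 - k₀
    rw [← hy₀def, hk₀eq]
    rw [eq_sub_iff_add_eq, ← add_div, div_eq_one_iff_eq (ne_of_gt hden)]
    ring
  have hFm : Ff q l m m = y₀ ^ q / l := by
    show (Yf q l m) ^ q / l + (m ^ q - m ^ q) * Gf q l m = y₀ ^ q / l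
    rw [← hy₀def, sub_self, zero_mul, add_zero]
  refine ⟨⟨⟨k₀, m, hk₀pos, hk₀1, hm, by rwa [lt_div_iff₀ hk₀pos, mul_comm], hξk, hσk₀m, ?_⟩, ?_⟩,
    ⟨⟨hk₀pos, hk₀lt⟩, hσk₀m, ?_⟩, ⟨⟨hm, by rwa [lt_div_iff₀ hk₀pos, mul_comm]⟩, ?_⟩⟩
  · -- value at the maximizer
    rw [hR, hσk₀m, hy₀eq, sub_self, zero_mul, add_zero, homega]
    ring
  · -- upper bound
    rintro r ⟨k, x, hk0, hk1, hx1, hxk, hkξ, hσl, hrR⟩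
    have hx0 : (0:ℝ) < x := by linarith
    have hkx : k * x < 1 := by rw [lt_div_iff₀ hk0] at hxk; linarith [hxk]
    have h1kx : (0:ℝ) < 1 - k * x := by linarith
    obtain ⟨y, hydef⟩ : ∃ y', y' = x * (1 - k) / (1 - k * x) := ⟨_, rfl⟩
    have hyx : x < y := by
      rw [hydef, lt_div_iff₀ h1kx]
      nlinarith [mul_pos (mul_pos hk0 hx0) (sub_pos.2 hx1)]
    have hy1 : (1:ℝ) < y := lt_trans hx1 hyx
    have hfun : funH q y = l * funH q x := by
      have h := hσl
      rw [hσ] at h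
      rw [← hydef] at h
      rw [div_eq_iff (ne_of_gt (funH_pos ⟨hq0, hq1⟩ hx0))] at h
      rw [h]
    have hyY : y = Yf q l x := eq_Yf ⟨hq0, hq1⟩ hl hx1.le hy1.le hfun
    have hxyrel : y * (1 - k * x) = x * (1 - k) := by
      rw [hydef]; exact div_mul_cancel₀ _ (ne_of_gt h1kx)
    have hGx : Gf q l x = 1 - k := by
      show Yf q l x * (x - 1) / (x * (Yf q l x - 1)) = 1 - k
      rw [← hyY, div_eq_iff (ne_of_gt (mul_pos hx0 (by linarith : (0:ℝ) < y - 1)))]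
      linear_combination -hxyrel
    have hrF : r = Ff q l m x := by
      rw [hrR, hR, hσl, ← hydef, hyY]
      show _ = (Yf q l x) ^ q / l + (m ^ q - x ^ q) * Gf q l x
      rw [hGx]
    rw [hrF, one_div, inv_mul_eq_div, homega, ← hFm]
    exact Ff_le ⟨hq0, hq1⟩ hl hm hx1
  · -- uniqueness of k₀
    rintro k ⟨hk0, hklt⟩ hσkm
    have hkm : k * m < 1 := by rw [lt_div_iff₀ hm0] at hklt; linarith
    have h1km : (0:ℝ) < 1 - k * m := by linarith
    obtain ⟨yk, hykdef⟩ : ∃ y', y' = m * (1 - k) / (1 - k * m) := ⟨_, rfl⟩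
    have hykm : m < yk := by
      rw [hykdef, lt_div_iff₀ h1km]
      nlinarith [mul_pos (mul_pos hk0 hm0) (sub_pos.2 hm)]
    have hyk1 : (1:ℝ) < yk := lt_trans hm hykm
    have hfun : funH q yk = l * funH q m := by
      have h := hσkm
      rw [hσ, ← hykdef, div_eq_iff (ne_of_gt hHm)] at h
      rw [h]
    have hykY : yk = y₀ := by rw [hy₀def]; exact eq_Yf ⟨hq0, hq1⟩ hl hm.le hyk1.le hfun
    have hrel2 : y₀ * (1 - k * m) = m * (1 - k) := by
      rw [← hykY, hykdef]; exact div_mul_cancel₀ _ (ne_of_gt h1km)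
    rw [hk₀eq, eq_div_iff (ne_of_gt hden)]
    linear_combination -hrel2
  · -- uniqueness of m
    rintro x ⟨hx1, hxlt⟩ hfunx
    have hx0 : (0:ℝ) < x := by linarith
    have hk₀x : k₀ * x < 1 := by rw [lt_div_iff₀ hk₀pos] at hxlt; linarith
    have h1k₀x : (0:ℝ) < 1 - k₀ * x := by linarith
    obtain ⟨yx, hyxdef⟩ : ∃ y', y' = x * (1 - k₀) / (1 - k₀ * x) := ⟨_, rfl⟩
    have hyxx : x < yx := by
      rw [hyxdef, lt_div_iff₀ h1k₀x]
      nlinarith [mul_pos (mul_pos hk₀pos hx0) (sub_pos.2 hx1)]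
    have hyx1 : (1:ℝ) < yx := lt_trans hx1 hyxx
    have hyxY : yx = Yf q l x :=
      eq_Yf ⟨hq0, hq1⟩ hl hx1.le hyx1.le (by rw [hyxdef]; exact hfunx)
    have hxyrel : yx * (1 - k₀ * x) = x * (1 - k₀) := by
      rw [hyxdef]; exact div_mul_cancel₀ _ (ne_of_gt h1k₀x)
    have hGx : Gf q l x = 1 - k₀ := by
      show Yf q l x * (x - 1) / (x * (Yf q l x - 1)) = 1 - k₀
      rw [← hyxY, div_eq_iff (ne_of_gt (mul_pos hx0 (by linarith : (0:ℝ) < yx - 1)))]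
      linear_combination -hxyrel
    exact (Gf_strictMonoOn ⟨hq0, hq1⟩ hl).injOn (Set.mem_Ioi.2 hx1) (Set.mem_Ioi.2 hm)
      (by rw [hGx, hGm])

end
end

section
/- Let (X,μ) be a nonatomic probability space, T a tree on X, q ∈ (0,1), and φ a T-good function with ∫_X φ dμ = f. Let B = {I_j}_j be a family of pairwise disjoint elements of S_φ which is maximal in S_φ under inclusion, i.e. every I ∈ S_φ satisfies I ∩ (∪_j I_j) ≠ ∅. Then for every β > 0, ∫_{X \ ∪_j I_j} (M_T φ)^q dμ ≤ (1/((1−q)β)) · [ (β+1)( f^q − Σ_j μ(I_j)·y_{I_j}^q ) − (β+1)^q ∫_{X \ ∪_j I_j} φ^q dμ ], where y_{I_j} = Av_{I_j}(φ). -/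
open MeasureTheory Filter Set
open scoped ENNReal NNReal

noncomputable section

/-- A tree on a probability space, as in the paper. -/
structure DTree (X : Type*) [MeasurableSpace X] (μ : Measure X) where
  mem : Set (Set X)
  child : Set X → Set (Set X)
  meas : ∀ I ∈ mem, MeasurableSet I
  top_mem : Set.univ ∈ mem
  pos : ∀ I ∈ mem, 0 < μ I
  child_sub_mem : ∀ I ∈ mem, child I ⊆ mem
  child_countable : ∀ I ∈ mem, (child I).Countable
  child_two : ∀ I ∈ mem, ∃ J ∈ child I, ∃ K ∈ child I, J ≠ K
  child_sub : ∀ I ∈ mem, ∀ J ∈ child I, J ⊆ I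
  child_disj : ∀ I ∈ mem, (child I).Pairwise Disjoint
  child_union : ∀ I ∈ mem, ⋃₀ child I = I
  generated : ∃ lvl : ℕ → Set (Set X),
    lvl 0 = {Set.univ} ∧
    (∀ m, lvl (m + 1) = ⋃ I ∈ lvl m, child I) ∧
    mem = ⋃ m, lvl m ∧
    Tendsto (fun m => ⨆ I ∈ lvl m, μ I) atTop (nhds 0)

variable {X : Type*} [MeasurableSpace X]

variable {μ : Measure X}

lemma DTree.nonempty_of_mem (T : DTree X μ) {I : Set X} (hI : I ∈ T.mem) : I.Nonempty := by
  rcases eq_empty_or_nonempty I with h | h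
  · have := T.pos I hI
    rw [h, measure_empty] at this
    exact absurd this (lt_irrefl 0)
  · exact h

lemma DTree.levels (T : DTree X μ) : ∃ lvl : ℕ → Set (Set X),
    (∀ m, lvl m ⊆ T.mem) ∧ (∀ m, (lvl m).Pairwise Disjoint) ∧
    (∀ m k, m ≤ k → ∀ J ∈ lvl k, ∃ W ∈ lvl m, J ⊆ W) ∧
    (∀ I ∈ T.mem, ∃ m, I ∈ lvl m) ∧ T.mem.Countable := by
  obtain ⟨lvl, h0, hsucc, hmemE, -⟩ := T.generated
  have hsub : ∀ m, lvl m ⊆ T.mem := by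
    intro m I hI
    rw [hmemE]
    exact mem_iUnion.2 ⟨m, hI⟩
  have hpair : ∀ m, (lvl m).Pairwise Disjoint := by
    intro m
    induction m with
    | zero => rw [h0]; exact Set.pairwise_singleton _ _
    | succ m ih =>
      intro J hJ K hK hJK
      rw [hsucc] at hJ hK
      simp only [mem_iUnion] at hJ hK
      obtain ⟨I₁, hI₁, hJ₁⟩ := hJ
      obtain ⟨I₂, hI₂, hK₂⟩ := hK
      by_cases h12 : I₁ = I₂
      · subst h12
        exact T.child_disj I₁ (hsub m hI₁) hJ₁ hK₂ hJK
      · exact Set.disjoint_of_subset (T.child_sub I₁ (hsub m hI₁) J hJ₁)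
          (T.child_sub I₂ (hsub m hI₂) K hK₂) (ih hI₁ hI₂ h12)
  have hup : ∀ m k, m ≤ k → ∀ J ∈ lvl k, ∃ W ∈ lvl m, J ⊆ W := by
    intro m k
    induction k with
    | zero => intro hm J hJ; exact ⟨J, by simpa [Nat.le_zero.1 hm] using hJ, subset_rfl⟩
    | succ k ih =>
      intro hm J hJ
      rcases Nat.eq_or_lt_of_le hm with h | h
      · exact ⟨J, h ▸ hJ, subset_rfl⟩
      · have hmk : m ≤ k := Nat.lt_succ_iff.1 h
        rw [hsucc] at hJ
        simp only [mem_iUnion] at hJ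
        obtain ⟨I₁, hI₁, hJ₁⟩ := hJ
        obtain ⟨W, hW, hIW⟩ := ih hmk I₁ hI₁
        exact ⟨W, hW, (T.child_sub I₁ (hsub k hI₁) J hJ₁).trans hIW⟩
  have hcnt : ∀ m, (lvl m).Countable := by
    intro m
    induction m with
    | zero => rw [h0]; exact countable_singleton _
    | succ m ih =>
      rw [hsucc]
      exact Set.Countable.biUnion ih (fun I hI => T.child_countable I (hsub m hI))
  refine ⟨lvl, hsub, hpair, hup, ?_, ?_⟩
  · intro I hI
    rw [hmemE] at hI
    exact mem_iUnion.1 hI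
  · rw [hmemE]
    exact Set.countable_iUnion hcnt

lemma DTree.countable_mem (T : DTree X μ) : T.mem.Countable := by
  obtain ⟨lvl, -, -, -, -, h⟩ := T.levels
  exact h

lemma DTree.comparable (T : DTree X μ) {I J : Set X} (hI : I ∈ T.mem) (hJ : J ∈ T.mem)
    (h : ¬ Disjoint I J) : I ⊆ J ∨ J ⊆ I := by
  obtain ⟨lvl, hsub, hpair, hup, hex, -⟩ := T.levels
  obtain ⟨m, hm⟩ := hex I hI
  obtain ⟨k, hk⟩ := hex J hJ
  rcases le_total m k with hmk | hkm
  · obtain ⟨W, hW, hJW⟩ := hup m k hmk J hk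
    by_cases hIW : I = W
    · exact Or.inr (hIW ▸ hJW)
    · exact absurd (Set.disjoint_of_subset subset_rfl hJW (hpair m hm hW hIW)) h
  · obtain ⟨W, hW, hIW⟩ := hup k m hkm I hm
    by_cases hJW : J = W
    · exact Or.inl (hJW ▸ hIW)
    · exact absurd (Set.disjoint_of_subset hIW subset_rfl ((hpair k hk hW hJW).symm)) h

/-- In any subfamily of the tree, every element is contained in a maximal one. -/
lemma DTree.exists_maximal (T : DTree X μ) (D : Set (Set X)) (hD : D ⊆ T.mem) :
    ∀ I ∈ D, ∃ K ∈ D, I ⊆ K ∧ ∀ J ∈ D, ¬ (K ⊂ J) := by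
  classical
  obtain ⟨lvl, hsub, hpair, hup, hex, -⟩ := T.levels
  -- min level
  have hexm : ∀ I ∈ T.mem, ∃ m, I ∈ lvl m := hex
  set ml : Set X → ℕ := fun I => if h : ∃ m, I ∈ lvl m then Nat.find h else 0 with hml
  have hml_mem : ∀ I ∈ T.mem, I ∈ lvl (ml I) := by
    intro I hI
    obtain ⟨m, hm⟩ := hexm I hI
    have hx : ∃ m, I ∈ lvl m := ⟨m, hm⟩
    simp only [hml, dif_pos hx]
    exact Nat.find_spec hx
  have hml_lt : ∀ I ∈ T.mem, ∀ J ∈ T.mem, I ⊂ J → ml J < ml I := by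
    intro I hI J hJ hIJ
    by_contra hcon
    push_neg at hcon
    obtain ⟨W, hW, hJW⟩ := hup (ml I) (ml J) hcon J (hml_mem J hJ)
    have hIW : I = W := by
      by_contra hne
      obtain ⟨x, hx⟩ := T.nonempty_of_mem hI
      exact (hpair (ml I) (hml_mem I hI) hW hne).ne_of_mem hx (hJW (hIJ.1 hx)) rfl
    exact hIJ.2 (hIW ▸ hJW)
  -- strong induction on ml
  have key : ∀ n, ∀ I ∈ D, ml I ≤ n → ∃ K ∈ D, I ⊆ K ∧ ∀ J ∈ D, ¬ (K ⊂ J) := by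
    intro n
    induction n with
    | zero =>
      intro I hI hn
      refine ⟨I, hI, subset_rfl, fun J hJ hIJ => ?_⟩
      have := hml_lt I (hD hI) J (hD hJ) hIJ
      omega
    | succ n ih =>
      intro I hI hn
      by_cases hmax : ∀ J ∈ D, ¬ (I ⊂ J)
      · exact ⟨I, hI, subset_rfl, hmax⟩
      · push_neg at hmax
        obtain ⟨J, hJ, hIJ⟩ := hmax
        have hlt := hml_lt I (hD hI) J (hD hJ) hIJ
        obtain ⟨K, hK, hJK, hKmax⟩ := ih J hJ (by omega)
        exact ⟨K, hK, hIJ.1.trans hJK, hKmax⟩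
  intro I hI
  exact key (ml I) I hI le_rfl


/-- The average of `φ` over `I`. -/
def trAvg (μ : Measure X) (φ : X → ℝ) (I : Set X) : ℝ :=
  (μ I).toReal⁻¹ * ∫ x in I, φ x ∂μ

/-- The dyadic maximal operator associated with the tree `T`. -/
def trMax (μ : Measure X) (T : DTree X μ) (φ : X → ℝ) (x : X) : ℝ :=
  sSup {r : ℝ | ∃ I ∈ T.mem, x ∈ I ∧ r = trAvg μ (fun y => |φ y|) I}

lemma trAvg_nonneg {μ : Measure X} {φ : X → ℝ} (h0 : ∀ x, 0 ≤ φ x) (I : Set X) :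
    0 ≤ trAvg μ φ I :=
  mul_nonneg (inv_nonneg.2 ENNReal.toReal_nonneg) (integral_nonneg h0)

/-- The `ℝ≥0∞`-valued maximal function, defined through an enumeration of the tree. -/
def auxM (μ : Measure X) (φ : X → ℝ) (e : ℕ → Set X) : X → ℝ≥0∞ :=
  fun x => ⨆ n, (e n).indicator (fun _ => ENNReal.ofReal (trAvg μ φ (e n))) x

lemma auxM_measurable (μ : Measure X) (φ : X → ℝ) (e : ℕ → Set X)
    (he : ∀ n, MeasurableSet (e n)) : Measurable (auxM μ φ e) :=
  Measurable.iSup fun n => measurable_const.indicator (he n)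

lemma le_auxM (μ : Measure X) (φ : X → ℝ) (e : ℕ → Set X) {n : ℕ} {x : X} (hx : x ∈ e n) :
    ENNReal.ofReal (trAvg μ φ (e n)) ≤ auxM μ φ e x := by
  have h : (e n).indicator (fun _ => ENNReal.ofReal (trAvg μ φ (e n))) x
      = ENNReal.ofReal (trAvg μ φ (e n)) := indicator_of_mem hx _
  rw [← h]
  exact le_iSup (fun m => (e m).indicator (fun _ => ENNReal.ofReal (trAvg μ φ (e m))) x) n

lemma exists_of_lt_auxM {μ : Measure X} {φ : X → ℝ} {e : ℕ → Set X} {s : ℝ} {x : X}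
    (h : ENNReal.ofReal s < auxM μ φ e x) :
    ∃ n, x ∈ e n ∧ s < trAvg μ φ (e n) := by
  rw [auxM, lt_iSup_iff] at h
  obtain ⟨n, hn⟩ := h
  by_cases hx : x ∈ e n
  · rw [indicator_of_mem hx] at hn
    refine ⟨n, hx, ?_⟩
    by_contra hle
    exact absurd (ENNReal.ofReal_le_ofReal (not_lt.1 hle)) (not_le.2 hn)
  · rw [indicator_of_notMem hx] at hn
    simp at hn

lemma bounded_of_auxM_ne_top {μ : Measure X} {φ : X → ℝ} {e : ℕ → Set X} {x : X}
    (h : auxM μ φ e x ≠ ⊤) {n : ℕ} (hx : x ∈ e n) :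
    trAvg μ φ (e n) ≤ (auxM μ φ e x).toReal := by
  rcases le_or_gt (trAvg μ φ (e n)) 0 with h0 | h0
  · exact h0.trans ENNReal.toReal_nonneg
  · have h1 := le_auxM μ φ e hx
    have := ENNReal.toReal_mono h h1
    rwa [ENNReal.toReal_ofReal h0.le] at this

lemma trMax_eq_toReal_auxM (μ : Measure X) (T : DTree X μ) (φ : X → ℝ)
    (h0 : ∀ x, 0 ≤ φ x) (e : ℕ → Set X) (he : T.mem = Set.range e) (x : X) :
    trMax μ T φ x = (auxM μ φ e x).toReal := by
  have habs : (fun y => |φ y|) = φ := funext fun y => abs_of_nonneg (h0 y)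
  have hS : {r : ℝ | ∃ I ∈ T.mem, x ∈ I ∧ r = trAvg μ (fun y => |φ y|) I}
      = {r : ℝ | ∃ n, x ∈ e n ∧ r = trAvg μ φ (e n)} := by
    ext r
    constructor
    · rintro ⟨I, hI, hxI, rfl⟩
      rw [he] at hI
      obtain ⟨n, rfl⟩ := hI
      exact ⟨n, hxI, by rw [habs]⟩
    · rintro ⟨n, hxn, rfl⟩
      exact ⟨e n, by rw [he]; exact Set.mem_range_self n, hxn, by rw [habs]⟩
  set S := {r : ℝ | ∃ n, x ∈ e n ∧ r = trAvg μ φ (e n)} with hSdef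
  have hmax : trMax μ T φ x = sSup S := by rw [trMax, hS]
  obtain ⟨n₀, hn₀⟩ : ∃ n₀, e n₀ = Set.univ := by
    have := T.top_mem
    rw [he] at this
    obtain ⟨n₀, h⟩ := this
    exact ⟨n₀, h⟩
  have hSne : S.Nonempty := ⟨trAvg μ φ (e n₀), n₀, by rw [hn₀]; trivial, rfl⟩
  have hSnn : ∀ r ∈ S, 0 ≤ r := by
    rintro r ⟨n, -, rfl⟩
    exact trAvg_nonneg h0 _
  by_cases htop : auxM μ φ e x = ⊤
  · -- S is unbounded
    have hnb : ¬ BddAbove S := by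
      rintro ⟨b, hb⟩
      have : auxM μ φ e x ≤ ENNReal.ofReal b := by
        refine iSup_le fun n => ?_
        by_cases hx : x ∈ e n
        · rw [indicator_of_mem hx]
          exact ENNReal.ofReal_le_ofReal (hb ⟨n, hx, rfl⟩)
        · rw [indicator_of_notMem hx]
          exact zero_le
      exact absurd htop (ne_top_of_le_ne_top ENNReal.ofReal_ne_top this)
    rw [hmax, Real.sSup_of_not_bddAbove hnb, htop, ENNReal.toReal_top]
  · -- S is bounded, sup agrees
    have hbdd : BddAbove S := by
      refine ⟨(auxM μ φ e x).toReal, ?_⟩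
      rintro r ⟨n, hxn, rfl⟩
      exact bounded_of_auxM_ne_top htop hxn
    have hup : auxM μ φ e x ≤ ENNReal.ofReal (sSup S) := by
      refine iSup_le fun n => ?_
      by_cases hx : x ∈ e n
      · rw [indicator_of_mem hx]
        exact ENNReal.ofReal_le_ofReal (le_csSup hbdd ⟨n, hx, rfl⟩)
      · rw [indicator_of_notMem hx]
        exact zero_le
    obtain ⟨r₀, hr₀⟩ := hSne
    have hSne' : S.Nonempty := ⟨r₀, hr₀⟩
    have hsup_nn : 0 ≤ sSup S := (hSnn r₀ hr₀).trans (le_csSup hbdd hr₀)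
    have hlow : ENNReal.ofReal (sSup S) ≤ auxM μ φ e x := by
      by_contra hcon
      push_neg at hcon
      have h1 : (auxM μ φ e x).toReal < sSup S := by
        have h2 := ENNReal.toReal_strict_mono ENNReal.ofReal_ne_top hcon
        rwa [ENNReal.toReal_ofReal hsup_nn] at h2
      refine absurd (csSup_le hSne' fun r hr => ?_) (not_le.2 h1)
      obtain ⟨n, hxn, rfl⟩ := hr
      exact bounded_of_auxM_ne_top htop hxn
    rw [hmax, le_antisymm hup hlow, ENNReal.toReal_ofReal hsup_nn]


/-- The exceptional set `A_φ`. -/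
def trBad (μ : Measure X) (T : DTree X μ) (φ : X → ℝ) : Set X :=
  {x | ∀ I ∈ T.mem, x ∈ I → trAvg μ φ I < trMax μ T φ x}

/-- `φ` is `T`-good if the exceptional set `A_φ` is null. -/
def TGood (μ : Measure X) (T : DTree X μ) (φ : X → ℝ) : Prop :=
  μ (trBad μ T φ) = 0

/-- The set `A(φ, I) = {x ∈ X \ A_φ : I_φ(x) = I}`, where `I_φ(x)` is the largest
element `I` of the tree with `x ∈ I` and `M_T φ x = Av_I(φ)`. -/
def trA (μ : Measure X) (T : DTree X μ) (φ : X → ℝ) (I : Set X) : Set X :=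
  {x | x ∉ trBad μ T φ ∧ I ∈ T.mem ∧ x ∈ I ∧ trMax μ T φ x = trAvg μ φ I ∧
    ∀ J ∈ T.mem, x ∈ J → trMax μ T φ x = trAvg μ φ J → J ⊆ I}

/-- The subtree `S_φ`. -/
def trS (μ : Measure X) (T : DTree X μ) (φ : X → ℝ) : Set (Set X) :=
  {I | I ∈ T.mem ∧ 0 < μ (trA μ T φ I)} ∪ {Set.univ}

/-- `J* = I` : `I` is the smallest element of `S_φ` properly containing `J`. -/
def IsStarOf (μ : Measure X) (T : DTree X μ) (φ : X → ℝ) (J I : Set X) : Prop :=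
  I ∈ trS μ T φ ∧ J ⊂ I ∧ ∀ K ∈ trS μ T φ, J ⊂ K → I ⊆ K

/-- The constant `c = ω_q(((1-q)L^q + qL^(q-1)f)/h)`. -/
def bellC (q f h L : ℝ) : ℝ := funOmega q (((1 - q) * L ^ q + q * L ^ (q - 1) * f) / h)

/-- An extremal sequence for the Bellman function of three variables. -/
def IsExtremal (μ : Measure X) (T : DTree X μ) (q f h L : ℝ) (φ : ℕ → X → ℝ) : Prop :=
  (∀ n x, 0 ≤ φ n x) ∧ (∀ n, Measurable (φ n)) ∧ (∀ n, Integrable (φ n) μ) ∧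
  (∀ n, ∫ x, φ n x ∂μ = f) ∧ (∀ n, ∫ x, φ n x ^ q ∂μ = h) ∧
  Tendsto (fun n => ∫ x, (max (trMax μ T (φ n) x) L) ^ q ∂μ) atTop
    (nhds (bellC q f h L * h))

lemma perK_bound {μ : Measure X} [IsProbabilityMeasure μ] {φ : X → ℝ}
    (h0 : ∀ x, 0 ≤ φ x) (hint : Integrable φ μ) {K : Set X} (hK : MeasurableSet K)
    {s : ℝ} (h : s ≤ trAvg μ φ K) :
    ENNReal.ofReal s * μ K ≤ (μ.withDensity fun x => ENNReal.ofReal (φ x)) K := by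
  rw [withDensity_apply _ hK]
  by_cases hK0 : μ K = 0
  · rw [hK0, mul_zero]
    exact zero_le
  · have hKfin : μ K ≠ ⊤ := measure_ne_top μ K
    have htR : (μ K).toReal ≠ 0 := by
      simp [ENNReal.toReal_eq_zero_iff, hK0, hKfin]
    have key : ENNReal.ofReal (∫ x in K, φ x ∂μ) = ∫⁻ x in K, ENNReal.ofReal (φ x) ∂μ :=
      ofReal_integral_eq_lintegral_ofReal hint.integrableOn (ae_of_all _ h0)
    calc ENNReal.ofReal s * μ K ≤ ENNReal.ofReal (trAvg μ φ K) * μ K :=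
        mul_le_mul_left (ENNReal.ofReal_le_ofReal h) _
      _ = ENNReal.ofReal (trAvg μ φ K * (μ K).toReal) := by
          rw [ENNReal.ofReal_mul (trAvg_nonneg h0 K), ENNReal.ofReal_toReal hKfin]
      _ = ENNReal.ofReal (∫ x in K, φ x ∂μ) := by
          rw [trAvg]
          congr 1
          field_simp
      _ = _ := key

lemma cover_bound {μ : Measure X} [IsProbabilityMeasure μ] (T : DTree X μ) {φ : X → ℝ}
    (h0 : ∀ x, 0 ≤ φ x) (hint : Integrable φ μ) {s : ℝ}
    {W : Set (Set X)} (hWsub : W ⊆ T.mem) (havg : ∀ K ∈ W, s ≤ trAvg μ φ K)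
    (hWd : W.Pairwise Disjoint) :
    ENNReal.ofReal s * μ (⋃₀ W) ≤ (μ.withDensity fun x => ENNReal.ofReal (φ x)) (⋃₀ W) := by
  have hWc : W.Countable := T.countable_mem.mono hWsub
  have hmeas : ∀ K ∈ W, MeasurableSet K := fun K hK => T.meas K (hWsub hK)
  rw [measure_sUnion hWc hWd hmeas, measure_sUnion hWc hWd hmeas, ← ENNReal.tsum_mul_left]
  exact ENNReal.tsum_le_tsum fun K =>
    perK_bound h0 hint (hmeas K.1 K.2) (havg K.1 K.2)

lemma maximal_pairwise (T : DTree X μ) {D : Set (Set X)} (hD : D ⊆ T.mem) :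
    ({K | K ∈ D ∧ ∀ J ∈ D, ¬ K ⊂ J}).Pairwise Disjoint := by
  intro K hK K' hK' hne
  by_contra hd
  rcases T.comparable (hD hK.1) (hD hK'.1) hd with h | h
  · exact hK.2 K' hK'.1 (h.ssubset_of_ne hne)
  · exact hK'.2 K hK.1 (h.ssubset_of_ne (Ne.symm hne))

lemma subset_maximal (T : DTree X μ) {D : Set (Set X)} (hD : D ⊆ T.mem) {K : Set X}
    (hK : K ∈ D) : ∃ K' ∈ {K | K ∈ D ∧ ∀ J ∈ D, ¬ K ⊂ J}, K ⊆ K' := by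
  obtain ⟨K', hK', hsub, hmax⟩ := T.exists_maximal D hD K hK
  exact ⟨K', ⟨hK', hmax⟩, hsub⟩

lemma wd_univ {μ : Measure X} {φ : X → ℝ} (h0 : ∀ x, 0 ≤ φ x) (hint : Integrable φ μ) :
    (μ.withDensity fun x => ENNReal.ofReal (φ x)) Set.univ = ENNReal.ofReal (∫ x, φ x ∂μ) := by
  rw [withDensity_apply _ MeasurableSet.univ, Measure.restrict_univ,
    ofReal_integral_eq_lintegral_ofReal hint (ae_of_all _ h0)]

lemma auxM_top_null {μ : Measure X} [IsProbabilityMeasure μ] (T : DTree X μ) {φ : X → ℝ}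
    (h0 : ∀ x, 0 ≤ φ x) (hint : Integrable φ μ) (e : ℕ → Set X) (he : T.mem = Set.range e) :
    μ {x | auxM μ φ e x = ⊤} = 0 := by
  set N := {x | auxM μ φ e x = ⊤} with hN
  set C := ∫ x, φ x ∂μ with hC
  have hC0 : 0 ≤ C := integral_nonneg h0
  have key : ∀ r : ℝ, ENNReal.ofReal r * μ N ≤ ENNReal.ofReal C := by
    intro r
    set D := {K | K ∈ T.mem ∧ r < trAvg μ φ K} with hD
    have hDsub : D ⊆ T.mem := fun K hK => hK.1
    set Dm := {K | K ∈ D ∧ ∀ J ∈ D, ¬ K ⊂ J} with hDm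
    have hDmsub : Dm ⊆ T.mem := fun K hK => hDsub hK.1
    have hNsub : N ⊆ ⋃₀ Dm := by
      intro x hx
      have hlt : ENNReal.ofReal r < auxM μ φ e x := by
        rw [hx]
        exact ENNReal.ofReal_lt_top
      obtain ⟨n, hxn, hravg⟩ := exists_of_lt_auxM hlt
      have henD : e n ∈ D := ⟨by rw [he]; exact Set.mem_range_self n, hravg⟩
      obtain ⟨K', hK', hsub⟩ := subset_maximal T hDsub henD
      exact ⟨K', hK', hsub hxn⟩
    calc ENNReal.ofReal r * μ N ≤ ENNReal.ofReal r * μ (⋃₀ Dm) :=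
        mul_le_mul_right (measure_mono hNsub) _
      _ ≤ (μ.withDensity fun x => ENNReal.ofReal (φ x)) (⋃₀ Dm) :=
        cover_bound T h0 hint hDmsub (fun K hK => hK.1.2.le) (maximal_pairwise T hDsub)
      _ ≤ (μ.withDensity fun x => ENNReal.ofReal (φ x)) Set.univ := measure_mono (subset_univ _)
      _ = ENNReal.ofReal C := wd_univ h0 hint
  by_contra hne
  have hfin : μ N ≠ ⊤ := measure_ne_top μ N
  have hpos : 0 < (μ N).toReal := ENNReal.toReal_pos hne hfin
  obtain ⟨n, hn⟩ := exists_nat_gt (C / (μ N).toReal)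
  have h1 := key n
  have h2 : (n : ℝ) * (μ N).toReal ≤ C := by
    have := ENNReal.toReal_mono ENNReal.ofReal_ne_top h1
    rwa [ENNReal.toReal_mul, ENNReal.toReal_ofReal (Nat.cast_nonneg n),
      ENNReal.toReal_ofReal hC0] at this
  rw [div_lt_iff₀ hpos] at hn
  linarith

/-- The combined `ℝ≥0∞`-valued function: maximal function off the atoms, atom averages on
the atoms. -/
def auxg (μ : Measure X) (φ : X → ℝ) (e : ℕ → Set X) {ι : Type*} (I : ι → Set X) : X → ℝ≥0∞ :=
  fun x => (⋃ j, I j)ᶜ.indicator (auxM μ φ e) x +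
    ⨆ j, (I j).indicator (fun _ => ENNReal.ofReal (trAvg μ φ (I j))) x

lemma auxg_measurable (μ : Measure X) (φ : X → ℝ) (e : ℕ → Set X) (he : ∀ n, MeasurableSet (e n))
    {ι : Type*} [Countable ι] (I : ι → Set X) (hI : ∀ j, MeasurableSet (I j)) :
    Measurable (auxg μ φ e I) :=
  Measurable.add ((auxM_measurable μ φ e he).indicator (MeasurableSet.iUnion hI).compl)
    (Measurable.iSup fun j => measurable_const.indicator (hI j))

lemma auxg_of_mem_E (μ : Measure X) (φ : X → ℝ) (e : ℕ → Set X) {ι : Type*} (I : ι → Set X)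
    {x : X} (hx : x ∈ (⋃ j, I j)ᶜ) : auxg μ φ e I x = auxM μ φ e x := by
  rw [auxg, indicator_of_mem hx]
  have h2 : (⨆ j, (I j).indicator (fun _ => ENNReal.ofReal (trAvg μ φ (I j))) x) = 0 := by
    refine le_antisymm (iSup_le fun j => ?_) (zero_le)
    rw [indicator_of_notMem (fun hxj => hx (Set.mem_iUnion.2 ⟨j, hxj⟩))]
  rw [h2, add_zero]

lemma auxg_of_atom (μ : Measure X) (φ : X → ℝ) (e : ℕ → Set X) {ι : Type*} {I : ι → Set X}
    (hdisj : Pairwise (Function.onFun Disjoint I)) {j : ι} {x : X} (hx : x ∈ I j) :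
    auxg μ φ e I x = ENNReal.ofReal (trAvg μ φ (I j)) := by
  have hxU : x ∈ ⋃ k, I k := Set.mem_iUnion.2 ⟨j, hx⟩
  rw [auxg, indicator_of_notMem (by simpa using hxU)]
  rw [zero_add]
  refine le_antisymm (iSup_le fun k => ?_) ?_
  · by_cases hxk : x ∈ I k
    · rcases eq_or_ne k j with rfl | hkj
      · rw [indicator_of_mem hxk]
      · exact absurd hx (Set.disjoint_left.1 (hdisj hkj) hxk)
    · rw [indicator_of_notMem hxk]
      exact zero_le
  · have := le_iSup (fun k => (I k).indicator (fun _ => ENNReal.ofReal (trAvg μ φ (I k))) x) j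
    rwa [indicator_of_mem hx] at this

lemma ge_auxg_atom (μ : Measure X) (φ : X → ℝ) (e : ℕ → Set X) {ι : Type*} (I : ι → Set X)
    {j : ι} {x : X} (hx : x ∈ I j) :
    ENNReal.ofReal (trAvg μ φ (I j)) ≤ auxg μ φ e I x := by
  refine le_add_of_nonneg_of_le (zero_le) ?_
  have := le_iSup (fun k => (I k).indicator (fun _ => ENNReal.ofReal (trAvg μ φ (I k))) x) j
  rwa [indicator_of_mem hx] at this

lemma atom_avg_le {μ : Measure X} (T : DTree X μ) {φ : X → ℝ} (h0 : ∀ x, 0 ≤ φ x)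
    {e : ℕ → Set X} (he : T.mem = Set.range e) {A : Set X}
    (hA : ∃ x', x' ∈ A ∧ auxM μ φ e x' ≠ ⊤ ∧ trMax μ T φ x' = trAvg μ φ A)
    {K : Set X} (hK : K ∈ T.mem) (hAK : A ⊆ K) : trAvg μ φ K ≤ trAvg μ φ A := by
  obtain ⟨x', hx'A, hfin, heq⟩ := hA
  obtain ⟨n, rfl⟩ : ∃ n, e n = K := by rw [he] at hK; exact hK
  have h1 : trAvg μ φ (e n) ≤ (auxM μ φ e x').toReal :=
    bounded_of_auxM_ne_top hfin (hAK hx'A)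
  rwa [← trMax_eq_toReal_auxM μ T φ h0 e he x', heq] at h1


lemma weak_bound {μ : Measure X} [IsProbabilityMeasure μ] (T : DTree X μ) {φ : X → ℝ}
    (h0 : ∀ x, 0 ≤ φ x) (hint : Integrable φ μ)
    {e : ℕ → Set X} (he : T.mem = Set.range e)
    {ι : Type*} (I : ι → Set X)
    (hImem : ∀ j, I j ∈ T.mem) (hdisj : Pairwise (Function.onFun Disjoint I))
    (hatom : ∀ j, ∃ x', x' ∈ I j ∧ auxM μ φ e x' ≠ ⊤ ∧ trMax μ T φ x' = trAvg μ φ (I j))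
    {s : ℝ} (hs : 0 < s) :
    ENNReal.ofReal s * μ {x | ENNReal.ofReal s < auxg μ φ e I x} ≤
      (μ.withDensity fun x => ENNReal.ofReal (φ x)) {x | ENNReal.ofReal s < auxg μ φ e I x} := by
  set A := {x | ENNReal.ofReal s < auxg μ φ e I x} with hA
  set N := {x | auxM μ φ e x = ⊤} with hNdef
  have hNnull : μ N = 0 := auxM_top_null T h0 hint e he
  set D := {K | K ∈ T.mem ∧ s < trAvg μ φ K} with hD
  have hDsub : D ⊆ T.mem := fun K hK => hK.1
  set Dm := {K | K ∈ D ∧ ∀ J ∈ D, ¬ K ⊂ J} with hDm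
  set Ds := {K | K ∈ Dm ∧ ∀ j, ¬ K ⊂ I j} with hDs
  have hDssub : Ds ⊆ T.mem := fun K hK => hDsub hK.1.1
  have hatom_ge : ∀ (j : ι) {K}, K ∈ D → I j ⊆ K → s < trAvg μ φ (I j) :=
    fun j K hK hsub => lt_of_lt_of_le hK.2 (atom_avg_le T h0 he (hatom j) hK.1 hsub)
  have hS1 : ⋃₀ Ds ⊆ A := by
    rintro x ⟨K, hK, hxK⟩
    have hKD : K ∈ D := hK.1.1
    by_cases hxE : x ∈ (⋃ j, I j)ᶜ
    · rw [hA, mem_setOf_eq, auxg_of_mem_E μ φ e I hxE]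
      obtain ⟨n, rfl⟩ : ∃ n, e n = K := by
        have := hDssub hK
        rwa [he] at this
      calc ENNReal.ofReal s < ENNReal.ofReal (trAvg μ φ (e n)) :=
            (ENNReal.ofReal_lt_ofReal_iff (hs.trans hKD.2)).2 hKD.2
        _ ≤ auxM μ φ e x := le_auxM μ φ e hxK
    · have hxU : x ∈ ⋃ j, I j := Set.notMem_compl_iff.1 hxE
      obtain ⟨j, hxj⟩ := mem_iUnion.1 hxU
      have hIjK : I j ⊆ K := by
        rcases T.comparable (hImem j) (hDssub hK) (Set.not_disjoint_iff.2 ⟨x, hxj, hxK⟩) with h | h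
        · exact h
        · rcases h.ssubset_or_eq with h' | h'
          · exact absurd h' (hK.2 j)
          · exact h'.ge
      have hyj : s < trAvg μ φ (I j) := hatom_ge j hKD hIjK
      rw [hA, mem_setOf_eq]
      calc ENNReal.ofReal s < ENNReal.ofReal (trAvg μ φ (I j)) :=
            (ENNReal.ofReal_lt_ofReal_iff (hs.trans hyj)).2 hyj
        _ ≤ auxg μ φ e I x := ge_auxg_atom μ φ e I hxj
  have hS2 : A \ N ⊆ ⋃₀ Ds := by
    rintro x ⟨hxA, hxN⟩
    by_cases hxE : x ∈ (⋃ j, I j)ᶜ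
    · rw [hA, mem_setOf_eq, auxg_of_mem_E μ φ e I hxE] at hxA
      obtain ⟨n, hxn, hsn⟩ := exists_of_lt_auxM hxA
      have henD : e n ∈ D := ⟨by rw [he]; exact Set.mem_range_self n, hsn⟩
      obtain ⟨K', hK', hsub⟩ := subset_maximal T hDsub henD
      refine ⟨K', ⟨hK', fun j hKj => ?_⟩, hsub hxn⟩
      exact hxE (mem_iUnion.2 ⟨j, hKj.1 (hsub hxn)⟩)
    · have hxU : x ∈ ⋃ j, I j := Set.notMem_compl_iff.1 hxE
      obtain ⟨j, hxj⟩ := mem_iUnion.1 hxU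
      rw [hA, mem_setOf_eq, auxg_of_atom μ φ e hdisj hxj] at hxA
      have hyj : s < trAvg μ φ (I j) := by
        by_contra hle
        exact absurd (ENNReal.ofReal_le_ofReal (not_lt.1 hle)) (not_le.2 hxA)
      have hjD : I j ∈ D := ⟨hImem j, hyj⟩
      obtain ⟨K', hK', hsub⟩ := subset_maximal T hDsub hjD
      refine ⟨K', ⟨hK', fun k hKk => ?_⟩, hsub hxj⟩
      rcases eq_or_ne k j with rfl | hkj
      · exact hKk.2 hsub
      · obtain ⟨y, hy⟩ := T.nonempty_of_mem (hImem j)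
        exact Set.disjoint_left.1 (hdisj (hkj.symm : j ≠ k)) hy (hKk.1 (hsub hy))
  calc ENNReal.ofReal s * μ A = ENNReal.ofReal s * μ (A \ N) := by
        rw [measure_diff_null hNnull]
    _ ≤ ENNReal.ofReal s * μ (⋃₀ Ds) := mul_le_mul_right (measure_mono hS2) _
    _ ≤ (μ.withDensity fun x => ENNReal.ofReal (φ x)) (⋃₀ Ds) :=
        cover_bound T h0 hint hDssub (fun K hK => hK.1.1.2.le)
          ((maximal_pairwise T hDsub).mono (fun K hK => hK.1))
    _ ≤ (μ.withDensity fun x => ENNReal.ofReal (φ x)) A := measure_mono hS1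


lemma lint_Ioo {q : ℝ} (hq0 : 0 < q) (hq1 : q < 1) {r : ℝ} (hr : 0 ≤ r) :
    ∫⁻ t in Set.Ioo 0 r, ENNReal.ofReal (q * t ^ (q - 1)) = ENNReal.ofReal (r ^ q) := by
  have h1 : IntervalIntegrable (fun t : ℝ => t ^ (q - 1)) volume 0 r :=
    intervalIntegral.intervalIntegrable_rpow' (by linarith)
  have hInt : IntegrableOn (fun t => q * t ^ (q - 1)) (Set.Ioo 0 r) := by
    have h2 : IntegrableOn (fun t : ℝ => t ^ (q - 1)) (Set.Ioc 0 r) := by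
      simpa [intervalIntegrable_iff_integrableOn_Ioc_of_le hr] using h1
    exact (h2.mono_set Set.Ioo_subset_Ioc_self).const_mul q
  have hnn : 0 ≤ᵐ[volume.restrict (Set.Ioo 0 r)] fun t => q * t ^ (q - 1) := by
    refine (ae_restrict_iff' measurableSet_Ioo).2 (ae_of_all _ fun t ht => ?_)
    exact mul_nonneg hq0.le (Real.rpow_nonneg ht.1.le _)
  rw [← ofReal_integral_eq_lintegral_ofReal hInt hnn]
  congr 1
  have h3 : ∫ t in Set.Ioo 0 r, q * t ^ (q - 1) = ∫ t in (0:ℝ)..r, q * t ^ (q - 1) := by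
    rw [intervalIntegral.integral_of_le hr, integral_Ioc_eq_integral_Ioo]
  rw [h3, intervalIntegral.integral_const_mul, integral_rpow (Or.inl (by linarith))]
  have h4 : q - 1 + 1 = q := by ring
  rw [h4, Real.zero_rpow (ne_of_gt hq0)]
  field_simp
  simp

lemma lint_Ioi {q : ℝ} (hq0 : 0 < q) (hq1 : q < 1) {r : ℝ} (hr : 0 < r) :
    ∫⁻ t in Set.Ioi r, ENNReal.ofReal ((1 - q) * t ^ (q - 2)) = ENNReal.ofReal (r ^ (q - 1)) := by
  have hInt : IntegrableOn (fun t => (1 - q) * t ^ (q - 2)) (Set.Ioi r) :=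
    (integrableOn_Ioi_rpow_of_lt (by linarith) hr).const_mul (1 - q)
  have hnn : 0 ≤ᵐ[volume.restrict (Set.Ioi r)] fun t => (1 - q) * t ^ (q - 2) := by
    refine (ae_restrict_iff' measurableSet_Ioi).2 (ae_of_all _ fun t ht => ?_)
    have htpos : (0:ℝ) < t := hr.trans ht
    exact mul_nonneg (by linarith) (Real.rpow_nonneg htpos.le _)
  rw [← ofReal_integral_eq_lintegral_ofReal hInt hnn]
  congr 1
  rw [MeasureTheory.integral_const_mul, integral_Ioi_rpow_of_lt (by linarith) hr]
  have h4 : q - 2 + 1 = q - 1 := by ring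
  rw [h4]
  have hne1 : q - 1 ≠ 0 := by linarith
  rw [show (1 - q) * (-r ^ (q - 1) / (q - 1)) = r ^ (q - 1) * ((q - 1)⁻¹ * (q - 1)) by ring,
    inv_mul_cancel₀ hne1, mul_one]

lemma pc1 {q : ℝ} (hq0 : 0 < q) (hq1 : q < 1) (b : ℝ≥0∞) :
    b ^ q = ∫⁻ t in Set.Ioi (0:ℝ),
      {t : ℝ | ENNReal.ofReal t < b}.indicator (fun t => ENNReal.ofReal (q * t ^ (q - 1))) t := by
  have hSm : MeasurableSet {t : ℝ | ENNReal.ofReal t < b} :=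
    measurableSet_lt (ENNReal.measurable_ofReal.comp measurable_id) measurable_const
  rw [lintegral_indicator hSm, Measure.restrict_restrict hSm]
  rcases eq_or_ne b ⊤ with rfl | hne
  · have hset : {t : ℝ | ENNReal.ofReal t < ⊤} ∩ Set.Ioi 0 = Set.Ioi 0 := by
      ext t; simp [ENNReal.ofReal_lt_top]
    rw [hset, ENNReal.top_rpow_of_pos hq0]
    by_contra htop
    have hfin : ∫⁻ t in Set.Ioi (0:ℝ), ENNReal.ofReal (q * t ^ (q - 1)) ≠ ⊤ := fun h => htop h.symm
    have hle : ∀ r : ℝ, 0 ≤ r → ENNReal.ofReal (r ^ q) ≤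
        ∫⁻ t in Set.Ioi (0:ℝ), ENNReal.ofReal (q * t ^ (q - 1)) := by
      intro r hrr
      rw [← lint_Ioo hq0 hq1 hrr]
      exact lintegral_mono_set (fun t ht => ht.1)
    set Z := (∫⁻ t in Set.Ioi (0:ℝ), ENNReal.ofReal (q * t ^ (q - 1))).toReal with hZ
    set r := (Z + 1) ^ (1 / q) with hrdef
    have hrnn : 0 ≤ r := Real.rpow_nonneg (by positivity) _
    have hrq : r ^ q = Z + 1 := by
      rw [hrdef, ← Real.rpow_mul (by positivity), one_div, inv_mul_cancel₀ (ne_of_gt hq0),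
        Real.rpow_one]
    have := ENNReal.toReal_mono hfin (hle r hrnn)
    rw [ENNReal.toReal_ofReal (by positivity), hrq] at this
    linarith
  · set r := b.toReal with hrdef
    have hb : b = ENNReal.ofReal r := (ENNReal.ofReal_toReal hne).symm
    have hset : {t : ℝ | ENNReal.ofReal t < b} ∩ Set.Ioi 0 = Set.Ioo 0 r := by
      ext t
      constructor
      · rintro ⟨ht1, ht2⟩
        rw [mem_setOf_eq, hb] at ht1
        exact ⟨ht2, (ENNReal.ofReal_lt_ofReal_iff_of_nonneg (le_of_lt ht2)).1 ht1⟩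
      · rintro ⟨ht1, ht2⟩
        refine ⟨?_, ht1⟩
        rw [mem_setOf_eq, hb]
        exact (ENNReal.ofReal_lt_ofReal_iff_of_nonneg (le_of_lt ht1)).2 ht2
    rw [hset, lint_Ioo hq0 hq1 ENNReal.toReal_nonneg, hb,
      ENNReal.ofReal_rpow_of_nonneg ENNReal.toReal_nonneg hq0.le,
      ENNReal.toReal_ofReal ENNReal.toReal_nonneg]

lemma pc2 {q : ℝ} (hq0 : 0 < q) (hq1 : q < 1) {b : ℝ≥0∞} (hb : b ≠ 0) :
    b ^ (q - 1) = ∫⁻ t in Set.Ioi (0:ℝ),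
      {t : ℝ | b < ENNReal.ofReal t}.indicator (fun t => ENNReal.ofReal ((1 - q) * t ^ (q - 2))) t := by
  have hSm : MeasurableSet {t : ℝ | b < ENNReal.ofReal t} :=
    measurableSet_lt measurable_const (ENNReal.measurable_ofReal.comp measurable_id)
  rw [lintegral_indicator hSm, Measure.restrict_restrict hSm]
  rcases eq_or_ne b ⊤ with rfl | hne
  · have hset : {t : ℝ | (⊤:ℝ≥0∞) < ENNReal.ofReal t} ∩ Set.Ioi 0 = ∅ := by
      ext t
      simp only [mem_inter_iff, mem_setOf_eq, mem_empty_iff_false, iff_false]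
      rintro ⟨h, -⟩
      exact absurd h (not_lt.2 le_top)
    rw [hset, ENNReal.top_rpow_of_neg (by linarith)]
    simp
  · set r := b.toReal with hrdef
    have hrpos : 0 < r := ENNReal.toReal_pos hb hne
    have hbr : b = ENNReal.ofReal r := (ENNReal.ofReal_toReal hne).symm
    have hset : {t : ℝ | b < ENNReal.ofReal t} ∩ Set.Ioi 0 = Set.Ioi r := by
      ext t
      constructor
      · rintro ⟨ht1, ht2⟩
        rw [mem_setOf_eq, hbr] at ht1
        by_contra hle
        rw [mem_Ioi, not_lt] at hle
        exact absurd (ENNReal.ofReal_le_ofReal hle) (not_le.2 ht1)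
      · intro ht
        refine ⟨?_, hrpos.trans ht⟩
        rw [mem_setOf_eq, hbr]
        exact (ENNReal.ofReal_lt_ofReal_iff_of_nonneg hrpos.le).2 ht
    rw [hset, lint_Ioi hq0 hq1 hrpos, hbr, ENNReal.ofReal_rpow_of_pos hrpos]

lemma tangent_line {q : ℝ} (hq0 : 0 < q) (hq1 : q < 1) {z t : ℝ} (hz : 0 ≤ z) (ht : 0 < t) :
    z ^ q ≤ q * t ^ (q - 1) * z + (1 - q) * t ^ q := by
  rcases eq_or_lt_of_le hz with rfl | hzpos
  · rw [Real.zero_rpow (ne_of_gt hq0)]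
    have h1 : 0 ≤ t ^ q := Real.rpow_nonneg ht.le _
    nlinarith [Real.rpow_nonneg ht.le (q - 1)]
  · set u := z / t with hu
    have hupos : 0 < u := div_pos hzpos ht
    have key := Real.geom_mean_le_arith_mean2_weighted hq0.le (by linarith : (0:ℝ) ≤ 1 - q)
      hupos.le zero_le_one (by ring : q + (1 - q) = 1)
    have h2 : u ^ q ≤ q * u + (1 - q) := by
      simpa [Real.one_rpow] using key
    have ht' : t ^ (q - 1) * t = t ^ q := by
      rw [← Real.rpow_add_one (ne_of_gt ht) (q - 1)]
      norm_num
    have hz' : u * t = z := div_mul_cancel₀ z (ne_of_gt ht)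
    calc z ^ q = (u * t) ^ q := by rw [hz']
      _ = u ^ q * t ^ q := Real.mul_rpow hupos.le ht.le
      _ ≤ (q * u + (1 - q)) * t ^ q := by
          exact mul_le_mul_of_nonneg_right h2 (Real.rpow_nonneg ht.le _)
      _ = q * t ^ (q - 1) * z + (1 - q) * t ^ q := by
          rw [← hz', ← ht']
          ring


lemma kl_bound {μ : Measure X} [IsProbabilityMeasure μ]
    (T : DTree X μ) {φ : X → ℝ}
    (h0 : ∀ x, 0 ≤ φ x) (hint : Integrable φ μ)
    {q : ℝ} (hq0 : 0 < q) (hq1 : q < 1)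
    {e : ℕ → Set X} (he : T.mem = Set.range e)
    {ι : Type*} [Countable ι] {I : ι → Set X}
    (hImem : ∀ j, I j ∈ T.mem) (hdisj : Pairwise (Function.onFun Disjoint I))
    (hatom : ∀ j, ∃ x', x' ∈ I j ∧ auxM μ φ e x' ≠ ⊤ ∧ trMax μ T φ x' = trAvg μ φ (I j))
    (hfpos : 0 < ∫ x, φ x ∂μ) {φm : X → ℝ} (hφm : Measurable φm) (hφae : φ =ᵐ[μ] φm) :
    ENNReal.ofReal (1 - q) * (∫⁻ x, (auxg μ φ e I x) ^ q ∂μ)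
      + ENNReal.ofReal q * (∫⁻ x, ENNReal.ofReal (φm x) * (auxg μ φ e I x) ^ (q - 1) ∂μ)
      ≤ ENNReal.ofReal ((∫ x, φ x ∂μ) ^ q) := by
  classical
  set f := ∫ x, φ x ∂μ with hfdef
  set g := auxg μ φ e I with hgdef
  set Φ := fun x => ENNReal.ofReal (φm x) with hΦdef
  have hem : ∀ n, MeasurableSet (e n) := fun n => T.meas _ (by rw [he]; exact Set.mem_range_self n)
  have hIm : ∀ j, MeasurableSet (I j) := fun j => T.meas _ (hImem j)
  have hgm : Measurable g := auxg_measurable μ φ e hem I hIm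
  have hΦm : Measurable Φ := ENNReal.measurable_ofReal.comp hφm
  have htravg_univ : trAvg μ φ Set.univ = f := by
    rw [trAvg, measure_univ, ENNReal.toReal_one, inv_one, one_mul, Measure.restrict_univ]
  have hglb : ∀ x, ENNReal.ofReal f ≤ g x := by
    intro x
    by_cases hxE : x ∈ (⋃ j, I j)ᶜ
    · rw [hgdef, auxg_of_mem_E μ φ e I hxE]
      obtain ⟨n, hn⟩ : ∃ n, e n = Set.univ := by
        have h := T.top_mem
        rw [he] at h
        exact h
      have h2 := le_auxM μ φ e (show x ∈ e n by rw [hn]; trivial)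
      rwa [hn, htravg_univ] at h2
    · obtain ⟨j, hxj⟩ := Set.mem_iUnion.1 (Set.notMem_compl_iff.1 hxE)
      have h1 : trAvg μ φ Set.univ ≤ trAvg μ φ (I j) :=
        atom_avg_le T h0 he (hatom j) T.top_mem (Set.subset_univ _)
      calc ENNReal.ofReal f ≤ ENNReal.ofReal (trAvg μ φ (I j)) :=
            ENNReal.ofReal_le_ofReal (htravg_univ ▸ h1)
        _ ≤ g x := ge_auxg_atom μ φ e I hxj
  have hg0 : ∀ x, g x ≠ 0 := by
    intro x h
    exact (ENNReal.ofReal_pos.2 hfpos).ne' (le_antisymm (h ▸ hglb x) (zero_le))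
  set wd := μ.withDensity (fun x => ENNReal.ofReal (φ x)) with hwddef
  have hwdm : wd = μ.withDensity Φ :=
    withDensity_congr_ae (hφae.mono fun x hx => by dsimp only; rw [hx])
  have hwd_univ : wd Set.univ = ENNReal.ofReal f := wd_univ h0 hint
  have hweak : ∀ t : ℝ, 0 < t →
      ENNReal.ofReal t * μ {x | ENNReal.ofReal t < g x} ≤ wd {x | ENNReal.ofReal t < g x} :=
    fun t ht => weak_bound T h0 hint he I hImem hdisj hatom ht
  set F : X → ℝ → ℝ≥0∞ := fun x t =>
    {p : X × ℝ | ENNReal.ofReal p.2 < g p.1}.indicator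
        (fun p => ENNReal.ofReal ((1 - q) * (q * p.2 ^ (q - 1)))) (x, t)
      + {p : X × ℝ | g p.1 < ENNReal.ofReal p.2}.indicator
        (fun p => Φ p.1 * ENNReal.ofReal (q * ((1 - q) * p.2 ^ (q - 2)))) (x, t) with hFdef
  have hS1m : MeasurableSet {p : X × ℝ | ENNReal.ofReal p.2 < g p.1} :=
    measurableSet_lt (ENNReal.measurable_ofReal.comp measurable_snd) (hgm.comp measurable_fst)
  have hS2m : MeasurableSet {p : X × ℝ | g p.1 < ENNReal.ofReal p.2} :=
    measurableSet_lt (hgm.comp measurable_fst) (ENNReal.measurable_ofReal.comp measurable_snd)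
  have hc1m : Measurable fun p : X × ℝ => ENNReal.ofReal ((1 - q) * (q * p.2 ^ (q - 1))) :=
    ENNReal.measurable_ofReal.comp
      (((measurable_snd.pow measurable_const).const_mul q).const_mul (1 - q))
  have hc2m : Measurable fun p : X × ℝ => Φ p.1 * ENNReal.ofReal (q * ((1 - q) * p.2 ^ (q - 2))) :=
    (hΦm.comp measurable_fst).mul
      (ENNReal.measurable_ofReal.comp
        (((measurable_snd.pow measurable_const).const_mul (1 - q)).const_mul q))
  have hFum : Measurable (Function.uncurry F) :=
    (hc1m.indicator hS1m).add (hc2m.indicator hS2m)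
  -- inner t-integral
  have hinner : ∀ x, (∫⁻ t in Set.Ioi (0:ℝ), F x t) =
      ENNReal.ofReal (1 - q) * g x ^ q + ENNReal.ofReal q * (Φ x * g x ^ (q - 1)) := by
    intro x
    have hsm : MeasurableSet {t : ℝ | ENNReal.ofReal t < g x} :=
      measurableSet_lt ENNReal.measurable_ofReal measurable_const
    have hsect1 : ∀ t : ℝ, {p : X × ℝ | ENNReal.ofReal p.2 < g p.1}.indicator
        (fun p => ENNReal.ofReal ((1 - q) * (q * p.2 ^ (q - 1)))) (x, t)
        = ENNReal.ofReal (1 - q) *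
          ({t : ℝ | ENNReal.ofReal t < g x}.indicator
            (fun t => ENNReal.ofReal (q * t ^ (q - 1))) t) := by
      intro t
      by_cases hc : ENNReal.ofReal t < g x
      · rw [Set.indicator_of_mem (show (x, t) ∈ _ from hc),
          Set.indicator_of_mem (show t ∈ _ from hc), ← ENNReal.ofReal_mul (by linarith)]
      · rw [Set.indicator_of_notMem (show (x, t) ∉ _ from hc),
          Set.indicator_of_notMem (show t ∉ _ from hc), mul_zero]
    have hsect2 : ∀ t : ℝ, {p : X × ℝ | g p.1 < ENNReal.ofReal p.2}.indicator
        (fun p => Φ p.1 * ENNReal.ofReal (q * ((1 - q) * p.2 ^ (q - 2)))) (x, t)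
        = (Φ x * ENNReal.ofReal q) *
          ({t : ℝ | g x < ENNReal.ofReal t}.indicator
            (fun t => ENNReal.ofReal ((1 - q) * t ^ (q - 2))) t) := by
      intro t
      by_cases hc : g x < ENNReal.ofReal t
      · rw [Set.indicator_of_mem (show (x, t) ∈ _ from hc),
          Set.indicator_of_mem (show t ∈ _ from hc), ENNReal.ofReal_mul hq0.le, mul_assoc]
      · rw [Set.indicator_of_notMem (show (x, t) ∉ _ from hc),
          Set.indicator_of_notMem (show t ∉ _ from hc), mul_zero]
    simp_rw [hFdef, hsect1, hsect2]
    rw [lintegral_add_left (by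
        exact ((ENNReal.measurable_ofReal.comp
          ((measurable_id.pow measurable_const).const_mul q)).indicator hsm).const_mul _),
      lintegral_const_mul' _ _ ENNReal.ofReal_ne_top,
      lintegral_const_mul' _ _ (by
        exact ENNReal.mul_ne_top (ENNReal.ofReal_ne_top) ENNReal.ofReal_ne_top),
      ← pc1 hq0 hq1 (g x), ← pc2 hq0 hq1 (hg0 x)]
    ring
  have hswap : (∫⁻ x, (∫⁻ t in Set.Ioi (0:ℝ), F x t) ∂μ)
      = ∫⁻ t in Set.Ioi (0:ℝ), (∫⁻ x, F x t ∂μ) :=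
    lintegral_lintegral_swap hFum.aemeasurable
  have hout : ∀ t : ℝ, (∫⁻ x, F x t ∂μ) =
      ENNReal.ofReal ((1 - q) * (q * t ^ (q - 1))) * μ {x | ENNReal.ofReal t < g x}
        + ENNReal.ofReal (q * ((1 - q) * t ^ (q - 2))) * wd {x | g x < ENNReal.ofReal t} := by
    intro t
    have hs1 : MeasurableSet {x | ENNReal.ofReal t < g x} := measurableSet_lt measurable_const hgm
    have hs2 : MeasurableSet {x | g x < ENNReal.ofReal t} := measurableSet_lt hgm measurable_const
    have e1 : ∀ x, {p : X × ℝ | ENNReal.ofReal p.2 < g p.1}.indicator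
        (fun p => ENNReal.ofReal ((1 - q) * (q * p.2 ^ (q - 1)))) (x, t)
        = {x | ENNReal.ofReal t < g x}.indicator
            (fun _ => ENNReal.ofReal ((1 - q) * (q * t ^ (q - 1)))) x := by
      intro x
      by_cases hc : ENNReal.ofReal t < g x
      · rw [Set.indicator_of_mem (show (x, t) ∈ _ from hc),
          Set.indicator_of_mem (show x ∈ _ from hc)]
      · rw [Set.indicator_of_notMem (show (x, t) ∉ _ from hc),
          Set.indicator_of_notMem (show x ∉ _ from hc)]
    have e2 : ∀ x, {p : X × ℝ | g p.1 < ENNReal.ofReal p.2}.indicator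
        (fun p => Φ p.1 * ENNReal.ofReal (q * ((1 - q) * p.2 ^ (q - 2)))) (x, t)
        = {x | g x < ENNReal.ofReal t}.indicator
            (fun x => ENNReal.ofReal (q * ((1 - q) * t ^ (q - 2))) * Φ x) x := by
      intro x
      by_cases hc : g x < ENNReal.ofReal t
      · rw [Set.indicator_of_mem (show (x, t) ∈ _ from hc),
          Set.indicator_of_mem (show x ∈ _ from hc), mul_comm]
      · rw [Set.indicator_of_notMem (show (x, t) ∉ _ from hc),
          Set.indicator_of_notMem (show x ∉ _ from hc)]
    simp_rw [hFdef, e1, e2]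
    rw [lintegral_add_left (by exact measurable_const.indicator hs1),
      lintegral_indicator hs1, lintegral_indicator hs2, setLIntegral_const,
      lintegral_const_mul' _ _ ENNReal.ofReal_ne_top, hwdm, withDensity_apply Φ hs2]
  have hbound : ∀ t : ℝ, t ∈ Set.Ioi (0:ℝ) → (∫⁻ x, F x t ∂μ) ≤
      (Set.Ioc (0:ℝ) f).indicator (fun t => ENNReal.ofReal ((1 - q) * (q * t ^ (q - 1)))) t
        + (Set.Ioi f).indicator
            (fun t => ENNReal.ofReal (q * ((1 - q) * t ^ (q - 2))) * ENNReal.ofReal f) t := by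
    intro t ht
    rw [hout t]
    rcases le_or_gt t f with htf | htf
    · have hempty : {x | g x < ENNReal.ofReal t} = ∅ := by
        refine Set.eq_empty_iff_forall_notMem.2 fun x hx => ?_
        exact absurd hx (not_lt.2 ((ENNReal.ofReal_le_ofReal htf).trans (hglb x)))
      have hIoi : t ∉ Set.Ioi f := fun hc => absurd htf (not_le.2 hc)
      rw [hempty, measure_empty, mul_zero, add_zero,
        Set.indicator_of_mem (show t ∈ Set.Ioc (0:ℝ) f from ⟨ht, htf⟩),
        Set.indicator_of_notMem hIoi, add_zero]
      calc ENNReal.ofReal ((1 - q) * (q * t ^ (q - 1))) * μ {x | ENNReal.ofReal t < g x}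
          ≤ ENNReal.ofReal ((1 - q) * (q * t ^ (q - 1))) * 1 :=
            mul_le_mul_right prob_le_one _
        _ = _ := mul_one _
    · have hIoc : t ∉ Set.Ioc (0:ℝ) f := fun hc => absurd hc.2 (not_le.2 htf)
      rw [Set.indicator_of_notMem hIoc, zero_add,
        Set.indicator_of_mem (show t ∈ Set.Ioi f from htf)]
      have htpos : (0:ℝ) < t := ht
      have hrp : t ^ (q - 2) * t = t ^ (q - 1) := by
        rw [← Real.rpow_add_one (ne_of_gt htpos) (q - 2)]
        congr 1
        ring
      have hfac : ENNReal.ofReal ((1 - q) * (q * t ^ (q - 1)))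
          = ENNReal.ofReal (q * ((1 - q) * t ^ (q - 2))) * ENNReal.ofReal t := by
        rw [← ENNReal.ofReal_mul
          (mul_nonneg hq0.le (mul_nonneg (by linarith) (Real.rpow_nonneg htpos.le _)))]
        congr 1
        rw [← hrp]
        ring
      have hdisjsets : Disjoint {x | ENNReal.ofReal t < g x} {x | g x < ENNReal.ofReal t} := by
        rw [Set.disjoint_left]
        intro x hx1 hx2
        have h1 : ENNReal.ofReal t < g x := hx1
        have h2 : g x < ENNReal.ofReal t := hx2
        exact lt_asymm h1 h2
      have hs1 : MeasurableSet {x | g x < ENNReal.ofReal t} := measurableSet_lt hgm measurable_const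
      calc ENNReal.ofReal ((1 - q) * (q * t ^ (q - 1))) * μ {x | ENNReal.ofReal t < g x}
            + ENNReal.ofReal (q * ((1 - q) * t ^ (q - 2))) * wd {x | g x < ENNReal.ofReal t}
          = ENNReal.ofReal (q * ((1 - q) * t ^ (q - 2)))
              * (ENNReal.ofReal t * μ {x | ENNReal.ofReal t < g x})
            + ENNReal.ofReal (q * ((1 - q) * t ^ (q - 2))) * wd {x | g x < ENNReal.ofReal t} := by
            rw [hfac]; ring
        _ ≤ ENNReal.ofReal (q * ((1 - q) * t ^ (q - 2))) * wd {x | ENNReal.ofReal t < g x}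
            + ENNReal.ofReal (q * ((1 - q) * t ^ (q - 2))) * wd {x | g x < ENNReal.ofReal t} := by
            exact add_le_add_left (mul_le_mul_right (hweak t htpos) _) _
        _ = ENNReal.ofReal (q * ((1 - q) * t ^ (q - 2)))
              * (wd ({x | ENNReal.ofReal t < g x} ∪ {x | g x < ENNReal.ofReal t})) := by
            rw [measure_union hdisjsets hs1, mul_add]
        _ ≤ ENNReal.ofReal (q * ((1 - q) * t ^ (q - 2))) * wd Set.univ :=
            mul_le_mul_right (measure_mono (Set.subset_univ _)) _
        _ = ENNReal.ofReal (q * ((1 - q) * t ^ (q - 2))) * ENNReal.ofReal f := by rw [hwd_univ]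
  have hB1 : (∫⁻ t in Set.Ioi (0:ℝ),
      (Set.Ioc (0:ℝ) f).indicator (fun t => ENNReal.ofReal ((1 - q) * (q * t ^ (q - 1)))) t)
      = ENNReal.ofReal (1 - q) * ENNReal.ofReal (f ^ q) := by
    rw [lintegral_indicator measurableSet_Ioc, Measure.restrict_restrict measurableSet_Ioc,
      Set.inter_eq_self_of_subset_left Set.Ioc_subset_Ioi_self,
      setLIntegral_congr (MeasureTheory.Ioo_ae_eq_Ioc (a := (0:ℝ)) (b := f)).symm]
    simp_rw [ENNReal.ofReal_mul (show (0:ℝ) ≤ 1 - q by linarith)]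
    rw [lintegral_const_mul' _ _ ENNReal.ofReal_ne_top, lint_Ioo hq0 hq1 hfpos.le]
  have hB2 : (∫⁻ t in Set.Ioi (0:ℝ),
      (Set.Ioi f).indicator
        (fun t => ENNReal.ofReal (q * ((1 - q) * t ^ (q - 2))) * ENNReal.ofReal f) t)
      = ENNReal.ofReal q * ENNReal.ofReal (f ^ (q - 1)) * ENNReal.ofReal f := by
    rw [lintegral_indicator measurableSet_Ioi, Measure.restrict_restrict measurableSet_Ioi,
      Set.inter_eq_self_of_subset_left (Set.Ioi_subset_Ioi hfpos.le)]
    simp_rw [ENNReal.ofReal_mul hq0.le, mul_assoc]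
    rw [lintegral_const_mul' _ _ ENNReal.ofReal_ne_top,
      lintegral_mul_const' _ _ ENNReal.ofReal_ne_top, lint_Ioi hq0 hq1 hfpos, ← mul_assoc]
  -- assemble everything
  have hLHS : ENNReal.ofReal (1 - q) * (∫⁻ x, g x ^ q ∂μ)
      + ENNReal.ofReal q * (∫⁻ x, Φ x * g x ^ (q - 1) ∂μ)
      = ∫⁻ x, (∫⁻ t in Set.Ioi (0:ℝ), F x t) ∂μ := by
    rw [← lintegral_const_mul' _ _ (ENNReal.ofReal_ne_top (r := 1 - q)),
      ← lintegral_const_mul' _ _ (ENNReal.ofReal_ne_top (r := q)),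
      ← lintegral_add_left (by exact (hgm.pow measurable_const).const_mul _)]
    exact (lintegral_congr hinner).symm
  have hsum : (∫⁻ t in Set.Ioi (0:ℝ),
      ((Set.Ioc (0:ℝ) f).indicator (fun t => ENNReal.ofReal ((1 - q) * (q * t ^ (q - 1)))) t
        + (Set.Ioi f).indicator
            (fun t => ENNReal.ofReal (q * ((1 - q) * t ^ (q - 2))) * ENNReal.ofReal f) t))
      = ENNReal.ofReal (f ^ q) := by
    rw [lintegral_add_left (by
      exact (ENNReal.measurable_ofReal.comp
        (((measurable_id.pow measurable_const).const_mul q).const_mul (1 - q))).indicator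
        measurableSet_Ioc), hB1, hB2]
    have hff : f ^ (q - 1) * f = f ^ q := by
      rw [← Real.rpow_add_one (ne_of_gt hfpos) (q - 1)]
      congr 1
      ring
    have hfq : 0 ≤ f ^ (q - 1) := Real.rpow_nonneg hfpos.le _
    have hfq2 : 0 ≤ f ^ q := Real.rpow_nonneg hfpos.le _
    rw [← ENNReal.ofReal_mul (by linarith : (0:ℝ) ≤ 1 - q),
      ← ENNReal.ofReal_mul hq0.le, ← ENNReal.ofReal_mul (mul_nonneg hq0.le hfq),
      ← ENNReal.ofReal_add (mul_nonneg (by linarith) hfq2)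
        (mul_nonneg (mul_nonneg hq0.le hfq) hfpos.le)]
    congr 1
    rw [mul_assoc, hff]
    ring
  calc ENNReal.ofReal (1 - q) * (∫⁻ x, g x ^ q ∂μ)
      + ENNReal.ofReal q * (∫⁻ x, Φ x * g x ^ (q - 1) ∂μ)
      = ∫⁻ x, (∫⁻ t in Set.Ioi (0:ℝ), F x t) ∂μ := hLHS
    _ = ∫⁻ t in Set.Ioi (0:ℝ), (∫⁻ x, F x t ∂μ) := hswap
    _ ≤ ∫⁻ t in Set.Ioi (0:ℝ),
        ((Set.Ioc (0:ℝ) f).indicator (fun t => ENNReal.ofReal ((1 - q) * (q * t ^ (q - 1)))) t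
          + (Set.Ioi f).indicator
              (fun t => ENNReal.ofReal (q * ((1 - q) * t ^ (q - 2))) * ENNReal.ofReal f) t) :=
        lintegral_mono_ae ((ae_restrict_iff' measurableSet_Ioi).2 (ae_of_all _ hbound))
    _ = ENNReal.ofReal (f ^ q) := hsum


/-- the basic inequality for a maximal pairwise disjoint family in `S_φ`. -/
theorem statement12 {X : Type*} [MeasurableSpace X] (μ : Measure X)
    [IsProbabilityMeasure μ] [NullSingletonClass μ] (T : DTree X μ)
    (q f : ℝ) (hq : q ∈ Set.Ioo (0 : ℝ) 1)
    (φ : X → ℝ) (h0 : ∀ x, 0 ≤ φ x) (hint : Integrable φ μ) (hgood : TGood μ T φ)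
    (hf : (∫ x, φ x ∂μ) = f)
    {ι : Type*} [Countable ι] (I : ι → Set X)
    (hmem : ∀ j, I j ∈ trS μ T φ) (hdisj : Pairwise (Function.onFun Disjoint I))
    (hmax : ∀ K ∈ trS μ T φ, (K ∩ ⋃ j, I j).Nonempty)
    (β : ℝ) (hβ : 0 < β) :
    (∫ x in (⋃ j, I j)ᶜ, (trMax μ T φ x) ^ q ∂μ) ≤
      (1 / ((1 - q) * β)) *
        ((β + 1) * (f ^ q - ∑' j, (μ (I j)).toReal * trAvg μ φ (I j) ^ q) -
          (β + 1) ^ q * ∫ x in (⋃ j, I j)ᶜ, φ x ^ q ∂μ) := by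
  classical
  obtain ⟨hq0, hq1⟩ := hq
  have htravg_univ : trAvg μ φ Set.univ = f := by
    rw [trAvg, measure_univ, ENNReal.toReal_one, inv_one, one_mul, Measure.restrict_univ, hf]
  -- Case 1 : one of the atoms is the whole space
  by_cases huniv : ∃ j₀, I j₀ = Set.univ
  · obtain ⟨j₀, hj₀⟩ := huniv
    have hall : ∀ j, j = j₀ := by
      intro j
      by_contra hne
      have hd := hdisj hne
      rw [Function.onFun, hj₀, Set.disjoint_univ] at hd
      rcases hmem j with hmemj | hunivj
      · have hpos := T.pos (I j) hmemj.1
        rw [hd, measure_empty] at hpos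
        exact lt_irrefl 0 hpos
      · rw [Set.mem_singleton_iff] at hunivj
        have h1 : μ (Set.univ : Set X) = 0 := by rw [← hunivj, hd, measure_empty]
        rw [measure_univ] at h1
        exact one_ne_zero h1
    have hU : (⋃ j, I j) = Set.univ :=
      Set.eq_univ_of_univ_subset (hj₀ ▸ Set.subset_iUnion I j₀)
    have hE : (⋃ j, I j)ᶜ = ∅ := by rw [hU, Set.compl_univ]
    rw [hE, Measure.restrict_empty, integral_zero_measure, integral_zero_measure]
    have htsum : ∑' j, (μ (I j)).toReal * trAvg μ φ (I j) ^ q = f ^ q := by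
      rw [tsum_eq_single j₀ (fun b hb => absurd (hall b) hb)]
      rw [hj₀, measure_univ, ENNReal.toReal_one, one_mul, htravg_univ]
    rw [htsum]
    simp
  -- no atom is the whole space
  push_neg at huniv
  have hf0 : 0 ≤ f := hf ▸ integral_nonneg h0
  rcases eq_or_lt_of_le hf0 with hfz | hfpos
  · -- Case 2 : f = 0, hence φ = 0 a.e.
    have hφ0 : φ =ᵐ[μ] 0 := by
      rw [← integral_eq_zero_iff_of_nonneg h0 hint, hf, ← hfz]
    have havg : ∀ J : Set X, trAvg μ φ J = 0 := by
      intro J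
      have h1 : ∫ x in J, φ x ∂μ = 0 := by
        rw [integral_congr_ae (ae_restrict_of_ae hφ0)]
        simp
      rw [trAvg, h1, mul_zero]
    have habs : (fun y => |φ y|) = φ := funext fun y => abs_of_nonneg (h0 y)
    have hM : ∀ x, trMax μ T φ x = 0 := by
      intro x
      have hset : {r : ℝ | ∃ J ∈ T.mem, x ∈ J ∧ r = trAvg μ (fun y => |φ y|) J} = {0} := by
        ext r
        constructor
        · rintro ⟨J, hJ, hxJ, rfl⟩
          rw [habs, havg]
          rfl
        · intro hr
          rw [Set.mem_singleton_iff] at hr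
          exact ⟨Set.univ, T.top_mem, trivial, by rw [habs, havg, hr]⟩
      rw [trMax, hset, csSup_singleton]
    have hLHS : (∫ x in (⋃ j, I j)ᶜ, (trMax μ T φ x) ^ q ∂μ) = 0 := by
      have : ∀ x, (trMax μ T φ x) ^ q = 0 := fun x => by
        rw [hM, Real.zero_rpow (ne_of_gt hq0)]
      simp [this]
    have hP : (∫ x in (⋃ j, I j)ᶜ, (φ x) ^ q ∂μ) = 0 := by
      have h1 : (fun x => φ x ^ q) =ᵐ[μ] 0 := hφ0.mono fun x hx => by
        simp only [Pi.zero_apply] at hx ⊢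
        rw [hx, Real.zero_rpow (ne_of_gt hq0)]
      rw [integral_congr_ae (ae_restrict_of_ae h1)]
      simp
    have hy : ∀ j, trAvg μ φ (I j) ^ q = 0 := fun j => by
      rw [havg, Real.zero_rpow (ne_of_gt hq0)]
    have htsum : ∑' j, (μ (I j)).toReal * trAvg μ φ (I j) ^ q = 0 := by
      simp [hy]
    rw [hLHS, hP, htsum, ← hfz, Real.zero_rpow (ne_of_gt hq0)]
    simp
  -- Main case
  have hfpos' : 0 < ∫ x, φ x ∂μ := by rw [hf]; exact hfpos
  obtain ⟨e, he⟩ := T.countable_mem.exists_eq_range ⟨_, T.top_mem⟩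
  have hem : ∀ n, MeasurableSet (e n) := fun n => T.meas _ (by rw [he]; exact Set.mem_range_self n)
  have hNnull : μ {x | auxM μ φ e x = ⊤} = 0 := auxM_top_null T h0 hint e he
  have hImem : ∀ j, I j ∈ T.mem := by
    intro j
    rcases hmem j with h | h
    · exact h.1
    · rw [Set.mem_singleton_iff] at h
      exact absurd h (huniv j)
  have hatom : ∀ j, ∃ x', x' ∈ I j ∧ auxM μ φ e x' ≠ ⊤ ∧ trMax μ T φ x' = trAvg μ φ (I j) := by
    intro j
    rcases hmem j with h | h
    · have hpos := h.2
      have hsub : ¬ trA μ T φ (I j) ⊆ {x | auxM μ φ e x = ⊤} := by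
        intro hsub
        have h1 : μ (trA μ T φ (I j)) ≤ μ {x | auxM μ φ e x = ⊤} := measure_mono hsub
        rw [hNnull] at h1
        exact (ne_of_gt hpos) (le_antisymm h1 (zero_le))
      obtain ⟨x', hx'A, hx'N⟩ := Set.not_subset.1 hsub
      exact ⟨x', hx'A.2.2.1, hx'N, hx'A.2.2.2.1⟩
    · rw [Set.mem_singleton_iff] at h
      exact absurd h (huniv j)
  -- measurable representative of φ
  set φm : X → ℝ := fun x => max (hint.1.mk φ x) 0 with hφmdef
  have hφm : Measurable φm := hint.1.stronglyMeasurable_mk.measurable.max measurable_const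
  have hφae : φ =ᵐ[μ] φm := hint.1.ae_eq_mk.mono fun x hx => by
    rw [hφmdef]
    dsimp only
    rw [← hx, max_eq_left (h0 x)]
  have hkl := kl_bound T h0 hint hq0 hq1 he hImem hdisj hatom hfpos' hφm hφae
  rw [hf] at hkl
  set E := (⋃ j, I j)ᶜ with hEdef
  have hIm : ∀ j, MeasurableSet (I j) := fun j => T.meas _ (hImem j)
  have hEm : MeasurableSet E := (MeasurableSet.iUnion hIm).compl
  set g := auxg μ φ e I with hgdef
  have hgm : Measurable g := auxg_measurable μ φ e hem I hIm
  have hΦm : Measurable fun x => ENNReal.ofReal (φm x) := ENNReal.measurable_ofReal.comp hφm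
  have hyf : ∀ j, f ≤ trAvg μ φ (I j) := fun j =>
    htravg_univ ▸ atom_avg_le T h0 he (hatom j) T.top_mem (Set.subset_univ _)
  have hypos : ∀ j, 0 < trAvg μ φ (I j) := fun j => lt_of_lt_of_le hfpos (hyf j)
  -- splitting the integrals into E and the atoms
  have hsplit1 : (∫⁻ x, g x ^ q ∂μ)
      = (∫⁻ x in E, g x ^ q ∂μ) + ∑' j, ∫⁻ x in I j, g x ^ q ∂μ := by
    rw [← lintegral_add_compl (fun x => g x ^ q) hEm]
    congr 1
    rw [hEdef, compl_compl]
    exact lintegral_iUnion hIm hdisj _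
  have hsplit2 : (∫⁻ x, ENNReal.ofReal (φm x) * g x ^ (q - 1) ∂μ)
      = (∫⁻ x in E, ENNReal.ofReal (φm x) * g x ^ (q - 1) ∂μ)
        + ∑' j, ∫⁻ x in I j, ENNReal.ofReal (φm x) * g x ^ (q - 1) ∂μ := by
    rw [← lintegral_add_compl (fun x => ENNReal.ofReal (φm x) * g x ^ (q - 1)) hEm]
    congr 1
    rw [hEdef, compl_compl]
    exact lintegral_iUnion hIm hdisj _
  -- atom contributions
  have hint_atom : ∀ j, ∫ x in I j, φ x ∂μ = (μ (I j)).toReal * trAvg μ φ (I j) := by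
    intro j
    have hm0 : (μ (I j)).toReal ≠ 0 :=
      ENNReal.toReal_ne_zero.2 ⟨ne_of_gt (T.pos _ (hImem j)), measure_ne_top μ _⟩
    rw [trAvg]
    field_simp
  have hAq : ∀ j, (∫⁻ x in I j, g x ^ q ∂μ)
      = ENNReal.ofReal ((μ (I j)).toReal * trAvg μ φ (I j) ^ q) := by
    intro j
    rw [setLIntegral_congr_fun (hIm j)
      (fun x hx => by rw [hgdef, auxg_of_atom μ φ e hdisj hx]), setLIntegral_const,
      ENNReal.ofReal_rpow_of_nonneg (trAvg_nonneg h0 _) hq0.le,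
      ← ENNReal.ofReal_toReal (measure_ne_top μ (I j)),
      ← ENNReal.ofReal_mul (Real.rpow_nonneg (trAvg_nonneg h0 _) q)]
    congr 1
    rw [ENNReal.toReal_ofReal ENNReal.toReal_nonneg]
    ring
  have hAmix : ∀ j, (∫⁻ x in I j, ENNReal.ofReal (φm x) * g x ^ (q - 1) ∂μ)
      = ENNReal.ofReal ((μ (I j)).toReal * trAvg μ φ (I j) ^ q) := by
    intro j
    rw [setLIntegral_congr_fun (hIm j)
      (fun x hx => by rw [hgdef, auxg_of_atom μ φ e hdisj hx])]
    simp_rw [ENNReal.ofReal_rpow_of_pos (hypos j), mul_comm]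
    rw [lintegral_const_mul' _ _ ENNReal.ofReal_ne_top]
    have hae2 : (fun x => ENNReal.ofReal (φm x)) =ᵐ[μ] fun x => ENNReal.ofReal (φ x) := by
      filter_upwards [hφae] with x hx
      rw [hx]
    have h1 : (∫⁻ x in I j, ENNReal.ofReal (φm x) ∂μ)
        = ENNReal.ofReal ((μ (I j)).toReal * trAvg μ φ (I j)) := by
      rw [lintegral_congr_ae (ae_restrict_of_ae hae2),
        ← ofReal_integral_eq_lintegral_ofReal hint.integrableOn (ae_of_all _ h0), hint_atom j]
    have hyy : trAvg μ φ (I j) ^ (q - 1) * trAvg μ φ (I j) = trAvg μ φ (I j) ^ q := by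
      rw [← Real.rpow_add_one (ne_of_gt (hypos j)) (q - 1)]
      congr 1
      ring
    rw [h1, ← ENNReal.ofReal_mul (Real.rpow_nonneg (trAvg_nonneg h0 _) _)]
    congr 1
    rw [← hyy]
    ring
  set S := ∑' j, ENNReal.ofReal ((μ (I j)).toReal * trAvg μ φ (I j) ^ q) with hSdef
  set GE := ∫⁻ x in E, g x ^ q ∂μ with hGEdef
  set HE := ∫⁻ x in E, ENNReal.ofReal (φm x) * g x ^ (q - 1) ∂μ with hHEdef
  set PE := ∫⁻ x in E, ENNReal.ofReal (φ x ^ q) ∂μ with hPEdef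
  have hkl2 : ENNReal.ofReal (1 - q) * GE + ENNReal.ofReal q * HE + S
      ≤ ENNReal.ofReal (f ^ q) := by
    have hone : ENNReal.ofReal (1 - q) + ENNReal.ofReal q = 1 := by
      rw [← ENNReal.ofReal_add (by linarith) hq0.le]
      norm_num
    have h1 : ∑' j, (∫⁻ x in I j, g x ^ q ∂μ) = S := tsum_congr hAq
    have h2 : ∑' j, (∫⁻ x in I j, ENNReal.ofReal (φm x) * g x ^ (q - 1) ∂μ) = S :=
      tsum_congr hAmix
    rw [hsplit1, hsplit2, h1, h2] at hkl
    calc ENNReal.ofReal (1 - q) * GE + ENNReal.ofReal q * HE + S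
        = ENNReal.ofReal (1 - q) * GE + ENNReal.ofReal q * HE
          + (ENNReal.ofReal (1 - q) + ENNReal.ofReal q) * S := by rw [hone, one_mul]
      _ = ENNReal.ofReal (1 - q) * (GE + S) + ENNReal.ofReal q * (HE + S) := by ring
      _ ≤ ENNReal.ofReal (f ^ q) := hkl
  -- the lower bound for g on E
  have hglbE : ∀ x, x ∈ E → ENNReal.ofReal f ≤ g x := by
    intro x hxE
    rw [hgdef, auxg_of_mem_E μ φ e I hxE]
    obtain ⟨n, hn⟩ : ∃ n, e n = Set.univ := by
      have h := T.top_mem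
      rw [he] at h
      exact h
    have h2 := le_auxM μ φ e (show x ∈ e n by rw [hn]; trivial)
    rwa [hn, htravg_univ] at h2
  -- the tangent-line estimate integrated over E
  have hN' : ∀ᵐ x ∂μ, auxM μ φ e x ≠ ⊤ := by
    rw [ae_iff]
    simpa [not_not] using hNnull
  have htang : ENNReal.ofReal ((β + 1) ^ q) * PE
      ≤ ENNReal.ofReal (q * (β + 1)) * HE + ENNReal.ofReal (1 - q) * GE := by
    have hae : ∀ᵐ x ∂(μ.restrict E),
        ENNReal.ofReal ((β + 1) ^ q) * ENNReal.ofReal (φ x ^ q)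
        ≤ ENNReal.ofReal (q * (β + 1)) * (ENNReal.ofReal (φm x) * g x ^ (q - 1))
          + ENNReal.ofReal (1 - q) * g x ^ q := by
      filter_upwards [ae_restrict_mem hEm, ae_restrict_of_ae hN', ae_restrict_of_ae hφae]
        with x hxE hxN hxφ
      have hgx : g x = auxM μ φ e x := by rw [hgdef]; exact auxg_of_mem_E μ φ e I hxE
      set G := (auxM μ φ e x).toReal with hGdef
      have hGf : f ≤ G := by
        have h1 : ENNReal.ofReal f ≤ auxM μ φ e x := hgx ▸ hglbE x hxE
        have h2 := ENNReal.toReal_mono hxN h1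
        rwa [ENNReal.toReal_ofReal hfpos.le] at h2
      have hGpos : 0 < G := lt_of_lt_of_le hfpos hGf
      have hgof : g x = ENNReal.ofReal G := by rw [hgx, ← ENNReal.ofReal_toReal hxN]
      have hreal : (β + 1) ^ q * φ x ^ q
          ≤ q * (β + 1) * (φ x * G ^ (q - 1)) + (1 - q) * G ^ q := by
        have h1 := tangent_line hq0 hq1 (mul_nonneg (by linarith : (0:ℝ) ≤ β + 1) (h0 x)) hGpos
        rw [Real.mul_rpow (by linarith : (0:ℝ) ≤ β + 1) (h0 x)] at h1
        calc (β + 1) ^ q * φ x ^ q ≤ q * G ^ (q - 1) * ((β + 1) * φ x) + (1 - q) * G ^ q := h1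
          _ = q * (β + 1) * (φ x * G ^ (q - 1)) + (1 - q) * G ^ q := by ring
      calc ENNReal.ofReal ((β + 1) ^ q) * ENNReal.ofReal (φ x ^ q)
          = ENNReal.ofReal ((β + 1) ^ q * φ x ^ q) :=
            (ENNReal.ofReal_mul (Real.rpow_nonneg (by linarith) _)).symm
        _ ≤ ENNReal.ofReal (q * (β + 1) * (φ x * G ^ (q - 1)) + (1 - q) * G ^ q) :=
            ENNReal.ofReal_le_ofReal hreal
        _ ≤ ENNReal.ofReal (q * (β + 1) * (φ x * G ^ (q - 1)))
            + ENNReal.ofReal ((1 - q) * G ^ q) := ENNReal.ofReal_add_le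
        _ = ENNReal.ofReal (q * (β + 1)) * (ENNReal.ofReal (φm x) * g x ^ (q - 1))
            + ENNReal.ofReal (1 - q) * g x ^ q := by
            rw [ENNReal.ofReal_mul (by positivity : (0:ℝ) ≤ q * (β + 1)),
              ENNReal.ofReal_mul (h0 x), ENNReal.ofReal_mul (by linarith : (0:ℝ) ≤ 1 - q),
              hxφ, hgof, ENNReal.ofReal_rpow_of_pos hGpos,
              ENNReal.ofReal_rpow_of_pos hGpos]
    calc ENNReal.ofReal ((β + 1) ^ q) * PE
        = ∫⁻ x in E, ENNReal.ofReal ((β + 1) ^ q) * ENNReal.ofReal (φ x ^ q) ∂μ := by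
          rw [hPEdef, lintegral_const_mul' _ _ ENNReal.ofReal_ne_top]
      _ ≤ ∫⁻ x in E, (ENNReal.ofReal (q * (β + 1)) * (ENNReal.ofReal (φm x) * g x ^ (q - 1))
            + ENNReal.ofReal (1 - q) * g x ^ q) ∂μ := lintegral_mono_ae hae
      _ = ENNReal.ofReal (q * (β + 1)) * HE + ENNReal.ofReal (1 - q) * GE := by
          rw [lintegral_add_left (by
            exact (hΦm.mul (hgm.pow measurable_const)).const_mul _),
            lintegral_const_mul' _ _ ENNReal.ofReal_ne_top,
            lintegral_const_mul' _ _ ENNReal.ofReal_ne_top]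
  -- the main ENNReal inequality
  have hmain : ENNReal.ofReal ((1 - q) * β) * GE + ENNReal.ofReal ((β + 1) ^ q) * PE
      + ENNReal.ofReal (β + 1) * S ≤ ENNReal.ofReal ((β + 1) * f ^ q) := by
    have e1 : ENNReal.ofReal ((1 - q) * β) + ENNReal.ofReal (1 - q)
        = ENNReal.ofReal (β + 1) * ENNReal.ofReal (1 - q) := by
      rw [← ENNReal.ofReal_mul (by linarith : (0:ℝ) ≤ β + 1),
        ← ENNReal.ofReal_add (by nlinarith : (0:ℝ) ≤ (1 - q) * β) (by linarith : (0:ℝ) ≤ 1 - q)]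
      congr 1
      ring
    have e2 : ENNReal.ofReal (q * (β + 1))
        = ENNReal.ofReal (β + 1) * ENNReal.ofReal q := by
      rw [← ENNReal.ofReal_mul (by linarith : (0:ℝ) ≤ β + 1)]
      congr 1
      ring
    calc ENNReal.ofReal ((1 - q) * β) * GE + ENNReal.ofReal ((β + 1) ^ q) * PE
          + ENNReal.ofReal (β + 1) * S
        ≤ ENNReal.ofReal ((1 - q) * β) * GE
          + (ENNReal.ofReal (q * (β + 1)) * HE + ENNReal.ofReal (1 - q) * GE)
          + ENNReal.ofReal (β + 1) * S := by
          exact add_le_add_left (add_le_add_right htang _) _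
      _ = (ENNReal.ofReal ((1 - q) * β) + ENNReal.ofReal (1 - q)) * GE
          + ENNReal.ofReal (q * (β + 1)) * HE + ENNReal.ofReal (β + 1) * S := by ring
      _ = ENNReal.ofReal (β + 1)
          * (ENNReal.ofReal (1 - q) * GE + ENNReal.ofReal q * HE + S) := by
          rw [e1, e2]
          ring
      _ ≤ ENNReal.ofReal (β + 1) * ENNReal.ofReal (f ^ q) := mul_le_mul_right hkl2 _
      _ = ENNReal.ofReal ((β + 1) * f ^ q) :=
          (ENNReal.ofReal_mul (by linarith : (0:ℝ) ≤ β + 1)).symm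
  -- finiteness
  have hGEfin : GE ≠ ⊤ := by
    intro htop
    have h1 : ENNReal.ofReal (1 - q) * GE ≤ ENNReal.ofReal (f ^ q) :=
      le_trans (le_add_right (le_add_right le_rfl)) hkl2
    rw [htop, ENNReal.mul_top (by
      simp only [ne_eq, ENNReal.ofReal_eq_zero, not_le]
      linarith)] at h1
    exact ENNReal.ofReal_ne_top (top_le_iff.1 h1)
  have hSfin : S ≠ ⊤ := by
    intro htop
    have h1 : S ≤ ENNReal.ofReal (f ^ q) := le_trans le_add_self hkl2
    rw [htop] at h1
    exact ENNReal.ofReal_ne_top (top_le_iff.1 h1)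
  have hPEfin : PE ≠ ⊤ := by
    have hb : ∀ x, ENNReal.ofReal (φ x ^ q) ≤ 1 + ENNReal.ofReal (φ x) := by
      intro x
      rcases le_total (φ x) 1 with h | h
      · have h2 : φ x ^ q ≤ 1 := Real.rpow_le_one (h0 x) h hq0.le
        calc ENNReal.ofReal (φ x ^ q) ≤ ENNReal.ofReal 1 := ENNReal.ofReal_le_ofReal h2
          _ = 1 := ENNReal.ofReal_one
          _ ≤ 1 + ENNReal.ofReal (φ x) := le_add_right le_rfl
      · have h2 : φ x ^ q ≤ φ x := by
          calc φ x ^ q ≤ φ x ^ (1:ℝ) :=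
            Real.rpow_le_rpow_of_exponent_le h hq1.le
          _ = φ x := Real.rpow_one _
        calc ENNReal.ofReal (φ x ^ q) ≤ ENNReal.ofReal (φ x) := ENNReal.ofReal_le_ofReal h2
          _ ≤ 1 + ENNReal.ofReal (φ x) := le_add_self
    have h3 : PE ≤ ∫⁻ x in E, (1 + ENNReal.ofReal (φ x)) ∂μ :=
      lintegral_mono fun x => hb x
    have h4 : (∫⁻ x in E, (1 + ENNReal.ofReal (φ x)) ∂μ)
        = μ E + ∫⁻ x in E, ENNReal.ofReal (φ x) ∂μ := by
      rw [lintegral_add_left measurable_const, setLIntegral_one]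
    have h5 : (∫⁻ x in E, ENNReal.ofReal (φ x) ∂μ) ≤ ENNReal.ofReal f := by
      rw [← hf, ← wd_univ h0 hint, withDensity_apply _ MeasurableSet.univ,
        Measure.restrict_univ]
      exact setLIntegral_le_lintegral _ _
    refine ne_top_of_le_ne_top ?_ (h3.trans (h4.le.trans (add_le_add_right h5 _)))
    exact ENNReal.add_ne_top.2 ⟨measure_ne_top μ E, ENNReal.ofReal_ne_top⟩
  -- identification of GE with the goal integrals
  have hMmeas : Measurable (trMax μ T φ) := by
    have : trMax μ T φ = fun x => (auxM μ φ e x).toReal :=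
      funext (trMax_eq_toReal_auxM μ T φ h0 e he)
    rw [this]
    exact (auxM_measurable μ φ e hem).ennreal_toReal
  have hterm1 : GE = ∫⁻ x in E, ENNReal.ofReal ((trMax μ T φ x) ^ q) ∂μ := by
    refine lintegral_congr_ae ?_
    filter_upwards [ae_restrict_mem hEm, ae_restrict_of_ae hN'] with x hxE hxN
    rw [hgdef]
    rw [auxg_of_mem_E μ φ e I hxE, trMax_eq_toReal_auxM μ T φ h0 e he x,
      ← ENNReal.ofReal_rpow_of_nonneg ENNReal.toReal_nonneg hq0.le,
      ENNReal.ofReal_toReal hxN]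
  have hb1 : ∫ x in E, (trMax μ T φ x) ^ q ∂μ = GE.toReal := by
    rw [integral_eq_lintegral_of_nonneg_ae
      (ae_of_all _ fun x => Real.rpow_nonneg (by
        rw [trMax_eq_toReal_auxM μ T φ h0 e he x]; exact ENNReal.toReal_nonneg) q)
      ((hMmeas.pow measurable_const).aestronglyMeasurable), ← hterm1]
  have hb2 : ∫ x in E, (φ x) ^ q ∂μ = PE.toReal := by
    rw [integral_eq_lintegral_of_nonneg_ae
      (ae_of_all _ fun x => Real.rpow_nonneg (h0 x) q)
      ((hint.aemeasurable.pow aemeasurable_const).aestronglyMeasurable.restrict), hPEdef]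
  have hb3 : ∑' j, (μ (I j)).toReal * trAvg μ φ (I j) ^ q = S.toReal := by
    rw [hSdef, ENNReal.tsum_toReal_eq (fun j => ENNReal.ofReal_ne_top)]
    exact tsum_congr fun j => (ENNReal.toReal_ofReal
      (mul_nonneg ENNReal.toReal_nonneg (Real.rpow_nonneg (trAvg_nonneg h0 _) q))).symm
  -- final real inequality
  have hfin1 : ENNReal.ofReal ((1 - q) * β) * GE ≠ ⊤ :=
    ENNReal.mul_ne_top ENNReal.ofReal_ne_top hGEfin
  have hfin2 : ENNReal.ofReal ((β + 1) ^ q) * PE ≠ ⊤ :=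
    ENNReal.mul_ne_top ENNReal.ofReal_ne_top hPEfin
  have hfin3 : ENNReal.ofReal (β + 1) * S ≠ ⊤ :=
    ENNReal.mul_ne_top ENNReal.ofReal_ne_top hSfin
  have hreal : (1 - q) * β * GE.toReal + (β + 1) ^ q * PE.toReal + (β + 1) * S.toReal
      ≤ (β + 1) * f ^ q := by
    have h1 := ENNReal.toReal_mono ENNReal.ofReal_ne_top hmain
    rw [ENNReal.toReal_add (ENNReal.add_ne_top.2 ⟨hfin1, hfin2⟩) hfin3,
      ENNReal.toReal_add hfin1 hfin2, ENNReal.toReal_mul, ENNReal.toReal_mul,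
      ENNReal.toReal_mul, ENNReal.toReal_ofReal (by nlinarith : (0:ℝ) ≤ (1 - q) * β),
      ENNReal.toReal_ofReal (Real.rpow_nonneg (by linarith) q),
      ENNReal.toReal_ofReal (by linarith : (0:ℝ) ≤ β + 1),
      ENNReal.toReal_ofReal (by positivity : (0:ℝ) ≤ (β + 1) * f ^ q)] at h1
    exact h1
  rw [hb1, hb2, hb3]
  have hD : (0:ℝ) < (1 - q) * β := by nlinarith
  rw [show (1 / ((1 - q) * β)) * ((β + 1) * (f ^ q - S.toReal) - (β + 1) ^ q * PE.toReal)
      = ((β + 1) * (f ^ q - S.toReal) - (β + 1) ^ q * PE.toReal) / ((1 - q) * β) by ring,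
    le_div_iff₀ hD]
  nlinarith [hreal]

end
end

section
/- Let (X,μ) be a nonatomic probability space, T a tree on X, q ∈ (0,1), and φ a T-good function. Let A = {I_j}_j be a pairwise disjoint family of elements of S_φ. Then for every β > 0, ∫_{∪_j I_j} (M_T φ)^q dμ ≤ (1/((1−q)β)) · [ (β+1) Σ_j μ(I_j)·y_{I_j}^q − (β+1)^q ∫_{∪_j I_j} φ^q dμ ], where y_{I_j} = Av_{I_j}(φ). -/
open MeasureTheory Filter Set

noncomputable section

variable {X : Type*} [MeasurableSpace X]

namespace Stmt13

variable {X : Type*} [MeasurableSpace X] {μ : Measure X}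

/-- Bundle of structural facts about a tree. -/
theorem tree_facts (T : DTree X μ) :
    T.mem.Countable ∧
    (∀ I ∈ T.mem, ∀ J ∈ T.mem, I ⊆ J ∨ J ⊆ I ∨ Disjoint I J) ∧
    (∀ J ∈ T.mem, {K | K ∈ T.mem ∧ J ⊆ K}.Finite) := by
  obtain ⟨lvl, h0, hsucc, hmemeq, htend⟩ := T.generated
  have hsub : ∀ m, lvl m ⊆ T.mem := by
    intro m J hJ; rw [hmemeq]; exact mem_iUnion.2 ⟨m, hJ⟩
  -- each level is a partition of univ
  have hpart : ∀ m, (∀ I ∈ lvl m, ∀ J ∈ lvl m, I = J ∨ Disjoint I J) ∧ ⋃₀ lvl m = univ := by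
    intro m
    induction m with
    | zero =>
      rw [h0]; constructor
      · rintro I hI J hJ; left; rw [mem_singleton_iff] at hI hJ; rw [hI, hJ]
      · simp
    | succ m ih =>
      obtain ⟨ihd, ihu⟩ := ih
      constructor
      · intro I hI J hJ
        rw [hsucc] at hI hJ
        simp only [mem_iUnion] at hI hJ
        obtain ⟨P, hP, hIP⟩ := hI
        obtain ⟨Q, hQ, hJQ⟩ := hJ
        rcases ihd P hP Q hQ with h | h
        · subst h
          by_cases hIJ : I = J
          · exact Or.inl hIJ
          · exact Or.inr (T.child_disj P (hsub m hP) hIP hJQ hIJ)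
        · exact Or.inr (h.mono (T.child_sub P (hsub m hP) I hIP)
            (T.child_sub Q (hsub m hQ) J hJQ))
      · rw [hsucc]
        apply eq_univ_of_univ_subset
        rw [← ihu]
        intro x hx
        obtain ⟨P, hP, hxP⟩ := hx
        have : x ∈ ⋃₀ T.child P := by rw [T.child_union P (hsub m hP)]; exact hxP
        obtain ⟨J, hJ, hxJ⟩ := this
        exact mem_sUnion.2 ⟨J, mem_iUnion.2 ⟨P, mem_iUnion.2 ⟨hP, hJ⟩⟩, hxJ⟩
  -- go up k levels
  have hup : ∀ k m, ∀ J ∈ lvl (m + k), ∃ I ∈ lvl m, J ⊆ I := by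
    intro k
    induction k with
    | zero => intro m J hJ; exact ⟨J, hJ, subset_rfl⟩
    | succ k ih =>
      intro m J hJ
      rw [show m + (k+1) = (m+k) + 1 by omega, hsucc] at hJ
      simp only [mem_iUnion] at hJ
      obtain ⟨P, hP, hJP⟩ := hJ
      obtain ⟨I, hI, hPI⟩ := ih m P hP
      exact ⟨I, hI, (T.child_sub P (hsub _ hP) J hJP).trans hPI⟩
  have hnested : ∀ I ∈ T.mem, ∀ J ∈ T.mem, I ⊆ J ∨ J ⊆ I ∨ Disjoint I J := by
    have key : ∀ m n, m ≤ n → ∀ I ∈ lvl m, ∀ J ∈ lvl n, J ⊆ I ∨ Disjoint I J := by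
      intro m n hmn I hI J hJ
      obtain ⟨k, rfl⟩ := Nat.exists_eq_add_of_le hmn
      obtain ⟨I', hI', hJI'⟩ := hup k m J hJ
      rcases (hpart m).1 I hI I' hI' with h | h
      · subst h; exact Or.inl hJI'
      · exact Or.inr (h.mono_right hJI')
    intro I hI J hJ
    rw [hmemeq] at hI hJ
    obtain ⟨m, hI⟩ : ∃ m, I ∈ lvl m := by simpa using hI
    obtain ⟨n, hJ⟩ : ∃ n, J ∈ lvl n := by simpa using hJ
    rcases le_total m n with h | h
    · rcases key m n h I hI J hJ with h' | h'
      · exact Or.inr (Or.inl h')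
      · exact Or.inr (Or.inr h')
    · rcases key n m h J hJ I hI with h' | h'
      · exact Or.inl h'
      · exact Or.inr (Or.inr h'.symm)
  have hcnt : T.mem.Countable := by
    rw [hmemeq]
    apply countable_iUnion
    intro m
    induction m with
    | zero => rw [h0]; exact countable_singleton _
    | succ m ih =>
      rw [hsucc]
      exact Countable.biUnion ih (fun I hI => T.child_countable I (hsub m hI))
  refine ⟨hcnt, hnested, ?_⟩
  intro J hJ
  have hJpos : 0 < μ J := T.pos J hJ
  have hev : ∀ᶠ m in atTop, (⨆ I ∈ lvl m, μ I) < μ J := by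
    exact htend.eventually_lt_const hJpos
  obtain ⟨M, hM⟩ := hev.exists_forall_of_atTop
  have hJne : J.Nonempty := nonempty_of_measure_ne_zero hJpos.ne'
  obtain ⟨x₀, hx₀⟩ := hJne
  have hsubset : {K | K ∈ T.mem ∧ J ⊆ K} ⊆ ⋃ m ∈ Iio M, {K | K ∈ lvl m ∧ J ⊆ K} := by
    rintro K ⟨hKmem, hJK⟩
    rw [hmemeq] at hKmem
    obtain ⟨m, hKm⟩ : ∃ m, K ∈ lvl m := by simpa using hKmem
    have hmM : m < M := by
      by_contra h
      push_neg at h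
      have h1 : μ K ≤ ⨆ I ∈ lvl m, μ I := le_biSup _ hKm
      have h2 : μ J ≤ μ K := measure_mono hJK
      exact absurd (lt_of_le_of_lt (h2.trans h1) (hM m h)) (lt_irrefl _)
    exact mem_iUnion₂.2 ⟨m, hmM, hKm, hJK⟩
  apply Set.Finite.subset _ hsubset
  apply Set.Finite.biUnion (finite_Iio M)
  intro m _
  apply Set.Subsingleton.finite
  rintro K ⟨hK, hJK⟩ K' ⟨hK', hJK'⟩
  rcases (hpart m).1 K hK K' hK' with h | h
  · exact h
  · exact absurd (h.ne_of_mem (hJK hx₀) (hJK' hx₀)) (by simp)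


/-- The set of averages relevant at `x`. -/
def avgSet (μ : Measure X) (T : DTree X μ) (φ : X → ℝ) (x : X) : Set ℝ :=
  {r : ℝ | ∃ I ∈ T.mem, x ∈ I ∧ r = trAvg μ (fun y => |φ y|) I}

theorem trMax_eq_sSup (μ : Measure X) (T : DTree X μ) (φ : X → ℝ) (x : X) :
    trMax μ T φ x = sSup (avgSet μ T φ x) := rfl

theorem avgSet_nonempty (T : DTree X μ) (φ : X → ℝ) (x : X) :
    (avgSet μ T φ x).Nonempty :=
  ⟨_, ⟨univ, T.top_mem, mem_univ x, rfl⟩⟩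

theorem avg_abs_nonneg (μ : Measure X) (φ : X → ℝ) (I : Set X) :
    0 ≤ trAvg μ (fun y => |φ y|) I :=
  mul_nonneg (inv_nonneg.2 ENNReal.toReal_nonneg) (integral_nonneg fun y => abs_nonneg _)

theorem avgSet_nonneg (T : DTree X μ) (φ : X → ℝ) (x : X) :
    ∀ r ∈ avgSet μ T φ x, 0 ≤ r := by
  rintro r ⟨I, _, _, rfl⟩; exact avg_abs_nonneg μ φ I

theorem trMax_nonneg (T : DTree X μ) (φ : X → ℝ) (x : X) : 0 ≤ trMax μ T φ x := by
  rw [trMax_eq_sSup]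
  by_cases hb : BddAbove (avgSet μ T φ x)
  · obtain ⟨r, hr⟩ := avgSet_nonempty T φ x
    exact le_trans (avgSet_nonneg T φ x r hr) (le_csSup hb hr)
  · rw [Real.sSup_of_not_bddAbove hb]

theorem exists_lt_of_lt_trMax {T : DTree X μ} {φ : X → ℝ} {x : X} {c : ℝ}
    (h : c < trMax μ T φ x) :
    ∃ J ∈ T.mem, x ∈ J ∧ c < trAvg μ (fun y => |φ y|) J := by
  rw [trMax_eq_sSup] at h
  by_cases hb : BddAbove (avgSet μ T φ x)
  · obtain ⟨r, ⟨J, hJ, hxJ, rfl⟩, hcr⟩ :=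
      exists_lt_of_lt_csSup (avgSet_nonempty T φ x) h
    exact ⟨J, hJ, hxJ, hcr⟩
  · rw [Real.sSup_of_not_bddAbove hb] at h
    exact ⟨univ, T.top_mem, mem_univ x,
      lt_of_lt_of_le h (avg_abs_nonneg μ φ univ)⟩

theorem le_trMax {T : DTree X μ} {φ : X → ℝ} {x : X}
    (hb : BddAbove (avgSet μ T φ x)) {J : Set X} (hJ : J ∈ T.mem) (hxJ : x ∈ J) :
    trAvg μ (fun y => |φ y|) J ≤ trMax μ T φ x :=
  le_csSup hb ⟨J, hJ, hxJ, rfl⟩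

/-- The set of points where the family of averages is unbounded. -/
def trOmega (μ : Measure X) (T : DTree X μ) (φ : X → ℝ) : Set X :=
  {x | ¬ BddAbove (avgSet μ T φ x)}

theorem trOmega_eq (μ : Measure X) (T : DTree X μ) (φ : X → ℝ) :
    trOmega μ T φ =
      ⋂ n : ℕ, ⋃ J ∈ {J | J ∈ T.mem ∧ (n : ℝ) < trAvg μ (fun y => |φ y|) J}, J := by
  ext x
  simp only [trOmega, mem_setOf_eq, mem_iInter, mem_iUnion, exists_prop]
  constructor
  · intro h n
    have : ¬ (∀ r ∈ avgSet μ T φ x, r ≤ (n : ℝ)) := fun hub => h ⟨n, hub⟩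
    push_neg at this
    obtain ⟨r, ⟨J, hJ, hxJ, rfl⟩, hr⟩ := this
    exact ⟨J, ⟨hJ, hr⟩, hxJ⟩
  · intro h ⟨b, hb⟩
    obtain ⟨n, hn⟩ := exists_nat_gt b
    obtain ⟨J, ⟨hJ, hnJ⟩, hxJ⟩ := h n
    exact absurd (hb ⟨J, hJ, hxJ, rfl⟩) (by linarith)

theorem measurableSet_trOmega (T : DTree X μ) (φ : X → ℝ) :
    MeasurableSet (trOmega μ T φ) := by
  rw [trOmega_eq]
  exact MeasurableSet.iInter fun n =>
    MeasurableSet.biUnion ((tree_facts T).1.mono (sep_subset _ _))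
      (fun J hJ => T.meas J hJ.1)

theorem trMax_eq_zero_of_mem_trOmega {T : DTree X μ} {φ : X → ℝ} {x : X}
    (h : x ∈ trOmega μ T φ) : trMax μ T φ x = 0 := by
  rw [trMax_eq_sSup, Real.sSup_of_not_bddAbove h]

theorem preimage_Ioi_trMax (T : DTree X μ) (φ : X → ℝ) {c : ℝ} (hc : 0 ≤ c) :
    {x | c < trMax μ T φ x} =
      (⋃ J ∈ {J | J ∈ T.mem ∧ c < trAvg μ (fun y => |φ y|) J}, J) \ trOmega μ T φ := by
  ext x
  simp only [mem_setOf_eq, mem_diff, mem_iUnion, exists_prop]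
  constructor
  · intro h
    have hb : BddAbove (avgSet μ T φ x) := by
      by_contra hb
      rw [trMax_eq_sSup, Real.sSup_of_not_bddAbove hb] at h
      exact absurd (lt_of_le_of_lt hc h) (lt_irrefl _)
    obtain ⟨J, hJ, hxJ, hcJ⟩ := exists_lt_of_lt_trMax h
    exact ⟨⟨J, ⟨hJ, hcJ⟩, hxJ⟩, fun hx => hx hb⟩
  · rintro ⟨⟨J, ⟨hJ, hcJ⟩, hxJ⟩, hx⟩
    have hb : BddAbove (avgSet μ T φ x) := not_not.1 hx
    exact lt_of_lt_of_le hcJ (le_trMax hb hJ hxJ)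

theorem measurable_trMax (T : DTree X μ) (φ : X → ℝ) :
    Measurable (trMax μ T φ) := by
  apply measurable_of_Ioi
  intro c
  rcases lt_or_ge c 0 with hc | hc
  · have : trMax μ T φ ⁻¹' Ioi c = univ := by
      ext x; simp only [mem_preimage, mem_Ioi, mem_univ, iff_true]
      exact lt_of_lt_of_le hc (trMax_nonneg T φ x)
    rw [this]; exact MeasurableSet.univ
  · have : trMax μ T φ ⁻¹' Ioi c = {x | c < trMax μ T φ x} := rfl
    rw [this, preimage_Ioi_trMax T φ hc]
    exact MeasurableSet.diff
      (MeasurableSet.biUnion ((tree_facts T).1.mono (sep_subset _ _))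
        (fun J hJ => T.meas J hJ.1))
      (measurableSet_trOmega T φ)


theorem avg_lt_lintegral [IsProbabilityMeasure μ] (T : DTree X μ) {φ : X → ℝ}
    (h0 : ∀ x, 0 ≤ φ x) (hint : Integrable φ μ) {J : Set X} (hJ : J ∈ T.mem)
    {c : ℝ} (hc : 0 ≤ c) (h : c < trAvg μ (fun y => |φ y|) J) :
    ENNReal.ofReal c * μ J ≤ ∫⁻ x in J, ENNReal.ofReal (φ x) ∂μ := by
  have habs : (fun y => |φ y|) = φ := funext fun y => abs_of_nonneg (h0 y)
  rw [habs] at h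
  have hμ0 : μ J ≠ 0 := (T.pos J hJ).ne'
  have hμt : μ J ≠ ⊤ := measure_ne_top μ J
  have htR : 0 < (μ J).toReal := ENNReal.toReal_pos hμ0 hμt
  have h1 : c * (μ J).toReal < ∫ x in J, φ x ∂μ := by
    have := mul_lt_mul_of_pos_right h htR
    rwa [trAvg, mul_comm ((μ J).toReal⁻¹ * _) _, ← mul_assoc,
      mul_inv_cancel₀ htR.ne', one_mul] at this
  have h2 : ∫ x in J, φ x ∂μ = (∫⁻ x in J, ENNReal.ofReal (φ x) ∂μ).toReal := by
    exact integral_eq_lintegral_of_nonneg_ae (Filter.Eventually.of_forall h0)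
      hint.aestronglyMeasurable.restrict
  have hfin : ∫⁻ x in J, ENNReal.ofReal (φ x) ∂μ ≠ ⊤ :=
    (hint.restrict (s := J)).lintegral_lt_top.ne
  calc ENNReal.ofReal c * μ J
      = ENNReal.ofReal (c * (μ J).toReal) := by
        rw [ENNReal.ofReal_mul hc, ENNReal.ofReal_toReal hμt]
    _ ≤ ENNReal.ofReal ((∫⁻ x in J, ENNReal.ofReal (φ x) ∂μ).toReal) := by
        exact ENNReal.ofReal_le_ofReal (h2 ▸ h1.le)
    _ = ∫⁻ x in J, ENNReal.ofReal (φ x) ∂μ := ENNReal.ofReal_toReal hfin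

theorem cover [IsProbabilityMeasure μ] (T : DTree X μ) {φ : X → ℝ}
    (h0 : ∀ x, 0 ≤ φ x) (hint : Integrable φ μ) {c : ℝ} (hc : 0 < c)
    {𝒥 : Set (Set X)} (h𝒥 : 𝒥 ⊆ T.mem)
    (havg : ∀ J ∈ 𝒥, c < trAvg μ (fun y => |φ y|) J) :
    ENNReal.ofReal c * μ (⋃₀ 𝒥) ≤ ∫⁻ x in ⋃₀ 𝒥, ENNReal.ofReal (φ x) ∂μ := by
  classical
  set M := {J ∈ 𝒥 | ∀ K ∈ 𝒥, J ⊆ K → J = K} with hM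
  have hMsub : M ⊆ 𝒥 := sep_subset _ _
  have hUnion : ⋃₀ 𝒥 = ⋃₀ M := by
    apply Subset.antisymm
    · rintro x ⟨J, hJ, hxJ⟩
      have hFfin : {K ∈ 𝒥 | J ⊆ K}.Finite := by
        apply Set.Finite.subset ((tree_facts T).2.2 J (h𝒥 hJ))
        rintro K ⟨hK, hJK⟩; exact ⟨h𝒥 hK, hJK⟩
      obtain ⟨K₀, hK₀F, hK₀max⟩ :=
        Set.Finite.exists_maximalFor id _ hFfin ⟨J, hJ, subset_rfl⟩
      refine ⟨K₀, ⟨hK₀F.1, ?_⟩, hK₀F.2 hxJ⟩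
      intro K hK hK₀K
      exact Subset.antisymm hK₀K (hK₀max ⟨hK, hK₀F.2.trans hK₀K⟩ hK₀K)
    · exact sUnion_mono hMsub
  have hdisjM : M.Pairwise Disjoint := by
    intro J hJ K hK hne
    rcases (tree_facts T).2.1 J (h𝒥 (hMsub hJ)) K (h𝒥 (hMsub hK)) with h | h | h
    · exact absurd (hJ.2 K (hMsub hK) h) hne
    · exact absurd ((hK.2 J (hMsub hJ) h).symm) hne
    · exact h
  have hcnt : M.Countable := (tree_facts T).1.mono (hMsub.trans h𝒥)
  have hmeas : ∀ J ∈ M, MeasurableSet J := fun J hJ => T.meas J (h𝒥 (hMsub hJ))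
  set ν := μ.withDensity (fun x => ENNReal.ofReal (φ x)) with hν
  have hUm : MeasurableSet (⋃₀ M) := MeasurableSet.sUnion hcnt hmeas
  calc ENNReal.ofReal c * μ (⋃₀ 𝒥) = ENNReal.ofReal c * μ (⋃₀ M) := by rw [hUnion]
    _ = ENNReal.ofReal c * ∑' J : M, μ J := by rw [measure_sUnion hcnt hdisjM hmeas]
    _ = ∑' J : M, ENNReal.ofReal c * μ J := ENNReal.tsum_mul_left.symm
    _ ≤ ∑' J : M, ν J := by
        apply ENNReal.tsum_le_tsum
        rintro ⟨J, hJ⟩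
        rw [hν, withDensity_apply _ (hmeas J hJ)]
        exact avg_lt_lintegral T h0 hint (h𝒥 (hMsub hJ)) hc.le (havg J (hMsub hJ))
    _ = ν (⋃₀ M) := (measure_sUnion hcnt hdisjM hmeas).symm
    _ = ∫⁻ x in ⋃₀ M, ENNReal.ofReal (φ x) ∂μ := withDensity_apply _ hUm
    _ = ∫⁻ x in ⋃₀ 𝒥, ENNReal.ofReal (φ x) ∂μ := by rw [hUnion]

theorem omega_null [IsProbabilityMeasure μ] (T : DTree X μ) {φ : X → ℝ}
    (h0 : ∀ x, 0 ≤ φ x) (hint : Integrable φ μ) : μ (trOmega μ T φ) = 0 := by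
  set C := ∫⁻ x, ENNReal.ofReal (φ x) ∂μ with hC
  have hCt : C ≠ ⊤ := hint.lintegral_lt_top.ne
  have key : ∀ n : ℕ, 0 < n → (n : ENNReal) * μ (trOmega μ T φ) ≤ C := by
    intro n hn
    set S := {J | J ∈ T.mem ∧ (n : ℝ) < trAvg μ (fun y => |φ y|) J} with hS
    have hsub : trOmega μ T φ ⊆ ⋃₀ S := by
      rw [trOmega_eq]
      intro x hx
      rw [sUnion_eq_biUnion]
      exact mem_iInter.1 hx n
    have hcov := cover T h0 hint (c := (n:ℝ)) (by exact_mod_cast hn)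
      (𝒥 := S) (fun J hJ => hJ.1) (fun J hJ => hJ.2)
    calc (n : ENNReal) * μ (trOmega μ T φ)
        = ENNReal.ofReal n * μ (trOmega μ T φ) := by rw [ENNReal.ofReal_natCast]
      _ ≤ ENNReal.ofReal n * μ (⋃₀ S) := by
          exact mul_le_mul_right (measure_mono hsub) _
      _ ≤ ∫⁻ x in ⋃₀ S, ENNReal.ofReal (φ x) ∂μ := hcov
      _ ≤ C := setLIntegral_le_lintegral _ _
  by_contra hμ
  have hμt : μ (trOmega μ T φ) ≠ ⊤ := measure_ne_top μ _
  have hdiv : C / μ (trOmega μ T φ) ≠ ⊤ :=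
    (ENNReal.div_lt_top hCt hμ).ne
  obtain ⟨n, hn⟩ := ENNReal.exists_nat_gt hdiv
  have h1 : C < n * μ (trOmega μ T φ) :=
    (ENNReal.div_lt_iff (Or.inl hμ) (Or.inl hμt)).1 hn
  have hn0 : 0 < n := by
    rcases Nat.eq_zero_or_pos n with rfl | h
    · simp at h1
    · exact h
  exact absurd (lt_of_lt_of_le h1 (key n hn0)) (lt_irrefl _)


theorem trAvg_abs {φ : X → ℝ} (h0 : ∀ x, 0 ≤ φ x) (I : Set X) :
    trAvg μ (fun y => |φ y|) I = trAvg μ φ I := by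
  have : (fun y => |φ y|) = φ := funext fun y => abs_of_nonneg (h0 y)
  rw [this]

theorem measurableSet_of_mem_trS [IsProbabilityMeasure μ] {T : DTree X μ} {φ : X → ℝ}
    {I₀ : Set X} (hI : I₀ ∈ trS μ T φ) : MeasurableSet I₀ := by
  rcases hI with ⟨hmem, _⟩ | h
  · exact T.meas I₀ hmem
  · rw [mem_singleton_iff] at h; rw [h]; exact MeasurableSet.univ

theorem measure_pos_of_mem_trS [IsProbabilityMeasure μ] {T : DTree X μ} {φ : X → ℝ}
    {I₀ : Set X} (hI : I₀ ∈ trS μ T φ) : 0 < μ I₀ := by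
  rcases hI with ⟨hmem, _⟩ | h
  · exact T.pos I₀ hmem
  · rw [mem_singleton_iff] at h; rw [h]; simp

/-- Averages over supersets of an element of `S_φ` are at most its average. -/
theorem ancestor_avg_le [IsProbabilityMeasure μ] {T : DTree X μ} {φ : X → ℝ}
    (h0 : ∀ x, 0 ≤ φ x) (hint : Integrable φ μ)
    {I₀ : Set X} (hI : I₀ ∈ trS μ T φ) :
    ∀ J ∈ T.mem, I₀ ⊆ J → trAvg μ (fun y => |φ y|) J ≤ trAvg μ φ I₀ := by
  intro J hJ hIJ
  rcases hI with ⟨hmem, hApos⟩ | hU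
  · have hΩ : μ (trOmega μ T φ) = 0 := omega_null T h0 hint
    have hz : ∃ z ∈ trA μ T φ I₀, z ∉ trOmega μ T φ := by
      by_contra h
      push_neg at h
      exact absurd (le_trans (measure_mono h) hΩ.le) hApos.not_ge
    obtain ⟨z, hzA, hzΩ⟩ := hz
    obtain ⟨_, _, hzI₀, hzmax, _⟩ := hzA
    have hb : BddAbove (avgSet μ T φ z) := not_not.1 hzΩ
    calc trAvg μ (fun y => |φ y|) J ≤ trMax μ T φ z := le_trMax hb hJ (hIJ hzI₀)
      _ = trAvg μ φ I₀ := hzmax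
  · rw [mem_singleton_iff] at hU
    subst hU
    have : J = univ := univ_subset_iff.1 hIJ
    subst this
    rw [trAvg_abs h0]

/-- The weak type (1,1) inequality on an element of `S_φ`. -/
theorem weak_type [IsProbabilityMeasure μ] {T : DTree X μ} {φ : X → ℝ}
    (h0 : ∀ x, 0 ≤ φ x) (hint : Integrable φ μ)
    {I₀ : Set X} (hI : I₀ ∈ trS μ T φ) {t : ℝ} (ht : trAvg μ φ I₀ < t) (ht0 : 0 < t) :
    ENNReal.ofReal t * μ {x | x ∈ I₀ ∧ t < trMax μ T φ x} ≤
      ∫⁻ x in {x | x ∈ I₀ ∧ t < trMax μ T φ x}, ENNReal.ofReal (φ x) ∂μ := by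
  classical
  set D := {x | x ∈ I₀ ∧ t < trMax μ T φ x} with hD
  set 𝒥 := {J | J ∈ T.mem ∧ J ⊆ I₀ ∧ t < trAvg μ (fun y => |φ y|) J} with h𝒥
  set U := ⋃₀ 𝒥 with hU
  have h𝒥sub : 𝒥 ⊆ T.mem := fun J hJ => hJ.1
  have hDsub : D ⊆ U := by
    rintro x ⟨hxI₀, hxmax⟩
    obtain ⟨J, hJ, hxJ, htJ⟩ := exists_lt_of_lt_trMax hxmax
    have hJI₀ : J ⊆ I₀ := by
      have hIc := hI
      rcases hIc with ⟨hmem, _⟩ | hUniv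
      · rcases (tree_facts T).2.1 J hJ I₀ hmem with h | h | h
        · exact h
        · exact absurd (lt_of_lt_of_le htJ (ancestor_avg_le h0 hint hI J hJ h)) ht.asymm
        · exact absurd (Set.disjoint_left.1 h hxJ hxI₀) (fun h => h)
      · rw [mem_singleton_iff] at hUniv; rw [hUniv]; exact subset_univ J
    exact ⟨J, ⟨hJ, hJI₀, htJ⟩, hxJ⟩
  have hDmeas : MeasurableSet D := by
    have : D = I₀ ∩ {x | t < trMax μ T φ x} := by ext x; exact Iff.rfl
    rw [this]
    exact (measurableSet_of_mem_trS hI).inter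
      (measurableSet_lt measurable_const (measurable_trMax T φ))
  have hUmeas : MeasurableSet U :=
    MeasurableSet.sUnion ((tree_facts T).1.mono h𝒥sub) (fun J hJ => T.meas J (hJ.1))
  have hnull : μ (U \ D) = 0 := by
    apply measure_mono_null _ (omega_null T h0 hint)
    rintro x ⟨⟨J, hJ, hxJ⟩, hxD⟩
    by_contra hxΩ
    have hb : BddAbove (avgSet μ T φ x) := not_not.1 hxΩ
    exact hxD ⟨hJ.2.1 hxJ, lt_of_lt_of_le hJ.2.2 (le_trMax hb hJ.1 hxJ)⟩
  calc ENNReal.ofReal t * μ D ≤ ENNReal.ofReal t * μ U :=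
        mul_le_mul_right (measure_mono hDsub) _
    _ ≤ ∫⁻ x in U, ENNReal.ofReal (φ x) ∂μ := cover T h0 hint ht0 h𝒥sub (fun J hJ => hJ.2.2)
    _ ≤ ∫⁻ x in D ∪ (U \ D), ENNReal.ofReal (φ x) ∂μ := by
        apply lintegral_mono_set
        intro x hx
        by_cases h : x ∈ D
        · exact Or.inl h
        · exact Or.inr ⟨hx, h⟩
    _ ≤ ∫⁻ x in D, ENNReal.ofReal (φ x) ∂μ + ∫⁻ x in U \ D, ENNReal.ofReal (φ x) ∂μ :=
        lintegral_union_le _ _ _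
    _ = ∫⁻ x in D, ENNReal.ofReal (φ x) ∂μ := by
        rw [setLIntegral_measure_zero _ _ hnull, add_zero]


theorem measurable_rpow_const (c : ℝ) : Measurable (fun t : ℝ => t ^ c) := by fun_prop

theorem lint_Ioc_rpow {y q : ℝ} (hy : 0 < y) (hq : 0 < q) :
    ∫⁻ t in Ioc 0 y, ENNReal.ofReal (t ^ (q - 1)) = ENNReal.ofReal (y ^ q / q) := by
  have hint : IntegrableOn (fun t : ℝ => t ^ (q - 1)) (Ioc 0 y) volume := by
    have := intervalIntegral.intervalIntegrable_rpow' (a := 0) (b := y) (r := q - 1)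
      (by linarith)
    rwa [intervalIntegrable_iff_integrableOn_Ioc_of_le hy.le] at this
  rw [← ofReal_integral_eq_lintegral_ofReal hint]
  · congr 1
    rw [← intervalIntegral.integral_of_le hy.le, integral_rpow (Or.inl (by linarith))]
    rw [sub_add_cancel, Real.zero_rpow hq.ne', sub_zero]
  · filter_upwards [self_mem_ae_restrict measurableSet_Ioc] with t ht
    exact Real.rpow_nonneg ht.1.le _

theorem lint_Ioo_rpow2 {y Y q : ℝ} (hy : 0 < y) (hq1 : q < 1) :
    ∫⁻ t in Ioo y Y, ENNReal.ofReal (t ^ (q - 2)) =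
      ENNReal.ofReal ((y ^ (q - 1) - (max Y y) ^ (q - 1)) / (1 - q)) := by
  rcases le_or_gt Y y with h | h
  · rw [Ioo_eq_empty (by exact fun hlt => absurd h (not_le.2 hlt)), max_eq_right h]
    simp
  · rw [max_eq_left h.le]
    have hint : IntegrableOn (fun t : ℝ => t ^ (q - 2)) (Ioo y Y) volume := by
      apply IntegrableOn.mono_set _ Ioo_subset_Icc_self
      apply ContinuousOn.integrableOn_Icc
      apply ContinuousOn.rpow_const continuousOn_id
      intro t ht
      exact Or.inl (ne_of_gt (lt_of_lt_of_le hy ht.1))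
    rw [← ofReal_integral_eq_lintegral_ofReal hint]
    · congr 1
      rw [← integral_Ioc_eq_integral_Ioo, ← intervalIntegral.integral_of_le h.le,
        integral_rpow (Or.inr ⟨by intro hc; rw [show q - 2 = -1 ↔ q = 1 by constructor <;> (intro; linarith)] at hc; linarith, by
          intro hc
          rw [uIcc_of_le h.le] at hc
          exact absurd hc.1 (not_le.2 hy)⟩)]
      have h2 : q - 2 + 1 = q - 1 := by ring
      rw [h2]
      rw [div_eq_div_iff (by intro hc; rw [sub_eq_zero] at hc; linarith [hc.symm]; ) (by intro hc; rw [sub_eq_zero] at hc; linarith [hc.symm])]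
      ring
    · filter_upwards [self_mem_ae_restrict measurableSet_Ioo] with t ht
      exact Real.rpow_nonneg (le_trans hy.le ht.1.le) _

theorem amgm_pt {q β u v : ℝ} (hq0 : 0 < q) (hq1 : q < 1) (hβ : 0 < β)
    (hu : 0 ≤ u) (hv : 0 < v) :
    (β + 1) ^ q * u ^ q ≤ q * ((β + 1) * u * v ^ (q - 1)) + (1 - q) * v ^ q := by
  have key := Real.geom_mean_le_arith_mean2_weighted (w₁ := q) (w₂ := 1 - q)
    (p₁ := (β + 1) * u * v ^ (q - 1)) (p₂ := v ^ q) hq0.le (by linarith)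
    (by positivity) (Real.rpow_nonneg hv.le _) (by ring)
  have hlhs : ((β + 1) * u * v ^ (q - 1)) ^ q * (v ^ q) ^ (1 - q)
      = (β + 1) ^ q * u ^ q := by
    rw [Real.mul_rpow (by positivity) (Real.rpow_nonneg hv.le _),
      Real.mul_rpow (by positivity) hu,
      ← Real.rpow_mul hv.le, ← Real.rpow_mul hv.le, mul_assoc, ← Real.rpow_add hv,
      show (q - 1) * q + q * (1 - q) = 0 by ring, Real.rpow_zero, mul_one]
  calc (β + 1) ^ q * u ^ q
      = ((β + 1) * u * v ^ (q - 1)) ^ q * (v ^ q) ^ (1 - q) := hlhs.symm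
    _ ≤ q * ((β + 1) * u * v ^ (q - 1)) + (1 - q) * v ^ q := key


theorem lintegral_ofReal_restrict [IsProbabilityMeasure μ] {T : DTree X μ} {φ : X → ℝ}
    (h0 : ∀ x, 0 ≤ φ x) (hint : Integrable φ μ)
    {I₀ : Set X} (hI : I₀ ∈ trS μ T φ) :
    ∫⁻ x in I₀, ENNReal.ofReal (φ x) ∂μ = ENNReal.ofReal (trAvg μ φ I₀) * μ I₀ := by
  have hμ0 : μ I₀ ≠ 0 := (measure_pos_of_mem_trS hI).ne'
  have hμt : μ I₀ ≠ ⊤ := measure_ne_top μ I₀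
  have htR : 0 < (μ I₀).toReal := ENNReal.toReal_pos hμ0 hμt
  have h1 : ∫ x in I₀, φ x ∂μ = trAvg μ φ I₀ * (μ I₀).toReal := by
    rw [trAvg]; field_simp
  rw [← ofReal_integral_eq_lintegral_ofReal hint.restrict
    (Filter.Eventually.of_forall h0), h1,
    ENNReal.ofReal_mul' ENNReal.toReal_nonneg, ENNReal.ofReal_toReal hμt]

theorem perI [IsProbabilityMeasure μ] {T : DTree X μ} {q : ℝ} (hq0 : 0 < q) (hq1 : q < 1)
    {φ : X → ℝ} (hφm : Measurable φ) (h0 : ∀ x, 0 ≤ φ x) (hint : Integrable φ μ)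
    {I₀ : Set X} (hI : I₀ ∈ trS μ T φ) (hy : 0 < trAvg μ φ I₀)
    {β : ℝ} (hβ : 0 < β) :
    ENNReal.ofReal ((1 - q) * β) * (∫⁻ x in I₀, ENNReal.ofReal (trMax μ T φ x ^ q) ∂μ)
      + ENNReal.ofReal ((β + 1) ^ q) * (∫⁻ x in I₀, ENNReal.ofReal (φ x ^ q) ∂μ)
    ≤ ENNReal.ofReal ((β + 1) * trAvg μ φ I₀ ^ q) * μ I₀ := by
  classical
  set y := trAvg μ φ I₀ with hydef
  set g := trMax μ T φ with hgdef
  set G := fun x => max (g x) y with hGdef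
  set Φ := fun x => ENNReal.ofReal (φ x) with hΦdef
  have hgm : Measurable g := measurable_trMax T φ
  have hGm : Measurable G := hgm.max measurable_const
  have hg0 : ∀ x, 0 ≤ g x := fun x => trMax_nonneg T φ x
  have hGy : ∀ x, y ≤ G x := fun x => le_max_right _ _
  have hG0 : ∀ x, 0 < G x := fun x => lt_of_lt_of_le hy (hGy x)
  have hμt : μ I₀ ≠ ⊤ := measure_ne_top μ I₀
  set A := ∫⁻ x in I₀, ENNReal.ofReal (g x ^ q) ∂μ with hAdef
  set A' := ∫⁻ x in I₀, ENNReal.ofReal (G x ^ q) ∂μ with hA'def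
  set B := ∫⁻ x in I₀, ENNReal.ofReal (φ x ^ q) ∂μ with hBdef
  set PP := ∫⁻ x in I₀, Φ x * ENNReal.ofReal (q * G x ^ (q - 1)) ∂μ with hPPdef
  set cc := fun x => (y ^ (q - 1) - G x ^ (q - 1)) / (1 - q) with hccdef
  have hcc0 : ∀ x, 0 ≤ cc x := by
    intro x
    apply div_nonneg _ (by linarith)
    rw [sub_nonneg]
    exact Real.rpow_le_rpow_of_nonpos hy (hGy x) (by linarith)
  have hccm : Measurable cc :=
    (measurable_const.sub ((measurable_rpow_const (q - 1)).comp hGm)).div measurable_const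
  -- the average in lintegral form
  have hΦint : ∫⁻ x in I₀, Φ x ∂μ = ENNReal.ofReal y * μ I₀ :=
    lintegral_ofReal_restrict h0 hint hI
  -- Layer cake
  have hLC : A' = ENNReal.ofReal q *
      ∫⁻ t in Ioi (0:ℝ), μ.restrict I₀ {a | t < G a} * ENNReal.ofReal (t ^ (q - 1)) := by
    exact lintegral_rpow_eq_lintegral_meas_lt_mul (μ.restrict I₀)
      (Filter.Eventually.of_forall fun x => le_trans hy.le (hGy x)) hGm.aemeasurable hq0
  have hsplit : ∫⁻ t in Ioi (0:ℝ), μ.restrict I₀ {a | t < G a} * ENNReal.ofReal (t ^ (q - 1))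
      = (∫⁻ t in Ioc 0 y, μ.restrict I₀ {a | t < G a} * ENNReal.ofReal (t ^ (q - 1)))
        + ∫⁻ t in Ioi y, μ.restrict I₀ {a | t < G a} * ENNReal.ofReal (t ^ (q - 1)) := by
    rw [← Ioc_union_Ioi_eq_Ioi hy.le,
      lintegral_union measurableSet_Ioi (Ioc_disjoint_Ioi le_rfl)]
  have hpiece1 : (∫⁻ t in Ioc 0 y, μ.restrict I₀ {a | t < G a} * ENNReal.ofReal (t ^ (q - 1)))
      ≤ μ I₀ * ENNReal.ofReal (y ^ q / q) := by
    calc ∫⁻ t in Ioc 0 y, μ.restrict I₀ {a | t < G a} * ENNReal.ofReal (t ^ (q - 1))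
        ≤ ∫⁻ t in Ioc 0 y, μ I₀ * ENNReal.ofReal (t ^ (q - 1)) := by
          apply lintegral_mono
          intro t
          exact mul_le_mul_left
            ((measure_mono (subset_univ _)).trans_eq (Measure.restrict_apply_univ _)) _
      _ = μ I₀ * ∫⁻ t in Ioc 0 y, ENNReal.ofReal (t ^ (q - 1)) :=
          lintegral_const_mul' _ _ hμt
      _ = μ I₀ * ENNReal.ofReal (y ^ q / q) := by rw [lint_Ioc_rpow hy hq0]
  -- rewrite restricted measure of superlevel sets
  have hDt : ∀ t : ℝ, y < t →
      μ.restrict I₀ {a | t < G a} = μ {x | x ∈ I₀ ∧ t < g x} := by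
    intro t ht
    rw [Measure.restrict_apply (measurableSet_lt measurable_const hGm)]
    congr 1
    ext x
    constructor
    · rintro ⟨h1, h2⟩
      refine ⟨h2, ?_⟩
      have h1' : t < max (g x) y := h1
      rcases lt_max_iff.1 h1' with h | h
      · exact h
      · exact absurd h (not_lt.2 ht.le)
    · rintro ⟨h1, h2⟩
      exact ⟨show t < max (g x) y from lt_max_iff.2 (Or.inl h2), h1⟩
  have hIndic : ∀ t : ℝ, ∫⁻ x in {x | x ∈ I₀ ∧ t < g x}, Φ x ∂μ
      = ∫⁻ x in I₀, ({x | t < g x}).indicator Φ x ∂μ := by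
    intro t
    rw [lintegral_indicator (measurableSet_lt measurable_const hgm),
      Measure.restrict_restrict (measurableSet_lt measurable_const hgm)]
    have hset : {x | t < g x} ∩ I₀ = {x | x ∈ I₀ ∧ t < g x} := by
      ext x
      simp only [mem_inter_iff, mem_setOf_eq]
      exact and_comm
    rw [hset]
  have hpiece2 : (∫⁻ t in Ioi y, μ.restrict I₀ {a | t < G a} * ENNReal.ofReal (t ^ (q - 1)))
      ≤ ∫⁻ x in I₀, Φ x * ENNReal.ofReal (cc x) ∂μ := by
    have hmono : (∫⁻ t in Ioi y, μ.restrict I₀ {a | t < G a} * ENNReal.ofReal (t ^ (q - 1)))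
        ≤ ∫⁻ t in Ioi y, (∫⁻ x in I₀, ({x | t < g x}).indicator Φ x ∂μ)
            * ENNReal.ofReal (t ^ (q - 2)) := by
      apply lintegral_mono_ae
      filter_upwards [self_mem_ae_restrict measurableSet_Ioi] with t ht
      have ht0 : (0:ℝ) < t := lt_trans hy ht
      have hot0 : ENNReal.ofReal t ≠ 0 := (ENNReal.ofReal_pos.2 ht0).ne'
      have hweak : ENNReal.ofReal t * μ {x | x ∈ I₀ ∧ t < g x}
          ≤ ∫⁻ x in {x | x ∈ I₀ ∧ t < g x}, Φ x ∂μ :=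
        weak_type h0 hint hI ht ht0
      have hcoeff : (ENNReal.ofReal t)⁻¹ * ENNReal.ofReal (t ^ (q - 1))
          = ENNReal.ofReal (t ^ (q - 2)) := by
        have h1 : t ^ (q - 1) = t ^ (q - 2) * t := by
          rw [← Real.rpow_add_one (ne_of_gt ht0)]
          congr 1
          ring
        rw [h1, ENNReal.ofReal_mul (Real.rpow_nonneg ht0.le _), mul_comm (ENNReal.ofReal t)⁻¹,
          mul_assoc, ENNReal.mul_inv_cancel hot0 ENNReal.ofReal_ne_top, mul_one]
      calc μ.restrict I₀ {a | t < G a} * ENNReal.ofReal (t ^ (q - 1))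
          = μ {x | x ∈ I₀ ∧ t < g x} * ENNReal.ofReal (t ^ (q - 1)) := by rw [hDt t ht]
        _ ≤ ((ENNReal.ofReal t)⁻¹ * ∫⁻ x in {x | x ∈ I₀ ∧ t < g x}, Φ x ∂μ)
              * ENNReal.ofReal (t ^ (q - 1)) := by
            apply mul_le_mul_left
            calc μ {x | x ∈ I₀ ∧ t < g x}
                = (ENNReal.ofReal t)⁻¹ * (ENNReal.ofReal t * μ {x | x ∈ I₀ ∧ t < g x}) := by
                  rw [← mul_assoc, ENNReal.inv_mul_cancel hot0 ENNReal.ofReal_ne_top, one_mul]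
              _ ≤ (ENNReal.ofReal t)⁻¹ * ∫⁻ x in {x | x ∈ I₀ ∧ t < g x}, Φ x ∂μ :=
                  mul_le_mul_right hweak _
        _ = (∫⁻ x in {x | x ∈ I₀ ∧ t < g x}, Φ x ∂μ)
              * ((ENNReal.ofReal t)⁻¹ * ENNReal.ofReal (t ^ (q - 1))) := by ring
        _ = (∫⁻ x in I₀, ({x | t < g x}).indicator Φ x ∂μ) * ENNReal.ofReal (t ^ (q - 2)) := by
            rw [hcoeff, hIndic t]
    apply le_trans hmono
    -- Tonelli
    set F : ℝ → X → ENNReal := fun t x =>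
      ({p : ℝ × X | p.1 < g p.2}).indicator
        (fun p => ENNReal.ofReal (φ p.2) * ENNReal.ofReal (p.1 ^ (q - 2))) (t, x) with hFdef
    have hFm : Measurable (Function.uncurry F) := by
      have : Function.uncurry F = ({p : ℝ × X | p.1 < g p.2}).indicator
          (fun p => ENNReal.ofReal (φ p.2) * ENNReal.ofReal (p.1 ^ (q - 2))) := by
        funext p
        simp only [Function.uncurry, hFdef]
      rw [this]
      exact Measurable.indicator
        (((hφm.comp measurable_snd).ennreal_ofReal).mul
          (((measurable_rpow_const (q - 2)).comp measurable_fst).ennreal_ofReal))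
        (measurableSet_lt measurable_fst (hgm.comp measurable_snd))
    have hstep : ∀ t : ℝ, (∫⁻ x in I₀, ({x | t < g x}).indicator Φ x ∂μ)
        * ENNReal.ofReal (t ^ (q - 2)) = ∫⁻ x in I₀, F t x ∂μ := by
      intro t
      rw [← lintegral_mul_const' _ _ ENNReal.ofReal_ne_top]
      congr 1
      funext x
      simp only [hFdef]
      by_cases h : t < g x
      · rw [Set.indicator_of_mem (by exact h : x ∈ {x | t < g x}),
          Set.indicator_of_mem (by exact h : ((t, x) : ℝ × X) ∈ {p : ℝ × X | p.1 < g p.2})]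
      · rw [Set.indicator_of_notMem (by exact h : x ∉ {x | t < g x}),
          Set.indicator_of_notMem (by exact h : ((t, x) : ℝ × X) ∉ {p : ℝ × X | p.1 < g p.2}),
          zero_mul]
    have hswap : ∫⁻ t in Ioi y, ∫⁻ x in I₀, F t x ∂μ
        = ∫⁻ x in I₀, ∫⁻ t in Ioi y, F t x ∂(volume : Measure ℝ) ∂μ :=
      lintegral_lintegral_swap hFm.aemeasurable
    have hinner : ∀ x, (∫⁻ t in Ioi y, F t x ∂(volume : Measure ℝ))
        = Φ x * ENNReal.ofReal (cc x) := by
      intro x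
      have hFx : ∀ t, F t x = (Iio (g x)).indicator
          (fun t => Φ x * ENNReal.ofReal (t ^ (q - 2))) t := by
        intro t
        simp only [hFdef]
        by_cases h : t < g x
        · rw [Set.indicator_of_mem (by exact h : ((t, x) : ℝ × X) ∈ {p : ℝ × X | p.1 < g p.2}),
            Set.indicator_of_mem (by exact h : t ∈ Iio (g x))]
        · rw [Set.indicator_of_notMem
            (by exact h : ((t, x) : ℝ × X) ∉ {p : ℝ × X | p.1 < g p.2}),
            Set.indicator_of_notMem (by exact h : t ∉ Iio (g x))]
      simp only [hFx]
      rw [lintegral_indicator measurableSet_Iio,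
        Measure.restrict_restrict measurableSet_Iio, Iio_inter_Ioi,
        lintegral_const_mul' _ _ ENNReal.ofReal_ne_top, lint_Ioo_rpow2 hy hq1]
    rw [show (∫⁻ t in Ioi y, (∫⁻ x in I₀, ({x | t < g x}).indicator Φ x ∂μ)
        * ENNReal.ofReal (t ^ (q - 2)) ∂(volume : Measure ℝ))
        = ∫⁻ t in Ioi y, ∫⁻ x in I₀, F t x ∂μ ∂(volume : Measure ℝ) by
        congr 1; funext t; exact hstep t, hswap]
    exact le_of_eq (lintegral_congr fun x => hinner x)
  -- the combined KEY inequality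
  have hA' : A' ≤ ENNReal.ofReal (y ^ q) * μ I₀
      + ∫⁻ x in I₀, Φ x * ENNReal.ofReal (q * cc x) ∂μ := by
    rw [hLC, hsplit, mul_add]
    apply add_le_add
    · calc ENNReal.ofReal q * (∫⁻ t in Ioc 0 y, μ.restrict I₀ {a | t < G a}
            * ENNReal.ofReal (t ^ (q - 1)))
          ≤ ENNReal.ofReal q * (μ I₀ * ENNReal.ofReal (y ^ q / q)) :=
            mul_le_mul_right hpiece1 _
        _ = ENNReal.ofReal (y ^ q) * μ I₀ := by
            rw [← mul_assoc, mul_comm (ENNReal.ofReal q), mul_assoc,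
              ← ENNReal.ofReal_mul hq0.le, mul_div_cancel₀ _ hq0.ne', mul_comm]
    · calc ENNReal.ofReal q * (∫⁻ t in Ioi y, μ.restrict I₀ {a | t < G a}
            * ENNReal.ofReal (t ^ (q - 1)))
          ≤ ENNReal.ofReal q * ∫⁻ x in I₀, Φ x * ENNReal.ofReal (cc x) ∂μ :=
            mul_le_mul_right hpiece2 _
        _ = ∫⁻ x in I₀, Φ x * ENNReal.ofReal (q * cc x) ∂μ := by
            rw [← lintegral_const_mul' _ _ ENNReal.ofReal_ne_top]
            congr 1
            funext x
            rw [ENNReal.ofReal_mul hq0.le]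
            ring
  have hKEY : ENNReal.ofReal (1 - q) * A' + PP ≤ ENNReal.ofReal (y ^ q) * μ I₀ := by
    have h1 : ENNReal.ofReal (1 - q) * A' ≤
        ENNReal.ofReal ((1 - q) * y ^ q) * μ I₀
          + ∫⁻ x in I₀, Φ x * ENNReal.ofReal ((1 - q) * (q * cc x)) ∂μ := by
      calc ENNReal.ofReal (1 - q) * A'
          ≤ ENNReal.ofReal (1 - q) * (ENNReal.ofReal (y ^ q) * μ I₀
            + ∫⁻ x in I₀, Φ x * ENNReal.ofReal (q * cc x) ∂μ) := mul_le_mul_right hA' _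
        _ = ENNReal.ofReal ((1 - q) * y ^ q) * μ I₀
            + ∫⁻ x in I₀, Φ x * ENNReal.ofReal ((1 - q) * (q * cc x)) ∂μ := by
            rw [mul_add, ← mul_assoc, ← ENNReal.ofReal_mul (by linarith : (0:ℝ) ≤ 1 - q),
              ← lintegral_const_mul' _ _ ENNReal.ofReal_ne_top]
            congr 2
            funext x
            rw [ENNReal.ofReal_mul (by linarith : (0:ℝ) ≤ 1 - q)]
            ring
    have h2 : (∫⁻ x in I₀, Φ x * ENNReal.ofReal ((1 - q) * (q * cc x)) ∂μ) + PP
        = ENNReal.ofReal (q * y ^ (q - 1)) * (∫⁻ x in I₀, Φ x ∂μ) := by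
      rw [hPPdef, ← lintegral_add_left']
      · rw [← lintegral_const_mul' _ _ ENNReal.ofReal_ne_top]
        congr 1
        funext x
        have e1 : (1 - q) * (q * cc x) = q * (y ^ (q - 1) - G x ^ (q - 1)) := by
          have h1q : (1:ℝ) - q ≠ 0 := by linarith
          rw [hccdef]
          field_simp
        have e2 : 0 ≤ q * (y ^ (q - 1) - G x ^ (q - 1)) := by
          apply mul_nonneg hq0.le
          rw [sub_nonneg]
          exact Real.rpow_le_rpow_of_nonpos hy (hGy x) (by linarith)
        have e3 : 0 ≤ q * G x ^ (q - 1) :=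
          mul_nonneg hq0.le (Real.rpow_nonneg (hG0 x).le _)
        rw [← mul_add, e1, ← ENNReal.ofReal_add e2 e3]
        rw [mul_comm (ENNReal.ofReal _) (Φ x)]
        congr 2
        ring
      · exact ((hφm.ennreal_ofReal).mul
          ((measurable_const.mul (hccm.const_mul _)).ennreal_ofReal)).aemeasurable
    have h3 : ENNReal.ofReal (q * y ^ (q - 1)) * (ENNReal.ofReal y * μ I₀)
        = ENNReal.ofReal (q * y ^ q) * μ I₀ := by
      rw [← mul_assoc, ← ENNReal.ofReal_mul (mul_nonneg hq0.le (Real.rpow_nonneg hy.le _))]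
      congr 2
      rw [mul_assoc, ← Real.rpow_add_one hy.ne' (q - 1)]
      norm_num
    calc ENNReal.ofReal (1 - q) * A' + PP
        ≤ (ENNReal.ofReal ((1 - q) * y ^ q) * μ I₀
            + ∫⁻ x in I₀, Φ x * ENNReal.ofReal ((1 - q) * (q * cc x)) ∂μ) + PP :=
          add_le_add_left h1 _
      _ = ENNReal.ofReal ((1 - q) * y ^ q) * μ I₀
            + ENNReal.ofReal (q * y ^ (q - 1)) * (∫⁻ x in I₀, Φ x ∂μ) := by
          rw [add_assoc, h2]
      _ = ENNReal.ofReal ((1 - q) * y ^ q) * μ I₀ + ENNReal.ofReal (q * y ^ q) * μ I₀ := by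
          rw [hΦint, h3]
      _ = ENNReal.ofReal (y ^ q) * μ I₀ := by
          rw [← add_mul, ← ENNReal.ofReal_add
            (mul_nonneg (by linarith) (Real.rpow_nonneg hy.le _))
            (mul_nonneg hq0.le (Real.rpow_nonneg hy.le _))]
          congr 2
          ring
  -- AM-GM step
  have hAMGM : ENNReal.ofReal ((β + 1) ^ q) * B
      ≤ ENNReal.ofReal (β + 1) * PP + ENNReal.ofReal (1 - q) * A' := by
    have hpt : ∀ x, ENNReal.ofReal ((β + 1) ^ q) * ENNReal.ofReal (φ x ^ q)
        ≤ ENNReal.ofReal (β + 1) * (Φ x * ENNReal.ofReal (q * G x ^ (q - 1)))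
          + ENNReal.ofReal (1 - q) * ENNReal.ofReal (G x ^ q) := by
      intro x
      have key := amgm_pt hq0 hq1 hβ (h0 x) (hG0 x)
      calc ENNReal.ofReal ((β + 1) ^ q) * ENNReal.ofReal (φ x ^ q)
          = ENNReal.ofReal ((β + 1) ^ q * φ x ^ q) := by
            rw [ENNReal.ofReal_mul (Real.rpow_nonneg (by linarith) _)]
        _ ≤ ENNReal.ofReal (q * ((β + 1) * φ x * G x ^ (q - 1)) + (1 - q) * G x ^ q) :=
            ENNReal.ofReal_le_ofReal key
        _ = ENNReal.ofReal (q * ((β + 1) * φ x * G x ^ (q - 1)))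
              + ENNReal.ofReal ((1 - q) * G x ^ q) := by
            rw [ENNReal.ofReal_add
              (mul_nonneg hq0.le (mul_nonneg (mul_nonneg (by linarith) (h0 x))
                (Real.rpow_nonneg (hG0 x).le _)))
              (mul_nonneg (by linarith) (Real.rpow_nonneg (hG0 x).le _))]
        _ = ENNReal.ofReal (β + 1) * (Φ x * ENNReal.ofReal (q * G x ^ (q - 1)))
              + ENNReal.ofReal (1 - q) * ENNReal.ofReal (G x ^ q) := by
            congr 1
            · rw [show q * ((β + 1) * φ x * G x ^ (q - 1))
                  = (β + 1) * (φ x * (q * G x ^ (q - 1))) by ring,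
                ENNReal.ofReal_mul (by linarith : (0:ℝ) ≤ β + 1),
                ENNReal.ofReal_mul (h0 x)]
            · rw [← ENNReal.ofReal_mul (by linarith : (0:ℝ) ≤ 1 - q)]
    calc ENNReal.ofReal ((β + 1) ^ q) * B
        = ∫⁻ x in I₀, ENNReal.ofReal ((β + 1) ^ q) * ENNReal.ofReal (φ x ^ q) ∂μ :=
          (lintegral_const_mul' _ _ ENNReal.ofReal_ne_top).symm
      _ ≤ ∫⁻ x in I₀, (ENNReal.ofReal (β + 1) * (Φ x * ENNReal.ofReal (q * G x ^ (q - 1)))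
            + ENNReal.ofReal (1 - q) * ENNReal.ofReal (G x ^ q)) ∂μ :=
          lintegral_mono fun x => hpt x
      _ = ENNReal.ofReal (β + 1) * PP + ENNReal.ofReal (1 - q) * A' := by
          rw [lintegral_add_left']
          · rw [lintegral_const_mul' _ _ ENNReal.ofReal_ne_top,
              lintegral_const_mul' _ _ ENNReal.ofReal_ne_top]
          · exact (measurable_const.mul ((hφm.ennreal_ofReal).mul
              ((measurable_const.mul ((measurable_rpow_const (q - 1)).comp hGm)).ennreal_ofReal))).aemeasurable
  -- put everything together
  have hAA' : A ≤ A' := by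
    apply lintegral_mono
    intro x
    exact ENNReal.ofReal_le_ofReal
      (Real.rpow_le_rpow (hg0 x) (le_max_left _ _) hq0.le)
  calc ENNReal.ofReal ((1 - q) * β) * A + ENNReal.ofReal ((β + 1) ^ q) * B
      ≤ ENNReal.ofReal ((1 - q) * β) * A'
          + (ENNReal.ofReal (β + 1) * PP + ENNReal.ofReal (1 - q) * A') :=
        add_le_add (mul_le_mul_right hAA' _) hAMGM
    _ = ENNReal.ofReal (β + 1) * (ENNReal.ofReal (1 - q) * A' + PP) := by
        rw [show ENNReal.ofReal ((1 - q) * β) = ENNReal.ofReal (1 - q) * ENNReal.ofReal β by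
          rw [← ENNReal.ofReal_mul (by linarith : (0:ℝ) ≤ 1 - q)],
          show ENNReal.ofReal (β + 1) = ENNReal.ofReal β + 1 by
          rw [ENNReal.ofReal_add hβ.le zero_le_one, ENNReal.ofReal_one]]
        ring
    _ ≤ ENNReal.ofReal (β + 1) * (ENNReal.ofReal (y ^ q) * μ I₀) := mul_le_mul_right hKEY _
    _ = ENNReal.ofReal ((β + 1) * y ^ q) * μ I₀ := by
        rw [← mul_assoc, ← ENNReal.ofReal_mul (by linarith : (0:ℝ) ≤ β + 1)]


section Congr

variable {T : DTree X μ} {φ ψ : X → ℝ}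

theorem trAvg_congr (hae : φ =ᵐ[μ] ψ) (s : Set X) : trAvg μ φ s = trAvg μ ψ s := by
  unfold trAvg
  rw [integral_congr_ae (ae_restrict_of_ae hae)]

theorem trAvg_abs_congr (hae : φ =ᵐ[μ] ψ) (s : Set X) :
    trAvg μ (fun y => |φ y|) s = trAvg μ (fun y => |ψ y|) s :=
  trAvg_congr (hae.mono fun x hx => by simp only [hx]) s

theorem trMax_congr (T : DTree X μ) (hae : φ =ᵐ[μ] ψ) : trMax μ T φ = trMax μ T ψ := by
  funext x
  unfold trMax
  congr 1
  ext r
  constructor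
  · rintro ⟨I, hI, hxI, rfl⟩; exact ⟨I, hI, hxI, trAvg_abs_congr hae I⟩
  · rintro ⟨I, hI, hxI, rfl⟩; exact ⟨I, hI, hxI, (trAvg_abs_congr hae I).symm⟩

theorem trS_congr (T : DTree X μ) (hae : φ =ᵐ[μ] ψ) : trS μ T φ = trS μ T ψ := by
  have hbad : trBad μ T φ = trBad μ T ψ := by
    unfold trBad
    ext x
    rw [trMax_congr T hae]
    constructor <;> intro h I hI hxI
    · rw [← trAvg_congr hae I]; exact h I hI hxI
    · rw [trAvg_congr hae I]; exact h I hI hxI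
  have hA : ∀ s, trA μ T φ s = trA μ T ψ s := by
    intro s
    unfold trA
    ext x
    rw [hbad, trMax_congr T hae]
    constructor <;> rintro ⟨h1, h2, h3, h4, h5⟩
    · refine ⟨h1, h2, h3, by rw [← trAvg_congr hae s]; exact h4, fun J hJ hxJ hJeq => ?_⟩
      exact h5 J hJ hxJ (by rw [trAvg_congr hae J]; exact hJeq)
    · refine ⟨h1, h2, h3, by rw [trAvg_congr hae s]; exact h4, fun J hJ hxJ hJeq => ?_⟩
      exact h5 J hJ hxJ (by rw [← trAvg_congr hae J]; exact hJeq)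
  unfold trS
  ext s
  simp only [mem_union, mem_setOf_eq, hA]

end Congr

theorem trAvg_nonneg {φ : X → ℝ} (h0 : ∀ x, 0 ≤ φ x) (s : Set X) : 0 ≤ trAvg μ φ s :=
  mul_nonneg (inv_nonneg.2 ENNReal.toReal_nonneg) (integral_nonneg fun y => h0 y)

/-- Degenerate case : the function vanishes a.e. -/
theorem ae_zero_of_avg_zero [IsProbabilityMeasure μ] {T : DTree X μ} {φ : X → ℝ}
    (h0 : ∀ x, 0 ≤ φ x) (hint : Integrable φ μ)
    {I₀ : Set X} (hI : I₀ ∈ trS μ T φ) (hy : trAvg μ φ I₀ = 0) :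
    φ =ᵐ[μ] 0 := by
  have habs : (fun y => |φ y|) = φ := funext fun y => abs_of_nonneg (h0 y)
  have huniv : ∫ x, φ x ∂μ = 0 := by
    rcases hI with ⟨hmem, hApos⟩ | hU
    · have hΩ : μ (trOmega μ T φ) = 0 := omega_null T h0 hint
      have hz : ∃ z ∈ trA μ T φ I₀, z ∉ trOmega μ T φ := by
        by_contra h
        push_neg at h
        exact absurd (le_trans (measure_mono h) hΩ.le) hApos.not_ge
      obtain ⟨z, hzA, hzΩ⟩ := hz
      obtain ⟨_, _, _, hzmax, _⟩ := hzA
      have hb : BddAbove (avgSet μ T φ z) := not_not.1 hzΩ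
      have h1 : trAvg μ (fun y => |φ y|) univ ≤ 0 := by
        rw [← hy, ← hzmax]
        exact le_trMax hb T.top_mem (mem_univ z)
      have h2 : trAvg μ φ univ = 0 :=
        le_antisymm (by rw [← habs]; exact h1) (trAvg_nonneg h0 univ)
      have h3 : (μ (univ : Set X)).toReal⁻¹ = 1 := by simp
      rw [trAvg, h3, one_mul, Measure.restrict_univ] at h2
      exact h2
    · rw [mem_singleton_iff] at hU
      subst hU
      rw [trAvg] at hy
      have h3 : (μ (univ : Set X)).toReal⁻¹ = 1 := by simp
      rw [h3, one_mul, Measure.restrict_univ] at hy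
      exact hy
  exact (integral_eq_zero_iff_of_nonneg h0 hint).1 huniv

theorem trMax_of_ae_zero {T : DTree X μ} {φ : X → ℝ}
    (hzero : φ =ᵐ[μ] 0) : trMax μ T φ = fun _ => (0 : ℝ) := by
  have h' : (fun y => |φ y|) =ᵐ[μ] (fun _ => (0:ℝ)) := hzero.mono fun x hx => by
    simp only [Pi.zero_apply] at hx
    simp [hx]
  have havg : ∀ s : Set X, trAvg μ (fun y => |φ y|) s = 0 := by
    intro s
    unfold trAvg
    rw [integral_congr_ae (ae_restrict_of_ae h')]
    simp
  funext x
  rw [trMax_eq_sSup]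
  have : avgSet μ T φ x = {0} := by
    ext r
    constructor
    · rintro ⟨I, hI, hxI, rfl⟩
      rw [havg I]; rfl
    · rintro rfl
      exact ⟨univ, T.top_mem, mem_univ x, (havg univ).symm⟩
  rw [this, csSup_singleton]


theorem final [IsProbabilityMeasure μ] (T : DTree X μ) {q : ℝ} (hq0 : 0 < q) (hq1 : q < 1)
    {ψ : X → ℝ} (hψm : Measurable ψ) (h0 : ∀ x, 0 ≤ ψ x) (hint : Integrable ψ μ)
    {ι : Type*} [Countable ι] (I : ι → Set X)
    (hmem : ∀ j, I j ∈ trS μ T ψ) (hdisj : Pairwise (Function.onFun Disjoint I))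
    {β : ℝ} (hβ : 0 < β) :
    (∫ x in ⋃ j, I j, (trMax μ T ψ x) ^ q ∂μ) ≤
      (1 / ((1 - q) * β)) *
        ((β + 1) * (∑' j, (μ (I j)).toReal * trAvg μ ψ (I j) ^ q) -
          (β + 1) ^ q * ∫ x in ⋃ j, I j, ψ x ^ q ∂μ) := by
  classical
  by_cases hdeg : ∀ j, 0 < trAvg μ ψ (I j)
  · -- main case
    set U := ⋃ j, I j with hU
    have hImeas : ∀ j, MeasurableSet (I j) := fun j => measurableSet_of_mem_trS (hmem j)
    set AE := ∫⁻ x in U, ENNReal.ofReal (trMax μ T ψ x ^ q) ∂μ with hAE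
    set BE := ∫⁻ x in U, ENNReal.ofReal (ψ x ^ q) ∂μ with hBE
    set S := ∑' j, ENNReal.ofReal (trAvg μ ψ (I j) ^ q) * μ (I j) with hS
    have hAsplit : AE = ∑' j, ∫⁻ x in I j, ENNReal.ofReal (trMax μ T ψ x ^ q) ∂μ :=
      lintegral_iUnion hImeas hdisj _
    have hBsplit : BE = ∑' j, ∫⁻ x in I j, ENNReal.ofReal (ψ x ^ q) ∂μ :=
      lintegral_iUnion hImeas hdisj _
    have hmain : ENNReal.ofReal ((1 - q) * β) * AE + ENNReal.ofReal ((β + 1) ^ q) * BE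
        ≤ ENNReal.ofReal (β + 1) * S := by
      rw [hAsplit, hBsplit, ← ENNReal.tsum_mul_left, ← ENNReal.tsum_mul_left,
        ← ENNReal.tsum_add, hS, ← ENNReal.tsum_mul_left]
      apply ENNReal.tsum_le_tsum
      intro j
      calc ENNReal.ofReal ((1 - q) * β) * ∫⁻ x in I j, ENNReal.ofReal (trMax μ T ψ x ^ q) ∂μ
            + ENNReal.ofReal ((β + 1) ^ q) * ∫⁻ x in I j, ENNReal.ofReal (ψ x ^ q) ∂μ
          ≤ ENNReal.ofReal ((β + 1) * trAvg μ ψ (I j) ^ q) * μ (I j) :=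
            perI hq0 hq1 hψm h0 hint (hmem j) (hdeg j) hβ
        _ = ENNReal.ofReal (β + 1) * (ENNReal.ofReal (trAvg μ ψ (I j) ^ q) * μ (I j)) := by
            rw [ENNReal.ofReal_mul (by linarith : (0:ℝ) ≤ β + 1), mul_assoc]
    -- S is finite
    have hSfin : S ≠ ⊤ := by
      have hbound : ∀ j, ENNReal.ofReal (trAvg μ ψ (I j) ^ q) * μ (I j)
          ≤ ENNReal.ofReal q * (∫⁻ x in I j, ENNReal.ofReal (ψ x) ∂μ)
            + ENNReal.ofReal (1 - q) * μ (I j) := by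
        intro j
        have hamgm : trAvg μ ψ (I j) ^ q ≤ q * trAvg μ ψ (I j) + (1 - q) := by
          have key := Real.geom_mean_le_arith_mean2_weighted (w₁ := q) (w₂ := 1 - q)
            (p₁ := trAvg μ ψ (I j)) (p₂ := 1) hq0.le (by linarith)
            (trAvg_nonneg h0 _) zero_le_one (by ring)
          rw [Real.one_rpow, mul_one, mul_one] at key
          exact key
        calc ENNReal.ofReal (trAvg μ ψ (I j) ^ q) * μ (I j)
            ≤ ENNReal.ofReal (q * trAvg μ ψ (I j) + (1 - q)) * μ (I j) :=
              mul_le_mul_left (ENNReal.ofReal_le_ofReal hamgm) _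
          _ ≤ (ENNReal.ofReal (q * trAvg μ ψ (I j)) + ENNReal.ofReal (1 - q)) * μ (I j) :=
              mul_le_mul_left ENNReal.ofReal_add_le _
          _ = ENNReal.ofReal q * (ENNReal.ofReal (trAvg μ ψ (I j)) * μ (I j))
                + ENNReal.ofReal (1 - q) * μ (I j) := by
              rw [add_mul, ENNReal.ofReal_mul hq0.le, mul_assoc]
          _ = ENNReal.ofReal q * (∫⁻ x in I j, ENNReal.ofReal (ψ x) ∂μ)
                + ENNReal.ofReal (1 - q) * μ (I j) := by
              rw [lintegral_ofReal_restrict h0 hint (hmem j)]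
      apply ne_top_of_le_ne_top _ (ENNReal.tsum_le_tsum hbound)
      rw [ENNReal.tsum_add, ENNReal.tsum_mul_left, ENNReal.tsum_mul_left]
      apply ENNReal.add_ne_top.2
      constructor
      · apply ENNReal.mul_ne_top ENNReal.ofReal_ne_top
        rw [← lintegral_iUnion hImeas hdisj]
        exact ne_top_of_le_ne_top hint.lintegral_lt_top.ne
          (setLIntegral_le_lintegral _ _)
      · apply ENNReal.mul_ne_top ENNReal.ofReal_ne_top
        rw [← measure_iUnion hdisj hImeas]
        exact measure_ne_top μ _
    have hRfin : ENNReal.ofReal (β + 1) * S ≠ ⊤ :=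
      ENNReal.mul_ne_top ENNReal.ofReal_ne_top hSfin
    have hc0 : (0:ℝ) < (1 - q) * β := mul_pos (by linarith) hβ
    have hAfin : AE ≠ ⊤ := by
      intro hA
      apply hRfin
      have h1 : ENNReal.ofReal ((1 - q) * β) * AE ≤ ENNReal.ofReal (β + 1) * S :=
        le_trans le_self_add hmain
      rw [hA, ENNReal.mul_top (by simpa using (ENNReal.ofReal_pos.2 hc0).ne')] at h1
      exact top_le_iff.1 h1
    have hBfin : BE ≠ ⊤ := by
      intro hB
      apply hRfin
      have h1 : ENNReal.ofReal ((β + 1) ^ q) * BE ≤ ENNReal.ofReal (β + 1) * S :=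
        le_trans le_add_self hmain
      have hp : (0:ℝ) < (β + 1) ^ q := Real.rpow_pos_of_pos (by linarith) _
      rw [hB, ENNReal.mul_top (by simpa using (ENNReal.ofReal_pos.2 hp).ne')] at h1
      exact top_le_iff.1 h1
    -- real conversions
    have hLHS : ∫ x in U, (trMax μ T ψ x) ^ q ∂μ = AE.toReal := by
      rw [hAE]
      exact integral_eq_lintegral_of_nonneg_ae
        (Filter.Eventually.of_forall fun x => Real.rpow_nonneg (trMax_nonneg T ψ x) _)
        ((measurable_rpow_const q).comp (measurable_trMax T ψ)).aestronglyMeasurable.restrict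
    have hRB : ∫ x in U, ψ x ^ q ∂μ = BE.toReal := by
      rw [hBE]
      exact integral_eq_lintegral_of_nonneg_ae
        (Filter.Eventually.of_forall fun x => Real.rpow_nonneg (h0 x) _)
        ((measurable_rpow_const q).comp hψm).aestronglyMeasurable.restrict
    have htsum : (∑' j, (μ (I j)).toReal * trAvg μ ψ (I j) ^ q) = S.toReal := by
      rw [hS, ENNReal.tsum_toReal_eq
        (fun j => ENNReal.mul_ne_top ENNReal.ofReal_ne_top (measure_ne_top μ _))]
      apply tsum_congr
      intro j
      rw [ENNReal.toReal_mul, ENNReal.toReal_ofReal (Real.rpow_nonneg (trAvg_nonneg h0 _) _),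
        mul_comm]
    -- conclude
    have hENNtoReal : ((1 - q) * β) * AE.toReal + ((β + 1) ^ q) * BE.toReal
        ≤ (β + 1) * S.toReal := by
      have h1 := ENNReal.toReal_mono hRfin hmain
      rw [ENNReal.toReal_add (ENNReal.mul_ne_top ENNReal.ofReal_ne_top hAfin)
          (ENNReal.mul_ne_top ENNReal.ofReal_ne_top hBfin),
        ENNReal.toReal_mul, ENNReal.toReal_mul, ENNReal.toReal_mul,
        ENNReal.toReal_ofReal hc0.le,
        ENNReal.toReal_ofReal (Real.rpow_nonneg (by linarith : (0:ℝ) ≤ β + 1) _),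
        ENNReal.toReal_ofReal (by linarith : (0:ℝ) ≤ β + 1)] at h1
      exact h1
    rw [hLHS, hRB, htsum]
    rw [show (1 / ((1 - q) * β)) * ((β + 1) * S.toReal - (β + 1) ^ q * BE.toReal)
        = ((β + 1) * S.toReal - (β + 1) ^ q * BE.toReal) / ((1 - q) * β) by ring,
      le_div_iff₀ hc0]
    linarith
  · -- degenerate case
    push_neg at hdeg
    obtain ⟨j₀, hj₀⟩ := hdeg
    have hy0 : trAvg μ ψ (I j₀) = 0 := le_antisymm hj₀ (trAvg_nonneg h0 _)
    have hzero : ψ =ᵐ[μ] 0 := ae_zero_of_avg_zero h0 hint (hmem j₀) hy0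
    have hmax0 : trMax μ T ψ = fun _ => (0:ℝ) := trMax_of_ae_zero hzero
    have havg0 : ∀ s : Set X, trAvg μ ψ s = 0 := by
      intro s
      unfold trAvg
      rw [integral_congr_ae (ae_restrict_of_ae hzero)]
      simp
    have hL : ∫ x in ⋃ j, I j, (trMax μ T ψ x) ^ q ∂μ = 0 := by
      rw [hmax0]
      simp [Real.zero_rpow hq0.ne']
    have hplus : ∫ x in ⋃ j, I j, ψ x ^ q ∂μ = 0 := by
      have hq' : (fun x => ψ x ^ q) =ᵐ[μ] (fun _ => (0:ℝ)) := hzero.mono fun x hx => by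
        simp only [Pi.zero_apply] at hx
        simp [hx, Real.zero_rpow hq0.ne']
      rw [integral_congr_ae (ae_restrict_of_ae hq')]
      simp
    have hts : (∑' j, (μ (I j)).toReal * trAvg μ ψ (I j) ^ q) = 0 := by
      rw [tsum_congr (fun j => by
        rw [havg0 (I j), Real.zero_rpow hq0.ne', mul_zero] : ∀ j,
          (μ (I j)).toReal * trAvg μ ψ (I j) ^ q = 0)]
      exact tsum_zero
    rw [hL, hplus, hts]
    simp

theorem final_statement13 {X : Type*} [MeasurableSpace X] (μ : Measure X)
    [IsProbabilityMeasure μ] [NullSingletonClass μ] (T : DTree X μ)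
    (q : ℝ) (hq : q ∈ Set.Ioo (0 : ℝ) 1)
    (φ : X → ℝ) (h0 : ∀ x, 0 ≤ φ x) (hint : Integrable φ μ) (hgood : TGood μ T φ)
    {ι : Type*} [Countable ι] (I : ι → Set X)
    (hmem : ∀ j, I j ∈ trS μ T φ) (hdisj : Pairwise (Function.onFun Disjoint I))
    (β : ℝ) (hβ : 0 < β) :
    (∫ x in ⋃ j, I j, (trMax μ T φ x) ^ q ∂μ) ≤
      (1 / ((1 - q) * β)) *
        ((β + 1) * (∑' j, (μ (I j)).toReal * trAvg μ φ (I j) ^ q) -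
          (β + 1) ^ q * ∫ x in ⋃ j, I j, φ x ^ q ∂μ) := by
  classical
  set ψ : X → ℝ := fun x => max (hint.1.mk φ x) 0 with hψdef
  have hψm : Measurable ψ := hint.1.measurable_mk.max measurable_const
  have hψ0 : ∀ x, 0 ≤ ψ x := fun x => le_max_right _ _
  have hae : φ =ᵐ[μ] ψ := by
    filter_upwards [hint.1.ae_eq_mk] with x hx
    rw [hψdef]
    simp only
    rw [← hx, max_eq_left (h0 x)]
  have hψint : Integrable ψ μ := hint.congr hae
  have h1 : trMax μ T φ = trMax μ T ψ := trMax_congr T hae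
  have h2 : trS μ T φ = trS μ T ψ := trS_congr T hae
  have h3 : ∀ j, trAvg μ φ (I j) = trAvg μ ψ (I j) := fun j => trAvg_congr hae (I j)
  have h4 : ∫ x in ⋃ j, I j, φ x ^ q ∂μ = ∫ x in ⋃ j, I j, ψ x ^ q ∂μ :=
    integral_congr_ae (ae_restrict_of_ae (hae.mono fun x hx => by simp only [hx]))
  rw [h1, h4, tsum_congr (fun j => by rw [h3 j])]
  exact final T hq.1 hq.2 hψm hψ0 hψint I (fun j => h2 ▸ hmem j) hdisj hβ

end Stmt13

/-- the basic inequality over a pairwise disjoint family in `S_φ`. -/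
theorem statement13 {X : Type*} [MeasurableSpace X] (μ : Measure X)
    [IsProbabilityMeasure μ] [NullSingletonClass μ] (T : DTree X μ)
    (q : ℝ) (hq : q ∈ Set.Ioo (0 : ℝ) 1)
    (φ : X → ℝ) (h0 : ∀ x, 0 ≤ φ x) (hint : Integrable φ μ) (hgood : TGood μ T φ)
    {ι : Type*} [Countable ι] (I : ι → Set X)
    (hmem : ∀ j, I j ∈ trS μ T φ) (hdisj : Pairwise (Function.onFun Disjoint I))
    (β : ℝ) (hβ : 0 < β) :
    (∫ x in ⋃ j, I j, (trMax μ T φ x) ^ q ∂μ) ≤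
      (1 / ((1 - q) * β)) *
        ((β + 1) * (∑' j, (μ (I j)).toReal * trAvg μ φ (I j) ^ q) -
          (β + 1) ^ q * ∫ x in ⋃ j, I j, φ x ^ q ∂μ) := by
  exact Stmt13.final_statement13 μ T q hq φ h0 hint hgood I hmem hdisj β hβ

end
end
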